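/- arXiv:2512.13210 — 5 statements merged into one kernel-verified Lean document; each statement's English description precedes it below -/
import Mathlib

section
/- Let G be a graph, S ⊆ V(G), and F a family of connected graphs. If the induced subgraph G[S] is F-minor-free, then every minimum-size vertex set Y such that G \ Y is F-minor-free contains at most |N(S)| vertices of S (where N(S) is the open neighborhood of S in G). -/
open SimpleGraph Set

def IsMinorModel {α β : Type*} (G : SimpleGraph α) (H : SimpleGraph β)
    (φ : β → Set α) : Prop :=
  (∀ w, (φ w).Nonempty) ∧
  (∀ w, (G.induce (φ w)).Connected) ∧
  (∀ w w', w ≠ w' → Disjoint (φ w) (φ w')) ∧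
  (∀ w w', H.Adj w w' → ∃ a ∈ φ w, ∃ b ∈ φ w', G.Adj a b)

def IsMinor {α β : Type*} (H : SimpleGraph β) (G : SimpleGraph α) : Prop :=
  ∃ φ, IsMinorModel G H φ

/-- `G` has no member of the family `F` as a minor. -/
def FMinorFree {α ι : Type*} {Fv : ι → Type*} (F : ∀ i, SimpleGraph (Fv i))
    (G : SimpleGraph α) : Prop := ∀ i, ¬ IsMinor (F i) G

/-- Induced subgraph of an induced subgraph is an induced subgraph of the image. -/
noncomputable def induceInduceIso {α : Type*} (G : SimpleGraph α) (A : Set α) (s : Set A) :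
    (G.induce A).induce s ≃g G.induce (Subtype.val '' s) where
  toEquiv := Equiv.Set.image Subtype.val s Subtype.val_injective
  map_rel_iff' := by
    intro a b
    simp only [Equiv.Set.image, Equiv.Set.imageOfInjOn]
    rfl

/-- A "ground" description of minor models in induced subgraphs, with branch sets as
subsets of the ambient vertex set. -/
lemma isMinor_induce_iff {α β : Type*} (G : SimpleGraph α) (A : Set α) (H : SimpleGraph β) :
    IsMinor H (G.induce A) ↔
      ∃ φ : β → Set α,
        (∀ w, φ w ⊆ A) ∧
        (∀ w, (φ w).Nonempty) ∧
        (∀ w, (G.induce (φ w)).Connected) ∧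
        (∀ w w', w ≠ w' → Disjoint (φ w) (φ w')) ∧
        (∀ w w', H.Adj w w' → ∃ a ∈ φ w, ∃ b ∈ φ w', G.Adj a b) := by
  constructor
  · rintro ⟨φ, hne, hconn, hdisj, hadj⟩
    refine ⟨fun w => Subtype.val '' φ w, fun w => ?_, fun w => ?_, fun w => ?_, ?_, ?_⟩
    · rintro x ⟨a, _, rfl⟩; exact a.2
    · exact (hne w).image _
    · exact (induceInduceIso G A (φ w)).connected_iff.mp (hconn w)
    · intro w w' hww
      rw [Set.disjoint_left]
      rintro x ⟨a, ha, rfl⟩ ⟨b, hb, hba⟩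
      cases Subtype.val_injective hba
      exact (hdisj w w' hww).le_bot ⟨ha, hb⟩
    · intro w w' h
      obtain ⟨a, ha, b, hb, hab⟩ := hadj w w' h
      exact ⟨a, ⟨a, ha, rfl⟩, b, ⟨b, hb, rfl⟩, hab⟩
  · rintro ⟨φ, hsub, hne, hconn, hdisj, hadj⟩
    refine ⟨fun w => {a : A | (a : α) ∈ φ w}, fun w => ?_, fun w => ?_, ?_, ?_⟩
    · obtain ⟨x, hx⟩ := hne w
      exact ⟨⟨x, hsub w hx⟩, hx⟩
    · have himg : Subtype.val '' {a : A | (a : α) ∈ φ w} = φ w := by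
        ext x
        constructor
        · rintro ⟨a, ha, rfl⟩; exact ha
        · intro hx; exact ⟨⟨x, hsub w hx⟩, hx, rfl⟩
      have := (induceInduceIso G A {a : A | (a : α) ∈ φ w}).connected_iff
      rw [himg] at this
      exact this.mpr (hconn w)
    · intro w w' hww
      have := hdisj w w' hww
      rw [Set.disjoint_left] at this ⊢
      intro a ha ha'
      exact this ha ha'
    · intro w w' h
      obtain ⟨a, ha, b, hb, hab⟩ := hadj w w' h
      exact ⟨⟨a, hsub w ha⟩, ha, ⟨b, hsub w' hb⟩, hb, hab⟩

/-- A predicate invariant along edges is invariant along reachability. -/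
lemma reachable_invariant {W : Type*} {G' : SimpleGraph W} (p : W → Prop)
    (h : ∀ a b, G'.Adj a b → (p a ↔ p b)) {a b : W} (hr : G'.Reachable a b) :
    p a ↔ p b := by
  obtain ⟨w⟩ := hr
  induction w with
  | nil => rfl
  | cons hadj _ ih => exact (h _ _ hadj).trans ih

/-- A connected subset of a region with no edges crossing `T`-boundary lies on one side. -/
lemma connected_side {α : Type*} (G : SimpleGraph α) (T R C : Set α)
    (hsep : ∀ u v, u ∈ R → v ∈ R → u ∈ T → v ∉ T → ¬ G.Adj u v)
    (hCR : C ⊆ R) (hconn : (G.induce C).Connected) :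
    (∀ x ∈ C, x ∈ T) ∨ (∀ x ∈ C, x ∉ T) := by
  by_cases hex : ∃ x ∈ C, x ∈ T
  · left
    obtain ⟨x, hxC, hxT⟩ := hex
    intro y hyC
    have hr : (G.induce C).Reachable ⟨x, hxC⟩ ⟨y, hyC⟩ := hconn.preconnected _ _
    have key : ∀ (a b : C), (G.induce C).Adj a b → ((a : α) ∈ T ↔ (b : α) ∈ T) := by
      intro a b hab
      have hGab : G.Adj a b := hab
      constructor
      · intro haT
        by_contra hbT
        exact hsep a b (hCR a.2) (hCR b.2) haT hbT hGab
      · intro hbT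
        by_contra haT
        exact hsep b a (hCR b.2) (hCR a.2) hbT haT hGab.symm
    exact (reachable_invariant (fun a : C => (a : α) ∈ T) key hr).mp hxT
  · right
    push_neg at hex
    exact hex

/-- if `G[S]` is `F`-minor-free (for a family `F` of connected graphs),
then every minimum-size `F`-minor deletion set `Y` of `G` has at most `|N(S)|`
vertices in `S`, where `N(S)` is the open neighborhood of `S`. -/
theorem stmt0 {V ι : Type} [Fintype V] [DecidableEq V] {Fv : ι → Type}
    (G : SimpleGraph V) (S : Finset V)
    (F : ∀ i, SimpleGraph (Fv i)) (hFconn : ∀ i, (F i).Connected)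
    (hS : FMinorFree F (G.induce (↑S : Set V)))
    (Y : Finset V)
    (hY : FMinorFree F (G.induce ((↑Y : Set V)ᶜ)))
    (hmin : ∀ Y' : Finset V, FMinorFree F (G.induce ((↑Y' : Set V)ᶜ)) → Y.card ≤ Y'.card) :
    (Y ∩ S).card ≤ {v : V | v ∉ S ∧ ∃ u ∈ S, G.Adj u v}.ncard := by
  classical
  set Nset : Set V := {v : V | v ∉ S ∧ ∃ u ∈ S, G.Adj u v} with hNset
  have hNfin : Nset.Finite := Set.toFinite _
  set NF : Finset V := hNfin.toFinset with hNF
  set Y' : Finset V := (Y \ S) ∪ NF with hY'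
  -- prove Y' is also a deletion set
  have key : FMinorFree F (G.induce ((↑Y' : Set V)ᶜ)) := by
    intro i hminor
    rw [isMinor_induce_iff] at hminor
    obtain ⟨φ, hsub, hne, hconn, hdisj, hadj⟩ := hminor
    set R : Set V := (↑Y' : Set V)ᶜ with hR
    -- no edges crossing S within R
    have hsep : ∀ u v, u ∈ R → v ∈ R → u ∈ (↑S : Set V) → v ∉ (↑S : Set V) → ¬ G.Adj u v := by
      intro u v _ hvR huS hvS hadj'
      apply hvR
      have hvN : v ∈ Nset := ⟨by simpa using hvS, u, by simpa using huS, hadj'⟩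
      simp only [hY', Finset.coe_union, Set.mem_union]
      right
      simp only [hNF, Set.Finite.coe_toFinset]
      exact hvN
    -- each branch set lies on one side of S
    have hside : ∀ w, (∀ x ∈ φ w, x ∈ (↑S : Set V)) ∨ (∀ x ∈ φ w, x ∉ (↑S : Set V)) :=
      fun w => connected_side G (↑S) R (φ w) hsep (hsub w) (hconn w)
    -- the side is the same for adjacent branch sets, hence for all (F i connected)
    set P : Fv i → Prop := fun w => ∀ x ∈ φ w, x ∈ (↑S : Set V) with hP
    have hPadj : ∀ a b, (F i).Adj a b → (P a ↔ P b) := by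
      intro a b hab
      obtain ⟨x, hx, y, hy, hxy⟩ := hadj a b hab
      have hxR : x ∈ R := hsub a hx
      have hyR : y ∈ R := hsub b hy
      constructor
      · intro hPa
        have hxS : x ∈ (↑S : Set V) := hPa x hx
        have hyS : y ∈ (↑S : Set V) := by
          by_contra hyS
          exact hsep x y hxR hyR hxS hyS hxy
        rcases hside b with h | h
        · exact h
        · exact absurd hyS (h y hy)
      · intro hPb
        have hyS : y ∈ (↑S : Set V) := hPb y hy
        have hxS : x ∈ (↑S : Set V) := by
          by_contra hxS
          exact hsep y x hyR hxR hyS hxS hxy.symm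
        rcases hside a with h | h
        · exact h
        · exact absurd hxS (h x hx)
    obtain ⟨w0⟩ := (hFconn i).nonempty
    by_cases hP0 : P w0
    · -- all in S : contradicts hS
      apply hS i
      rw [isMinor_induce_iff]
      refine ⟨φ, fun w => ?_, hne, hconn, hdisj, hadj⟩
      have : P w := (reachable_invariant P hPadj ((hFconn i).preconnected w0 w)).mp hP0
      exact this
    · -- all outside S : contradicts hY
      apply hY i
      rw [isMinor_induce_iff]
      refine ⟨φ, fun w x hx => ?_, hne, hconn, hdisj, hadj⟩
      have hPw : ¬ P w := fun h =>
        hP0 ((reachable_invariant P hPadj ((hFconn i).preconnected w0 w)).mpr h)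
      have hxS : x ∉ (↑S : Set V) := by
        rcases hside w with h | h
        · exact absurd h hPw
        · exact h x hx
      have hxR : x ∈ R := hsub w hx
      simp only [hR, Set.mem_compl_iff, hY', Finset.coe_union, Set.mem_union, not_or] at hxR
      intro hxY
      exact hxR.1 (by
        simp only [Finset.coe_sdiff, Set.mem_diff]
        exact ⟨hxY, fun h => hxS h⟩)
  have h1 := hmin Y' key
  have h2 : Y'.card ≤ (Y \ S).card + NF.card := Finset.card_union_le _ _
  have h3 : (Y ∩ S).card + (Y \ S).card = Y.card := Finset.card_inter_add_card_sdiff Y S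
  have h4 : Nset.ncard = NF.card := Set.ncard_eq_toFinset_card Nset hNfin
  have h5 : (Y ∩ S).card ≤ Nset.ncard := by omega
  exact hNset ▸ h5
end

section
/- Let φ be a minor model of a graph H in a graph G. Then for every biconnected component B_H of H, there exists a biconnected component B_G of G such that the graph H[B_H] is a minor of the subgraph of G induced by φ(B_H) ∩ B_G, where φ(B_H) denotes the union of branch sets of vertices in B_H. -/
open SimpleGraph Set

def IsBiconnected {α : Type*} (G : SimpleGraph α) : Prop :=
  G.Connected ∧ ∀ v : α, (G.induce {u | u ≠ v}).Connected

/-- A biconnected component: a maximal vertex set inducing a biconnected subgraph. -/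
def IsBiconnectedComponent {α : Type*} (G : SimpleGraph α) (B : Set α) : Prop :=
  IsBiconnected (G.induce B) ∧
  ∀ B' : Set α, B ⊆ B' → IsBiconnected (G.induce B') → B' = B

namespace Stmt2Aux

variable {V : Type*} {G : SimpleGraph V}

/-- Reachability via a walk entirely inside `S`. -/
def Reach (G : SimpleGraph V) (S : Set V) (a b : V) : Prop :=
  ∃ W : G.Walk a b, ∀ x ∈ W.support, x ∈ S

lemma Reach.mem_left {S : Set V} {a b : V} (h : Reach G S a b) : a ∈ S := by
  obtain ⟨W, hW⟩ := h; exact hW a W.start_mem_support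

lemma Reach.mem_right {S : Set V} {a b : V} (h : Reach G S a b) : b ∈ S := by
  obtain ⟨W, hW⟩ := h; exact hW b W.end_mem_support

lemma reach_refl {S : Set V} {a : V} (ha : a ∈ S) : Reach G S a a :=
  ⟨Walk.nil, by simp [ha]⟩

lemma Reach.symm {S : Set V} {a b : V} (h : Reach G S a b) : Reach G S b a := by
  obtain ⟨W, hW⟩ := h
  exact ⟨W.reverse, by simpa using hW⟩

lemma Reach.trans {S : Set V} {a b c : V} (h : Reach G S a b) (h' : Reach G S b c) :
    Reach G S a c := by
  obtain ⟨W, hW⟩ := h; obtain ⟨W', hW'⟩ := h'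
  refine ⟨W.append W', fun x hx => ?_⟩
  rcases (Walk.mem_support_append_iff _ _).1 hx with h | h
  · exact hW x h
  · exact hW' x h

lemma Reach.mono {S T : Set V} (hST : S ⊆ T) {a b : V} (h : Reach G S a b) :
    Reach G T a b := by
  obtain ⟨W, hW⟩ := h; exact ⟨W, fun x hx => hST (hW x hx)⟩

lemma reach_adj {S : Set V} {a b : V} (hab : G.Adj a b) (ha : a ∈ S) (hb : b ∈ S) :
    Reach G S a b :=
  ⟨Walk.cons hab Walk.nil, by simp [ha, hb]⟩

/-- A set that is nonempty and connected (via walks inside itself). -/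
def ConnSet (G : SimpleGraph V) (S : Set V) : Prop :=
  S.Nonempty ∧ ∀ a ∈ S, ∀ b ∈ S, Reach G S a b

lemma reach_lift {S T : Set V} (hST : S ⊆ T) {a b : V} (W : G.Walk a b)
    (hW : ∀ x ∈ W.support, x ∈ S) (ha : a ∈ T) (hb : b ∈ T) :
    Reach (G.induce T) {x : ↥T | (x : V) ∈ S} ⟨a, ha⟩ ⟨b, hb⟩ := by
  induction W with
  | nil => exact reach_refl (by simpa using hW _ (by simp))
  | @cons a c b h p ih =>
    have hc : c ∈ S := hW c (by simp)
    have hstep : (G.induce T).Adj ⟨a, ha⟩ ⟨c, hST hc⟩ := h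
    refine (reach_adj hstep ?_ ?_).trans (ih (fun x hx => hW x (by simp [hx])) (hST hc) hb)
    · simpa using hW a (by simp)
    · simpa using hc

lemma reach_proj {T : Set V} {S : Set ↥T} {a b : ↥T} (h : Reach (G.induce T) S a b) :
    Reach G (Subtype.val '' S) (a : V) (b : V) := by
  obtain ⟨W, hW⟩ := h
  refine ⟨W.map (Embedding.induce T).toHom, fun x hx => ?_⟩
  replace hx : x ∈ W.support.map (Embedding.induce (G := G) T).toHom := by
    rw [← SimpleGraph.Walk.support_map]; exact hx
  obtain ⟨y, hy, rfl⟩ := List.mem_map.1 hx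
  exact ⟨y, hW y hy, rfl⟩

lemma connSet_iff_connected {S : Set V} : ConnSet G S ↔ (G.induce S).Connected := by
  constructor
  · rintro ⟨hne, hconn⟩
    have : Nonempty ↥S := hne.to_subtype
    refine ⟨fun a b => ?_⟩
    obtain ⟨W, hW⟩ := hconn a a.2 b b.2
    obtain ⟨W', _⟩ := reach_lift (le_refl S) W hW a.2 b.2
    exact ⟨W'.copy (by simp) (by simp)⟩
  · intro h
    obtain ⟨a⟩ := h.nonempty
    have hpre := h.preconnected
    refine ⟨⟨a, a.2⟩, fun x hx y hy => ?_⟩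
    obtain ⟨W⟩ := hpre ⟨x, hx⟩ ⟨y, hy⟩
    have : Reach G (Subtype.val '' (Set.univ : Set ↥S)) x y :=
      reach_proj ⟨W, fun _ _ => trivial⟩
    simpa using this


lemma connSet_induce_iff {T : Set V} {S : Set ↥T} :
    ConnSet (G.induce T) S ↔ ConnSet G (Subtype.val '' S) := by
  constructor
  · rintro ⟨⟨a, ha⟩, hconn⟩
    refine ⟨⟨a, a, ha, rfl⟩, ?_⟩
    rintro x ⟨x', hx', rfl⟩ y ⟨y', hy', rfl⟩
    exact reach_proj (hconn x' hx' y' hy')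
  · rintro ⟨⟨a, x, hx, rfl⟩, hconn⟩
    refine ⟨⟨x, hx⟩, fun p hp q hq => ?_⟩
    obtain ⟨W, hW⟩ := hconn p ⟨p, hp, rfl⟩ q ⟨q, hq, rfl⟩
    have himg : Subtype.val '' S ⊆ T := by rintro _ ⟨y, _, rfl⟩; exact y.2
    have := reach_lift himg W hW p.2 q.2
    obtain ⟨W', hW'⟩ := this
    refine ⟨W'.copy (by simp) (by simp), fun z hz => ?_⟩
    have hz' : (z : V) ∈ Subtype.val '' S := by
      have := hW' z (by simpa using hz)
      exact this
    obtain ⟨z', hz', hzz⟩ := hz'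
    rwa [show z' = z from Subtype.ext hzz] at hz'


lemma isBiconnected_induce_iff {B : Set V} :
    IsBiconnected (G.induce B) ↔ ConnSet G B ∧ ∀ x ∈ B, ConnSet G (B \ {x}) := by
  have himg : ∀ v : ↥B, Subtype.val '' {u : ↥B | u ≠ v} = B \ {(v : V)} := by
    intro v; ext x; constructor
    · rintro ⟨y, hy, rfl⟩; exact ⟨y.2, fun h => hy (Subtype.ext h)⟩
    · rintro ⟨hxB, hxv⟩; exact ⟨⟨x, hxB⟩, fun h => hxv (congrArg Subtype.val h), rfl⟩
  constructor
  · rintro ⟨h1, h2⟩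
    refine ⟨connSet_iff_connected.2 h1, fun x hx => ?_⟩
    have h3 := (connSet_iff_connected (G := G.induce B)).2 (h2 ⟨x, hx⟩)
    have h4 := connSet_induce_iff.1 h3
    rwa [himg ⟨x, hx⟩] at h4
  · rintro ⟨h1, h2⟩
    refine ⟨connSet_iff_connected.1 h1, fun v => ?_⟩
    refine (connSet_iff_connected (G := G.induce B)).1 (connSet_induce_iff.2 ?_)
    rw [himg v]; exact h2 v v.2

section Main

variable {ι : Type*} {H : SimpleGraph ι} {φ : ι → Set V}

/-- The union of the branch sets. -/
def MU (φ : ι → Set V) : Set V := ⋃ x, φ x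

lemma mem_MU {w : ι} {a : V} (ha : a ∈ φ w) : a ∈ MU φ := Set.mem_iUnion.2 ⟨w, ha⟩

lemma modelreach (hconn : ∀ w, ConnSet G (φ w))
    (hadj : ∀ w w', H.Adj w w' → ∃ a ∈ φ w, ∃ b ∈ φ w', G.Adj a b)
    (S : Set ι) {w w' : ι} (Wh : H.Walk w w') (hS : ∀ x ∈ Wh.support, x ∈ S) :
    ∀ a ∈ φ w, ∀ b ∈ φ w', Reach G (⋃ x ∈ S, φ x) a b := by
  induction Wh with
  | nil =>
    intro a ha b hb
    exact ((hconn _).2 a ha b hb).mono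
      (Set.subset_biUnion_of_mem (hS _ (by simp)))
  | @cons w c w' h p ih =>
    intro a ha b hb
    obtain ⟨a1, ha1, b1, hb1, hab1⟩ := hadj w c h
    have hwS : w ∈ S := hS _ (by simp)
    have hcS : c ∈ S := hS _ (by simp)
    have r1 : Reach G (⋃ x ∈ S, φ x) a a1 :=
      ((hconn w).2 a ha a1 ha1).mono (Set.subset_biUnion_of_mem hwS)
    have r2 : Reach G (⋃ x ∈ S, φ x) a1 b1 :=
      reach_adj hab1 (Set.mem_biUnion hwS ha1) (Set.mem_biUnion hcS hb1)
    exact (r1.trans r2).trans (ih (fun x hx => hS x (by simp [hx])) b1 hb1 b hb)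

variable (G φ) in
/-- `u` can reach, avoiding `v`, some branch set not containing `v`. -/
def Mainside (v u : V) : Prop :=
  ∃ w, v ∉ φ w ∧ ∃ b ∈ φ w, Reach G (MU φ \ {v}) u b

lemma Mainside.of_reach {v u u' : V} (hr : Reach G (MU φ \ {v}) u u')
    (hm : Mainside G φ v u') : Mainside G φ v u := by
  obtain ⟨w, hw, b, hb, hr'⟩ := hm
  exact ⟨w, hw, b, hb, hr.trans hr'⟩

variable (G H φ) in
structure Hyp : Prop where
  hne : ∀ w, (φ w).Nonempty
  hconn : ∀ w, ConnSet G (φ w)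
  hdisj : ∀ w w', w ≠ w' → Disjoint (φ w) (φ w')
  hadj : ∀ w w', H.Adj w w' → ∃ a ∈ φ w, ∃ b ∈ φ w', G.Adj a b
  hH1 : ∀ w w' : ι, Reach H Set.univ w w'
  hH2 : ∀ v w w' : ι, w ≠ v → w' ≠ v → Reach H {v}ᶜ w w'
  hnt : ∃ w w' : ι, w ≠ w'

lemma Hyp.comp (h : Hyp G H φ) {v : V} {w w' : ι} (hw : v ∉ φ w) (hw' : v ∉ φ w')
    {a b : V} (ha : a ∈ φ w) (hb : b ∈ φ w') :
    Reach G (MU φ \ {v}) a b := by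
  by_cases hvU : v ∈ MU φ
  · obtain ⟨w0, hw0⟩ : ∃ w0, v ∈ φ w0 := Set.mem_iUnion.1 hvU
    have hww0 : w ≠ w0 := fun e => hw (e ▸ hw0)
    have hww0' : w' ≠ w0 := fun e => hw' (e ▸ hw0)
    obtain ⟨Wh, hWh⟩ := h.hH2 w0 w w' hww0 hww0'
    refine (modelreach h.hconn h.hadj {w0}ᶜ Wh hWh a ha b hb).mono ?_
    rintro x hx
    simp only [Set.mem_iUnion, Set.mem_compl_iff, Set.mem_singleton_iff, exists_prop] at hx
    obtain ⟨y, hy, hxy⟩ := hx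
    refine ⟨mem_MU hxy, fun e => hy ?_⟩
    subst e
    by_contra hne
    exact (h.hdisj y w0 hne).le_bot ⟨hxy, hw0⟩ |>.elim
  · obtain ⟨Wh, hWh⟩ := h.hH1 w w'
    refine (modelreach h.hconn h.hadj Set.univ Wh hWh a ha b hb).mono ?_
    intro x hx
    have hxU : x ∈ MU φ := by
      simpa [MU] using hx
    exact ⟨hxU, fun e => hvU (e ▸ hxU)⟩

variable (G φ) in
/-- The pruned branch sets. -/
def Psi (w : ι) : Set V :=
  {u ∈ φ w | ∀ v ∈ MU φ, v ≠ u → Mainside G φ v u}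

lemma Psi_subset (w : ι) : Psi G φ w ⊆ φ w := fun _ hu => hu.1

lemma Hyp.attach (h : Hyp G H φ) {w w' : ι} (hadj : H.Adj w w') {a b : V}
    (ha : a ∈ φ w) (hb : b ∈ φ w') (hGadj : G.Adj a b) : a ∈ Psi G φ w := by
  have hww' : w ≠ w' := hadj.ne
  refine ⟨ha, fun v hvU hva => ?_⟩
  by_cases hvw' : v ∈ φ w'
  · have hvw : v ∉ φ w := fun hc => (h.hdisj w w' hww').le_bot ⟨hc, hvw'⟩
    exact ⟨w, hvw, a, ha, reach_refl ⟨mem_MU ha, fun e => hva e.symm⟩⟩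
  · have hvb : v ≠ b := fun e => hvw' (e ▸ hb)
    exact ⟨w', hvw', b, hb,
      reach_adj hGadj ⟨mem_MU ha, fun e => hva e.symm⟩ ⟨mem_MU hb, fun e => hvb e.symm⟩⟩

lemma notmem_takeUntil [DecidableEq V] {p v z : V} (Q : G.Walk p v) (hz : z ∈ Q.support) (hzv : z ≠ v)
    (hcount : Q.support.count v = 1) : v ∉ (Q.takeUntil z hz).support := by
  classical
  intro hv
  have hsplit : Q.support = (Q.takeUntil z hz).support ++ (Q.dropUntil z hz).support.tail := by
    conv_lhs => rw [← Q.take_spec hz]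
    rw [Walk.support_append]
  have hvd : v ∈ (Q.dropUntil z hz).support.tail := by
    have hvds : v ∈ (Q.dropUntil z hz).support := Walk.end_mem_support _
    rw [Walk.support_eq_cons (Q.dropUntil z hz)] at hvds
    rcases List.mem_cons.1 hvds with e | hvds
    · exact absurd e.symm hzv
    · exact hvds
  have h1 : 1 ≤ ((Q.takeUntil z hz).support).count v := List.count_pos_iff.mpr hv
  have h2 : 1 ≤ ((Q.dropUntil z hz).support.tail).count v := List.count_pos_iff.mpr hvd
  rw [hsplit, List.count_append] at hcount
  omega

lemma Hyp.surg (h : Hyp G H φ) (P S : Set V) (hPS : P ⊆ S) (hSU : S ⊆ MU φ)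
    (hPgood : ∀ p ∈ P, ∀ v ∈ MU φ, v ≠ p → Mainside G φ v p)
    (hbad : ∀ z ∈ S, z ∉ P → ∃ v ∈ MU φ, v ≠ z ∧ ¬ Mainside G φ v z)
    {u b : V} (hu : u ∈ P) (hb : b ∈ P) (W : G.Walk u b)
    (hW : ∀ x ∈ W.support, x ∈ S) : Reach G P u b := by
  classical
  suffices h' : ∀ n {u b : V} (W : G.Walk u b),
      (W.support.toFinset.filter (fun x => x ∉ P)).card = n →
      u ∈ P → b ∈ P → (∀ x ∈ W.support, x ∈ S) → Reach G P u b from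
    h' _ W rfl hu hb hW
  intro n
  induction n using Nat.strong_induction_on with
  | _ n ih =>
  intro u b W hn hu hb hW
  by_cases hall : ∀ x ∈ W.support, x ∈ P
  · exact ⟨W, hall⟩
  push_neg at hall
  obtain ⟨z, hzW, hzP⟩ := hall
  obtain ⟨v, hvU, hvz, hvm⟩ := hbad z (hW z hzW) hzP
  have key : ∀ (p : V), p ∈ P → ∀ (Q : G.Walk p z), (∀ x ∈ Q.support, x ∈ S) →
      v ∉ Q.support → False := by
    intro p hp Q hQS hQv
    have hpv : p ≠ v := fun e => hQv (e ▸ Q.start_mem_support)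
    have hreach : Reach G (MU φ \ {v}) p z :=
      ⟨Q, fun x hx => ⟨hSU (hQS x hx), fun e => hQv (e ▸ hx)⟩⟩
    exact hvm (Mainside.of_reach hreach.symm (hPgood p hp v hvU (Ne.symm hpv)))
  by_cases hvW : v ∈ W.support
  · have hvW' : v ∈ W.reverse.support := by simpa using hvW
    set W1 := W.takeUntil v hvW with hW1def
    set W2 := W.reverse.takeUntil v hvW' with hW2def
    have hW1S : ∀ x ∈ W1.support, x ∈ W.support := fun x hx =>
      W.support_takeUntil_subset hvW hx
    have hW2S : ∀ x ∈ W2.support, x ∈ W.support := fun x hx => by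
      have := W.reverse.support_takeUntil_subset hvW' hx
      simpa using this
    have hzW1 : z ∉ W1.support := by
      intro hzW1
      exact key u hu (W1.takeUntil z hzW1)
        (fun x hx => hW x (hW1S x (W1.support_takeUntil_subset hzW1 hx)))
        (notmem_takeUntil W1 hzW1 (fun e => hvz e.symm)
          (W.count_support_takeUntil_eq_one hvW))
    have hzW2 : z ∉ W2.support := by
      intro hzW2
      exact key b hb (W2.takeUntil z hzW2)
        (fun x hx => hW x (hW2S x (W2.support_takeUntil_subset hzW2 hx)))
        (notmem_takeUntil W2 hzW2 (fun e => hvz e.symm)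
          (W.reverse.count_support_takeUntil_eq_one hvW'))
    set W' := W1.append W2.reverse with hW'def
    have hsub : ∀ x ∈ W'.support, x ∈ W.support := by
      intro x hx
      rcases (Walk.mem_support_append_iff _ _).1 hx with hx | hx
      · exact hW1S x hx
      · exact hW2S x (by simpa using hx)
    have hzW' : z ∉ W'.support := by
      intro hx
      rcases (Walk.mem_support_append_iff _ _).1 hx with hx | hx
      · exact hzW1 hx
      · exact hzW2 (by simpa using hx)
    have hlt : (W'.support.toFinset.filter (fun x => x ∉ P)).card < n := by
      rw [← hn]
      apply Finset.card_lt_card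
      refine (Finset.ssubset_iff_of_subset ?_).2 ⟨z, ?_, ?_⟩
      · intro x hx
        simp only [Finset.mem_filter, List.mem_toFinset] at hx ⊢
        exact ⟨hsub x hx.1, hx.2⟩
      · simp only [Finset.mem_filter, List.mem_toFinset]
        exact ⟨hzW, hzP⟩
      · simp only [Finset.mem_filter, List.mem_toFinset]
        rintro ⟨hc, -⟩
        exact hzW' hc
    exact ih _ hlt W' rfl hu hb (fun x hx => hW x (hsub x hx))
  · exact (key u hu (W.takeUntil z hzW)
      (fun x hx => hW x (W.support_takeUntil_subset hzW hx))
      (fun hc => hvW (W.support_takeUntil_subset hzW hc))).elim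

lemma Hyp.exists_adj (h : Hyp G H φ) (w : ι) : ∃ w', H.Adj w w' := by
  obtain ⟨w1, w2, hne12⟩ := h.hnt
  obtain ⟨w'', hw''⟩ : ∃ w'', w'' ≠ w := by
    by_cases e : w1 = w
    · exact ⟨w2, fun e2 => hne12 (e2 ▸ e.symm).symm⟩
    · exact ⟨w1, e⟩
  obtain ⟨Wh, -⟩ := h.hH1 w w''
  cases Wh with
  | nil => exact absurd rfl hw''
  | cons hadj p => exact ⟨_, hadj⟩

lemma Hyp.psi_adj (h : Hyp G H φ) {w w' : ι} (hadj : H.Adj w w') :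
    ∃ a ∈ Psi G φ w, ∃ b ∈ Psi G φ w', G.Adj a b := by
  obtain ⟨a, ha, b, hb, hab⟩ := h.hadj w w' hadj
  exact ⟨a, h.attach hadj ha hb hab, b, h.attach hadj.symm hb ha hab.symm, hab⟩

lemma Hyp.psi_nonempty (h : Hyp G H φ) (w : ι) : (Psi G φ w).Nonempty := by
  obtain ⟨w', hadj⟩ := h.exists_adj w
  obtain ⟨a, ha, -⟩ := h.psi_adj hadj
  exact ⟨a, ha⟩

lemma phi_subset_MU (w : ι) : φ w ⊆ MU φ := fun _ ha => mem_MU ha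

lemma Hyp.psi_bad (h : Hyp G H φ) {w : ι} {z : V} (hz : z ∈ φ w) (hzP : z ∉ Psi G φ w) :
    ∃ v ∈ MU φ, v ≠ z ∧ ¬ Mainside G φ v z := by
  by_contra hc
  push_neg at hc
  exact hzP ⟨hz, fun v hv hvz => hc v hv hvz⟩

lemma Hyp.psi_conn (h : Hyp G H φ) (w : ι) : ConnSet G (Psi G φ w) := by
  refine ⟨h.psi_nonempty w, fun a ha b hb => ?_⟩
  obtain ⟨W, hW⟩ := (h.hconn w).2 a ha.1 b hb.1
  exact h.surg (Psi G φ w) (φ w) (Psi_subset w) (phi_subset_MU w)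
    (fun p hp => hp.2) (fun z hz hzP => h.psi_bad hz hzP) ha hb W hW

lemma Hyp.B_good (h : Hyp G H φ) {p : V} (hp : p ∈ ⋃ w, Psi G φ w) :
    ∀ v ∈ MU φ, v ≠ p → Mainside G φ v p := by
  obtain ⟨w, hw⟩ := Set.mem_iUnion.1 hp
  exact hw.2

lemma Hyp.B_subset_MU (h : Hyp G H φ) : (⋃ w, Psi G φ w) ⊆ MU φ := by
  intro x hx
  obtain ⟨w, hw⟩ := Set.mem_iUnion.1 hx
  exact mem_MU hw.1

lemma Hyp.B_bad (h : Hyp G H φ) {z : V} (hz : z ∈ MU φ) (hzB : z ∉ ⋃ w, Psi G φ w) :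
    ∃ v ∈ MU φ, v ≠ z ∧ ¬ Mainside G φ v z := by
  obtain ⟨w, hw⟩ := Set.mem_iUnion.1 hz
  exact h.psi_bad hw (fun hc => hzB (Set.mem_iUnion.2 ⟨w, hc⟩))

lemma Hyp.B_conn (h : Hyp G H φ) : ConnSet G (⋃ w, Psi G φ w) := by
  refine ⟨?_, fun a ha b hb => ?_⟩
  · obtain ⟨a, ha⟩ := h.psi_nonempty (Classical.choice ⟨h.hnt.choose⟩)
    exact ⟨a, Set.mem_iUnion.2 ⟨_, ha⟩⟩
  · obtain ⟨w1, hw1⟩ := Set.mem_iUnion.1 ha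
    obtain ⟨w2, hw2⟩ := Set.mem_iUnion.1 hb
    obtain ⟨Wh, hWh⟩ := h.hH1 w1 w2
    obtain ⟨W, hW⟩ := modelreach h.hconn h.hadj Set.univ Wh hWh a hw1.1 b hw2.1
    refine h.surg (⋃ w, Psi G φ w) (MU φ) h.B_subset_MU (le_refl _)
      (fun p hp => h.B_good hp) (fun z hz hzB => h.B_bad hz hzB)
      (Set.mem_iUnion.2 ⟨w1, hw1⟩) (Set.mem_iUnion.2 ⟨w2, hw2⟩) W
      (fun x hx => ?_)
    have := hW x hx
    simpa [MU] using this

lemma Hyp.B_del (h : Hyp G H φ) {x : V} (hx : x ∈ ⋃ w, Psi G φ w) :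
    ConnSet G ((⋃ w, Psi G φ w) \ {x}) := by
  have hxU : x ∈ MU φ := h.B_subset_MU hx
  refine ⟨?_, fun u hu b hb => ?_⟩
  · obtain ⟨w1, w2, hne12⟩ := h.hnt
    obtain ⟨a1, ha1⟩ := h.psi_nonempty w1
    obtain ⟨a2, ha2⟩ := h.psi_nonempty w2
    have hne : a1 ≠ a2 := fun e =>
      (h.hdisj w1 w2 hne12).le_bot ⟨ha1.1, e ▸ ha2.1⟩
    by_cases e : a1 = x
    · refine ⟨a2, Set.mem_iUnion.2 ⟨w2, ha2⟩, fun hc => ?_⟩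
      have : a2 = x := hc
      exact hne (e.trans this.symm)
    · exact ⟨a1, Set.mem_iUnion.2 ⟨w1, ha1⟩, fun hc => e hc⟩
  · have hmu : Mainside G φ x u := h.B_good hu.1 x hxU (fun e => hu.2 e.symm)
    have hmb : Mainside G φ x b := h.B_good hb.1 x hxU (fun e => hb.2 e.symm)
    obtain ⟨wu, hwu, bu, hbu, Ru⟩ := hmu
    obtain ⟨wb, hwb, bb, hbb, Rb⟩ := hmb
    obtain ⟨W, hW⟩ := (Ru.trans ((h.comp hwu hwb hbu hbb).trans Rb.symm))
    refine h.surg ((⋃ w, Psi G φ w) \ {x}) (MU φ \ {x})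
      (Set.diff_subset_diff_left h.B_subset_MU) Set.diff_subset
      (fun p hp => h.B_good hp.1) (fun z hz hzP => ?_) hu hb W hW
    exact h.B_bad hz.1 (fun hc => hzP ⟨hc, hz.2⟩)

end Main

lemma exists_maximal_biconn {B : Set V} (h1 : ConnSet G B)
    (h2 : ∀ x ∈ B, ConnSet G (B \ {x})) :
    ∃ BG, B ⊆ BG ∧ IsBiconnectedComponent G BG := by
  set 𝒮 : Set (Set V) := {C | ConnSet G C ∧ ∀ x ∈ C, ConnSet G (C \ {x})} with h𝒮
  have hzorn := zorn_subset_nonempty 𝒮 ?_ B ⟨h1, h2⟩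
  · obtain ⟨BG, hBBG, hmax⟩ := hzorn
    refine ⟨BG, hBBG, isBiconnected_induce_iff.2 ⟨hmax.1.1, hmax.1.2⟩, ?_⟩
    intro B' hsub hbic
    have hB' := isBiconnected_induce_iff.1 hbic
    exact le_antisymm (hmax.2 ⟨hB'.1, hB'.2⟩ hsub) hsub
  · intro c hc hchain hcne
    refine ⟨⋃₀ c, ⟨⟨?_, ?_⟩, ?_⟩, fun s hs => Set.subset_sUnion_of_mem hs⟩
    · obtain ⟨C, hC⟩ := hcne
      obtain ⟨a, ha⟩ := (hc hC).1.1
      exact ⟨a, C, hC, ha⟩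
    · intro a ha b hb
      obtain ⟨C1, hC1, ha1⟩ := ha
      obtain ⟨C2, hC2, hb2⟩ := hb
      rcases hchain.total hC1 hC2 with hle | hle
      · exact ((hc hC2).1.2 a (hle ha1) b hb2).mono (Set.subset_sUnion_of_mem hC2)
      · exact ((hc hC1).1.2 a ha1 b (hle hb2)).mono (Set.subset_sUnion_of_mem hC1)
    · intro x hx
      obtain ⟨Cx, hCx, hxC⟩ := hx
      constructor
      · obtain ⟨a, ha⟩ := ((hc hCx).2 x hxC).1
        exact ⟨a, ⟨Cx, hCx, ha.1⟩, ha.2⟩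
      · intro a ha b hb
        obtain ⟨C1, hC1, ha1⟩ := ha.1
        obtain ⟨C2, hC2, hb2⟩ := hb.1
        obtain ⟨C3, hC3, hle1, hle2⟩ : ∃ C3 ∈ c, C1 ⊆ C3 ∧ C2 ⊆ C3 := by
          rcases hchain.total hC1 hC2 with hle | hle
          · exact ⟨C2, hC2, hle, le_refl _⟩
          · exact ⟨C1, hC1, le_refl _, hle⟩
        by_cases hxC3 : x ∈ C3
        · exact (((hc hC3).2 x hxC3).2 a ⟨hle1 ha1, ha.2⟩ b ⟨hle2 hb2, hb.2⟩).mono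
            (Set.diff_subset_diff_left (Set.subset_sUnion_of_mem hC3))
        · refine ((hc hC3).1.2 a (hle1 ha1) b (hle2 hb2)).mono ?_
          intro y hy
          exact ⟨Set.subset_sUnion_of_mem hC3 hy, fun e => hxC3 (e ▸ hy)⟩

end Stmt2Aux

open Stmt2Aux

/-- if `φ` is a minor model of `H` in `G`, then for every biconnected
component `BH` of `H` there is a biconnected component `BG` of `G` such that
`H[BH]` is a minor of the subgraph of `G` induced by `φ(BH) ∩ BG`. -/
theorem stmt2 {α β : Type} (G : SimpleGraph α) (H : SimpleGraph β) (φ : β → Set α)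
    (hφ : IsMinorModel G H φ) (BH : Set β) (hBH : IsBiconnectedComponent H BH) :
    ∃ BG : Set α, IsBiconnectedComponent G BG ∧
      IsMinor (H.induce BH) (G.induce ((⋃ w ∈ BH, φ w) ∩ BG)) := by
  obtain ⟨hne, hconn, hdisj, hadj⟩ := hφ
  obtain ⟨⟨hBHconn, hBHdel⟩, -⟩ := hBH
  set φ' : ↥BH → Set α := fun w => φ ↑w with hφ'def
  have hH1 : ∀ w w' : ↥BH, Reach (H.induce BH) Set.univ w w' := by
    intro w w'
    obtain ⟨W⟩ := hBHconn.preconnected w w'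
    exact ⟨W, fun _ _ => trivial⟩
  have hnempty : Nonempty ↥BH := hBHconn.nonempty
  have hH2 : ∀ v w w' : ↥BH, w ≠ v → w' ≠ v → Reach (H.induce BH) {v}ᶜ w w' := by
    intro v w w' hw hw'
    have hcs := (connSet_iff_connected (G := H.induce BH) (S := {u | u ≠ v})).2 (hBHdel v)
    exact (hcs.2 w hw w' hw').mono (fun x hx => hx)
  have hnt : ∃ w w' : ↥BH, w ≠ w' := by
    obtain ⟨v⟩ := hnempty
    obtain ⟨⟨u, hu⟩⟩ := (hBHdel v).nonempty
    exact ⟨u, v, hu⟩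
  have hyp : Hyp G (H.induce BH) φ' :=
    ⟨fun w => hne ↑w, fun w => connSet_iff_connected.2 (hconn ↑w),
     fun w w' hww' => hdisj ↑w ↑w' (fun e => hww' (Subtype.ext e)),
     fun w w' ha => hadj ↑w ↑w' ha, hH1, hH2, hnt⟩
  obtain ⟨BG, hBBG, hcompBG⟩ := exists_maximal_biconn hyp.B_conn (fun x hx => hyp.B_del hx)
  refine ⟨BG, hcompBG, ?_⟩
  have hUeq : MU φ' = ⋃ w ∈ BH, φ w := by
    ext x
    simp only [MU, Set.mem_iUnion, hφ'def]
    constructor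
    · rintro ⟨⟨w, hw⟩, hx⟩; exact ⟨w, hw, hx⟩
    · rintro ⟨w, hw, hx⟩; exact ⟨⟨w, hw⟩, hx⟩
  set T : Set α := (⋃ w ∈ BH, φ w) ∩ BG with hTdef
  have hsubT : ∀ w, Psi G φ' w ⊆ T := by
    intro w x hx
    exact ⟨hUeq ▸ phi_subset_MU w (Psi_subset w hx),
      hBBG (Set.mem_iUnion.2 ⟨w, hx⟩)⟩
  refine ⟨fun w => {x : ↥T | (x : α) ∈ Psi G φ' w}, ?_, ?_, ?_, ?_⟩
  · intro w
    obtain ⟨a, ha⟩ := hyp.psi_nonempty w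
    exact ⟨⟨a, hsubT w ha⟩, ha⟩
  · intro w
    refine (connSet_iff_connected (G := G.induce T)).1 (connSet_induce_iff.2 ?_)
    have himg : Subtype.val '' {x : ↥T | (x : α) ∈ Psi G φ' w} = Psi G φ' w := by
      ext x
      constructor
      · rintro ⟨y, hy, rfl⟩; exact hy
      · intro hx; exact ⟨⟨x, hsubT w hx⟩, hx, rfl⟩
    rw [himg]
    exact hyp.psi_conn w
  · intro w w' hww'
    rw [Set.disjoint_left]
    rintro x hx hx'
    exact ((hdisj ↑w ↑w' (fun e => hww' (Subtype.ext e))).mono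
      (Psi_subset w) (Psi_subset w')).le_bot ⟨hx, hx'⟩
  · intro w w' hadj'
    obtain ⟨a, ha, b, hb, hab⟩ := hyp.psi_adj hadj'
    exact ⟨⟨a, hsubT w ha⟩, ha, ⟨b, hsubT w' hb⟩, hb, hab⟩
end

section
/- Let X be a finite set, G an X-labeled graph, Q a set of s-saturated X-labeled graphs for some s ∈ ℕ, and Breaker ⊆ V(G) a set such that G \ Breaker has no labeled Q-minor. Fix k ∈ ℕ and suppose v ∈ Breaker reaches at least k·(s−1)+s distinct labels in G \ (Breaker \ {v}); let L be any set of exactly k·(s−1)+s such labels. Then for every set Y ⊆ V(G)\{v} with |Y| ≤ k, the graph G \ Y contains a labeled Q-minor all of whose labels lie in L. -/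
open SimpleGraph Set

def IsLabeledMinorModel {α β X : Type*} (G : SimpleGraph α) (labG : α → Set X)
    (H : SimpleGraph β) (labH : β → Set X) (φ : β → Set α) : Prop :=
  IsMinorModel G H φ ∧ ∀ w, ∀ ℓ ∈ labH w, ∃ a ∈ φ w, ℓ ∈ labG a

def IsLabeledMinor {α β X : Type*} (H : SimpleGraph β) (labH : β → Set X)
    (G : SimpleGraph α) (labG : α → Set X) : Prop :=
  ∃ φ, IsLabeledMinorModel G labG H labH φ

def within {α : Type*} (G : SimpleGraph α) (A : Set α) : SimpleGraph α where
  Adj a b := a ∈ A ∧ b ∈ A ∧ G.Adj a b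
  symm := ⟨fun a b ⟨ha, hb, h⟩ => ⟨hb, ha, h.symm⟩⟩
  loopless := ⟨fun a ⟨_, _, h⟩ => G.loopless.irrefl a h⟩

section helpers

variable {V : Type} (G : SimpleGraph V)

lemma within_reach_mem {A : Set V} {a b : V} (h : (within G A).Reachable a b) :
    a = b ∨ b ∈ A := by
  obtain ⟨W⟩ := h
  induction W with
  | nil => exact Or.inl rfl
  | @cons x y z h p ih =>
    right
    rcases ih with rfl | hb
    · exact h.2.1
    · exact hb

lemma lift_conn (T S : Set V) (hST : S ⊆ T) (v₀ : V) (hv₀ : v₀ ∈ S)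
    (hconn : ∀ u ∈ S, (within G S).Reachable v₀ u) :
    ((G.induce T).induce {a : T | a.1 ∈ S}).Connected := by
  have key : ∀ {x u : V} (_ : (within G S).Walk x u) (hx : x ∈ S) (hu : u ∈ S),
      ((G.induce T).induce {a : T | a.1 ∈ S}).Reachable ⟨⟨x, hST hx⟩, hx⟩ ⟨⟨u, hST hu⟩, hu⟩ := by
    intro x u W
    induction W with
    | nil => intro hx hu; exact Reachable.refl _
    | @cons x z u h p ih =>
      intro hx hu
      have hz : z ∈ S := h.2.1
      have hadj : ((G.induce T).induce {a : T | a.1 ∈ S}).Adj ⟨⟨x, hST hx⟩, hx⟩ ⟨⟨z, hST hz⟩, hz⟩ :=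
        h.2.2
      exact hadj.reachable.trans (ih hz hu)
  rw [connected_iff]
  refine ⟨?_, ⟨⟨⟨v₀, hST hv₀⟩, hv₀⟩⟩⟩
  intro a b
  obtain ⟨Wa⟩ := hconn a.1.1 a.2
  obtain ⟨Wb⟩ := hconn b.1.1 b.2
  exact (key Wa hv₀ a.2).symm.trans (key Wb hv₀ b.2)

lemma single_minor {X ι : Type} (lab : V → Set X) {Qv : ι → Type}
    (QG : ∀ i, SimpleGraph (Qv i)) (Qlab : ∀ i, Qv i → Set X)
    (i : ι) (w : Qv i) (hw : ∀ w', w' = w) (T : Set X) (hlab : Qlab i w = T)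
    (U S : Set V) (hSU : S ⊆ U) (v₀ : V) (hv₀ : v₀ ∈ S)
    (hconn : ∀ u ∈ S, (within G S).Reachable v₀ u)
    (hcar : ∀ ℓ ∈ T, ∃ a ∈ S, ℓ ∈ lab a) :
    IsLabeledMinor (QG i) (Qlab i) (G.induce U) (fun a => lab a.1) := by
  refine ⟨fun _ => {a : U | a.1 ∈ S},
    ⟨⟨fun _ => ⟨⟨v₀, hSU hv₀⟩, hv₀⟩, fun _ => lift_conn G U S hSU v₀ hv₀ hconn, ?_, ?_⟩, ?_⟩⟩
  · intro w1 w2 hne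
    exact absurd ((hw w1).trans (hw w2).symm) hne
  · intro w1 w2 hadj
    rw [hw w1, hw w2] at hadj
    exact absurd hadj ((QG i).loopless.irrefl w)
  · intro w' ℓ hℓ
    rw [hw w', hlab] at hℓ
    obtain ⟨a, haS, hla⟩ := hcar ℓ hℓ
    exact ⟨⟨a, hSU haS⟩, haS, hla⟩

lemma inv_walk (A : Set V) (y v : V) :
    ∀ {x u : V} (_ : (within G A).Walk x u),
      (within G A).Reachable v x →
      ((within G (A \ {y})).Reachable v x ∨
        (within G (insert y {u | (within G A).Reachable v u ∧
          ¬ (within G (A \ {y})).Reachable v u})).Reachable y x) →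
      (within G A).Reachable v u ∧
      ((within G (A \ {y})).Reachable v u ∨
        (within G (insert y {u | (within G A).Reachable v u ∧
          ¬ (within G (A \ {y})).Reachable v u})).Reachable y u) := by
  intro x u W
  induction W with
  | nil => exact fun h1 h2 => ⟨h1, h2⟩
  | @cons x z u h p ih =>
    intro h1 h2
    have hz : (within G A).Reachable v z := h1.trans h.reachable
    refine ih hz ?_
    by_cases hza : (within G (A \ {y})).Reachable v z
    · exact Or.inl hza
    · right
      by_cases hzy : z = y
      · subst hzy; exact Reachable.refl _
      · have hzS : z ∈ insert y {u | (within G A).Reachable v u ∧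
            ¬ (within G (A \ {y})).Reachable v u} :=
          Set.mem_insert_iff.mpr (Or.inr ⟨hz, hza⟩)
        rcases h2 with hx | hx
        · by_cases hxy : x = y
          · subst hxy
            exact (SimpleGraph.Adj.reachable ⟨Set.mem_insert _ _, hzS, h.2.2⟩)
          · exfalso
            apply hza
            exact hx.trans (SimpleGraph.Adj.reachable
              ⟨⟨h.1, by simpa using hxy⟩, ⟨h.2.1, by simpa using hzy⟩, h.2.2⟩)
        · have hxS : x ∈ insert y {u | (within G A).Reachable v u ∧
              ¬ (within G (A \ {y})).Reachable v u} := by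
            rcases within_reach_mem G hx with rfl | hxS
            · exact Set.mem_insert _ _
            · exact hxS
          exact hx.trans (SimpleGraph.Adj.reachable ⟨hxS, hzS, h.2.2⟩)

lemma shrink (B : Set V) (v : V) :
    ∀ {x u : V} (_ : (within G B).Walk x u),
      (within G B).Reachable v x →
      (within G {w | (within G B).Reachable v w}).Reachable v x →
      (within G B).Reachable v u ∧
        (within G {w | (within G B).Reachable v w}).Reachable v u := by
  intro x u W
  induction W with
  | nil => exact fun h1 h2 => ⟨h1, h2⟩
  | @cons x z u h p ih =>
    intro h1 h2
    have hz : (within G B).Reachable v z := h1.trans h.reachable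
    exact ih hz (h2.trans (SimpleGraph.Adj.reachable ⟨h1, hz, h.2.2⟩))

end helpers

/-- Let `Q` be an `s`-saturated family of `X`-labeled graphs (for
every set of `s` labels, `Q` contains the single-vertex graph carrying exactly
those labels), and `Breaker` a set such that `G \ Breaker` has no labeled
`Q`-minor. If `v ∈ Breaker` reaches a set `Lset` of `k·(s−1)+s` distinct labels in
`G \ (Breaker \ {v})`, then for every `Y ⊆ V(G) \ {v}` with `|Y| ≤ k`, the graph
`G \ Y` contains a labeled `Q`-minor all of whose labels lie in `Lset`. -/
theorem stmt7 {V X ι : Type} [DecidableEq V] [DecidableEq X]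
    (G : SimpleGraph V) (lab : V → Set X)
    {Qv : ι → Type} (QG : ∀ i, SimpleGraph (Qv i)) (Qlab : ∀ i, Qv i → Set X)
    (s : ℕ)
    (hsat : ∀ Lset : Finset X, Lset.card = s →
      ∃ i, ∃ w : Qv i, (∀ w' : Qv i, w' = w) ∧ Qlab i w = ↑Lset)
    (Breaker : Set V)
    (hB : ∀ i, ¬ IsLabeledMinor (QG i) (Qlab i)
        (G.induce Breakerᶜ) (fun a => lab a.1))
    (k : ℕ) (v : V) (hv : v ∈ Breaker)
    (Lset : Finset X) (hLcard : Lset.card = k * (s - 1) + s)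
    (hreach : ∀ ℓ ∈ Lset, ∃ b, (within G ((Breaker \ {v})ᶜ)).Reachable v b ∧ ℓ ∈ lab b)
    (Y : Finset V) (hvY : v ∉ Y) (hYk : Y.card ≤ k) :
    ∃ i, (∀ w, Qlab i w ⊆ ↑Lset) ∧
      IsLabeledMinor (QG i) (Qlab i) (G.induce ((↑Y : Set V)ᶜ)) (fun a => lab a.1) := by
  classical
  set A₀ : Set V := (Breaker \ {v})ᶜ with hA₀
  -- consequence of Q-minor-freeness of G - Breaker
  have key : ∀ (S : Set V), S ⊆ Breakerᶜ →
      (∃ v₀ ∈ S, ∀ u ∈ S, (within G S).Reachable v₀ u) →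
      ∀ T : Finset X, T.card = s → (∀ ℓ ∈ T, ∃ a ∈ S, ℓ ∈ lab a) → False := by
    rintro S hSB ⟨v₀, hv₀, hconn⟩ T hT hcar
    obtain ⟨i, w, hw, hlab⟩ := hsat T hT
    exact hB i (single_minor G lab QG Qlab i w hw (↑T) hlab Breakerᶜ S hSB v₀ hv₀ hconn
      (fun ℓ hℓ => hcar ℓ hℓ))
  let F : Set V → Finset X :=
    fun A => Lset.filter (fun ℓ => ∃ b, (within G A).Reachable v b ∧ ℓ ∈ lab b)
  have cut_bound : ∀ (A : Set V), A ⊆ A₀ → ∀ y : V, y ≠ v →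
      (F A).card ≤ (F (A \ {y})).card + (s - 1) := by
    intro A hA y hy
    have hsub : F A ⊆ F (A \ {y}) ∪ (F A \ F (A \ {y})) := by
      intro ℓ hℓ
      by_cases h' : ℓ ∈ F (A \ {y})
      · exact Finset.mem_union_left _ h'
      · exact Finset.mem_union_right _ (Finset.mem_sdiff.mpr ⟨hℓ, h'⟩)
    have hcard : (F A).card ≤ (F (A \ {y})).card + (F A \ F (A \ {y})).card :=
      le_trans (Finset.card_le_card hsub) (Finset.card_union_le _ _)
    have hcutb : (F A \ F (A \ {y})).card ≤ s - 1 := by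
      by_contra hbig
      push_neg at hbig
      have hs : s ≤ (F A \ F (A \ {y})).card := by omega
      set D : Set V := {u | (within G A).Reachable v u ∧
        ¬ (within G (A \ {y})).Reachable v u} with hD
      have hcar : ∀ ℓ ∈ F A \ F (A \ {y}), ∃ b ∈ D, ℓ ∈ lab b := by
        intro ℓ hℓ
        obtain ⟨hℓA, hℓA'⟩ := Finset.mem_sdiff.mp hℓ
        obtain ⟨hLs, b, hrb, hlb⟩ := Finset.mem_filter.mp hℓA
        refine ⟨b, ⟨hrb, fun hr' => ?_⟩, hlb⟩
        exact hℓA' (Finset.mem_filter.mpr ⟨hLs, b, hr', hlb⟩)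
      obtain ⟨ℓ₀, hℓ₀⟩ := Finset.card_pos.mp (by omega :
        0 < (F A \ F (A \ {y})).card)
      obtain ⟨b₀, hb₀D, _⟩ := hcar ℓ₀ hℓ₀
      have hyA : y ∈ A := by
        by_contra hyA
        have heq : A \ {y} = A := Set.diff_singleton_eq_self hyA
        exact hb₀D.2 (by rw [heq]; exact hb₀D.1)
      have hSB : insert y D ⊆ Breakerᶜ := by
        intro u hu
        rcases Set.mem_insert_iff.mp hu with rfl | huD
        · have hA0 : u ∈ A₀ := hA hyA
          simp only [hA₀, Set.mem_compl_iff, Set.mem_diff, Set.mem_singleton_iff] at hA0 ⊢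
          tauto
        · have huv : u ≠ v := by
            rintro rfl
            exact huD.2 (Reachable.refl _)
          have huA : u ∈ A := by
            rcases within_reach_mem G huD.1 with h | h
            · exact absurd h.symm huv
            · exact h
          have hA0 : u ∈ A₀ := hA huA
          simp only [hA₀, Set.mem_compl_iff, Set.mem_diff, Set.mem_singleton_iff] at hA0 ⊢
          tauto
      have hconn : ∀ u ∈ insert y D, (within G (insert y D)).Reachable y u := by
        intro u hu
        rcases Set.mem_insert_iff.mp hu with rfl | huD
        · exact Reachable.refl _
        · obtain ⟨W⟩ := huD.1
          have := (inv_walk G A y v W (Reachable.refl v) (Or.inl (Reachable.refl v))).2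
          rcases this with h' | h'
          · exact absurd h' huD.2
          · exact h'
      obtain ⟨T, hTsub, hTcard⟩ := Finset.exists_subset_card_eq hs
      refine key (insert y D) hSB ⟨y, Set.mem_insert _ _, hconn⟩ T hTcard ?_
      intro ℓ hℓ
      obtain ⟨b, hbD, hlb⟩ := hcar ℓ (hTsub hℓ)
      exact ⟨b, Set.mem_insert_of_mem _ hbD, hlb⟩
    omega
  have count : ∀ Y' : Finset V, v ∉ Y' →
      Lset.card ≤ (F (A₀ \ ↑Y')).card + Y'.card * (s - 1) := by
    intro Y'
    induction Y' using Finset.induction_on with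
    | empty =>
      intro _
      have h0 : A₀ \ ↑(∅ : Finset V) = A₀ := by simp
      rw [h0]
      have hfull : F A₀ = Lset := Finset.filter_true_of_mem (fun ℓ hℓ => hreach ℓ hℓ)
      rw [hfull]
      simp
    | @insert y Y' hy ih =>
      intro hv'
      have hvY' : v ∉ Y' := fun h => hv' (Finset.mem_insert_of_mem h)
      have hyv : y ≠ v := fun h => hv' (h ▸ Finset.mem_insert_self _ _)
      have heq : A₀ \ ↑(insert y Y') = (A₀ \ ↑Y') \ {y} := by
        ext a
        simp only [Finset.coe_insert, Set.mem_diff, Set.mem_insert_iff,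
          Set.mem_singleton_iff, Finset.mem_coe]
        tauto
      have hcb := cut_bound (A₀ \ ↑Y') Set.diff_subset y hyv
      have hih := ih hvY'
      rw [heq, Finset.card_insert_of_notMem hy]
      have e : (Y'.card + 1) * (s - 1) = Y'.card * (s - 1) + (s - 1) := by ring
      rw [e]
      linarith
  have hY := count Y hvY
  have hFB : s ≤ (F (A₀ \ ↑Y)).card := by
    have hmul : Y.card * (s - 1) ≤ k * (s - 1) := Nat.mul_le_mul_right _ hYk
    rw [hLcard] at hY
    linarith
  obtain ⟨T, hTsub, hTcard⟩ := Finset.exists_subset_card_eq hFB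
  obtain ⟨i, w, hw, hlab⟩ := hsat T hTcard
  set B : Set V := A₀ \ ↑Y with hBdef
  set Sv : Set V := {u | (within G B).Reachable v u} with hSv
  have hSvY : Sv ⊆ (↑Y : Set V)ᶜ := by
    intro u hu
    rcases within_reach_mem G hu with h | h
    · subst h
      simpa using hvY
    · exact fun hmem => h.2 hmem
  have hconn : ∀ u ∈ Sv, (within G Sv).Reachable v u := by
    intro u hu
    obtain ⟨W⟩ := hu
    exact (shrink G B v W (Reachable.refl v) (Reachable.refl v)).2
  refine ⟨i, ?_, single_minor G lab QG Qlab i w hw (↑T) hlab _ Sv hSvY v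
    (Reachable.refl v) hconn ?_⟩
  · intro w'
    rw [hw w', hlab]
    exact_mod_cast hTsub.trans (Finset.filter_subset _ _)
  · intro ℓ hℓ
    obtain ⟨hLs, b, hrb, hlb⟩ := Finset.mem_filter.mp (hTsub hℓ)
    exact ⟨b, hrb, hlb⟩
end

section
/- Let Q be a set of connected X-labeled graphs and let G_A, G_B, G'_B be X-labeled t-boundaried graphs with folio_{Q,t}(G_B) = folio_{Q,t}(G'_B), where folio_{Q,t}(H) is the set of X-labeled t-boundaried graphs in mpcs_{+t}(Q) that are boundaried labeled minors of H. Then folio_{Q,t}(G_A ⊕ G_B) = folio_{Q,t}(G_A ⊕ G'_B). -/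
open SimpleGraph Set

def compIn {α : Type*} (G : SimpleGraph α) (A : Set α) (a : α) : Set α :=
  {b | b ∈ A ∧ (within G A).Reachable a b}

/-- An `X`-labeled `t`-boundaried graph: a graph with labelsets from `X` and an
injective (partial) boundary index function into `Fin t`. -/
structure BLGraph (X : Type) (t : ℕ) where
  V : Type
  G : SimpleGraph V
  lab : V → Set X
  bd : V → Option (Fin t)
  inj : ∀ a b i, bd a = some i → bd b = some i → a = b

namespace BLGraph

variable {X : Type} {t : ℕ}

/-- Vertices of the glued graph `G₁ ⊕ G₂`: all of `G₁`, plus the vertices of `G₂`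
whose boundary index (if any) does not occur in `G₁`. -/
def glueV (G₁ G₂ : BLGraph X t) : Type :=
  G₁.V ⊕ {b : G₂.V // ∀ i, G₂.bd b = some i → ∀ a, G₁.bd a ≠ some i}

/-- The canonical map of `G₂` into the glued graph. -/
noncomputable def emb2 (G₁ G₂ : BLGraph X t) (b : G₂.V) : glueV G₁ G₂ :=
  letI : Decidable (∃ i, G₂.bd b = some i ∧ ∃ a, G₁.bd a = some i) :=
    Classical.propDecidable _
  if h : ∃ i, G₂.bd b = some i ∧ ∃ a, G₁.bd a = some i
  then Sum.inl h.choose_spec.2.choose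
  else Sum.inr ⟨b, fun i hi a ha => h ⟨i, hi, a, ha⟩⟩

/-- The gluing operation `G₁ ⊕ G₂`, identifying boundary vertices carrying equal
indices and unioning labelsets. -/
noncomputable def glue (G₁ G₂ : BLGraph X t) : BLGraph X t where
  V := glueV G₁ G₂
  G := SimpleGraph.fromRel (fun x y =>
    (∃ a b, x = Sum.inl a ∧ y = Sum.inl b ∧ G₁.G.Adj a b) ∨
    (∃ a b, x = emb2 G₁ G₂ a ∧ y = emb2 G₁ G₂ b ∧ G₂.G.Adj a b))
  lab x := {ℓ | (∃ a, x = Sum.inl a ∧ ℓ ∈ G₁.lab a) ∨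
    (∃ b, x = emb2 G₁ G₂ b ∧ ℓ ∈ G₂.lab b)}
  bd := Sum.elim G₁.bd (fun b => G₂.bd b.1)
  inj := by
    rintro (a | a) (b | b) i ha hb
    · exact congrArg Sum.inl (G₁.inj a b i ha hb)
    · exact absurd ha (b.2 i hb a)
    · exact absurd hb (a.2 i ha b)
    · exact congrArg Sum.inr (Subtype.ext (G₂.inj _ _ i ha hb))

/-- A boundaried labeled minor model of the pattern `P` in the host `H`. -/
def BMinorModel (P H : BLGraph X t) (φ : P.V → Set H.V) : Prop :=
  IsMinorModel H.G P.G φ ∧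
  (∀ w, ∀ ℓ ∈ P.lab w, ∃ a ∈ φ w, ℓ ∈ H.lab a) ∧
  (∀ w a, a ∈ φ w → ∀ i, H.bd a = some i → P.bd w = some i) ∧
  (∀ w i, P.bd w = some i → ∃ a ∈ φ w, H.bd a = some i)

/-- `P` is a boundaried labeled minor of `H`. -/
def BMinor (P H : BLGraph X t) : Prop := ∃ φ, BMinorModel P H φ

/-- Piece: a single boundary vertex, with no labels. -/
def pieceBd (H : BLGraph X t) (a : H.V) : BLGraph X t where
  V := PUnit
  G := ⊥
  lab _ := ∅
  bd _ := H.bd a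
  inj := fun x y _ _ _ => Subsingleton.elim x y

/-- Piece: a single boundary vertex carrying one of its labels. -/
def pieceLab (H : BLGraph X t) (a : H.V) (ℓ : X) : BLGraph X t where
  V := PUnit
  G := ⊥
  lab _ := {ℓ}
  bd _ := H.bd a
  inj := fun x y _ _ _ => Subsingleton.elim x y

/-- Piece: a single edge between two boundary vertices, with no labels. -/
def pieceEdge (H : BLGraph X t) (a b : H.V) (hne : a ≠ b) : BLGraph X t where
  V := Bool
  G := SimpleGraph.fromRel (fun x y => x = true ∧ y = false)
  lab _ := ∅
  bd x := cond x (H.bd a) (H.bd b)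
  inj := by
    intro x y i hx hy
    cases x <;> cases y
    · rfl
    · exact absurd (H.inj b a i hx hy) fun h => hne h.symm
    · exact absurd (H.inj a b i hx hy) hne
    · rfl

/-- Piece: a connected component `C` of `H` minus its boundary (the component of a
non-boundary vertex `c`), together with its boundary neighbors, with
boundary-boundary edges removed and boundary labels erased. -/
def pieceComp (H : BLGraph X t) (c : H.V) : BLGraph X t where
  V := {x : H.V // x ∈ compIn H.G {y | H.bd y = none} c ∨
        (H.bd x ≠ none ∧ ∃ y ∈ compIn H.G {y | H.bd y = none} c, H.G.Adj x y)}
  G := SimpleGraph.fromRel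
    (fun x y => H.G.Adj x.1 y.1 ∧ (H.bd x.1 = none ∨ H.bd y.1 = none))
  lab x := {ℓ | H.bd x.1 = none ∧ ℓ ∈ H.lab x.1}
  bd x := H.bd x.1
  inj := fun x y i hx hy => Subtype.ext (H.inj _ _ i hx hy)

/-- The pieces of a boundaried labeled graph. -/
def pcs (H : BLGraph X t) : Set (BLGraph X t) :=
  {P | (∃ a, H.bd a ≠ none ∧ P = pieceBd H a) ∨
       (∃ a ℓ, H.bd a ≠ none ∧ ℓ ∈ H.lab a ∧ P = pieceLab H a ℓ) ∨
       (∃ a b, ∃ hne : a ≠ b, H.bd a ≠ none ∧ H.bd b ≠ none ∧ H.G.Adj a b ∧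
          P = pieceEdge H a b hne) ∨
       (∃ c, H.bd c = none ∧ P = pieceComp H c)}

/-- The `⊕`-sum of a nonempty list of boundaried labeled graphs. -/
noncomputable def glueList : BLGraph X t → List (BLGraph X t) → BLGraph X t
  | H, [] => H
  | H, P :: l => glue H (glueList P l)

/-- The multipieces of `H`: all `⊕`-sums of nonempty sets of pieces of `H`. -/
def mpcs (H : BLGraph X t) : Set (BLGraph X t) :=
  {K | ∃ (P : BLGraph X t) (l : List (BLGraph X t)),
    (∀ p ∈ P :: l, p ∈ pcs H) ∧ (P :: l).Nodup ∧ K = glueList P l}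

/-- Shift all boundary indices of a `t`-boundaried graph into `Fin (t+1)`
(the "do nothing" extension step). -/
def bumpBd (H : BLGraph X t) : BLGraph X (t+1) where
  V := H.V
  G := H.G
  lab := H.lab
  bd a := (H.bd a).map Fin.castSucc
  inj := by
    intro a b i ha hb
    obtain ⟨j, hj, hj2⟩ := Option.map_eq_some_iff.mp ha
    obtain ⟨j', hj', hj'2⟩ := Option.map_eq_some_iff.mp hb
    have : j' = j := Fin.castSucc_injective _ (hj'2.trans hj2.symm)
    subst this
    exact H.inj a b j' hj hj'

/-- Extension step "increase the boundary": give a non-boundary vertex `v` the new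
index `t+1`. -/
noncomputable def raiseBd (H : BLGraph X t) (v : H.V) : BLGraph X (t+1) :=
  letI := Classical.decEq H.V
  { V := H.V
    G := H.G
    lab := H.lab
    bd := fun a => if a = v then some (Fin.last t) else (H.bd a).map Fin.castSucc
    inj := by
      intro a b i ha hb
      split_ifs at ha hb with h1 h2 h2
      · exact h1.trans h2.symm
      · obtain ⟨j, hj, hj2⟩ := Option.map_eq_some_iff.mp hb
        have : i = Fin.last t := (Option.some_injective _ ha).symm
        exact absurd (hj2.trans this) (Fin.castSucc_lt_last j).ne
      · obtain ⟨j, hj, hj2⟩ := Option.map_eq_some_iff.mp ha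
        have : i = Fin.last t := (Option.some_injective _ hb).symm
        exact absurd (hj2.trans this) (Fin.castSucc_lt_last j).ne
      · obtain ⟨j, hj, hj2⟩ := Option.map_eq_some_iff.mp ha
        obtain ⟨j', hj', hj'2⟩ := Option.map_eq_some_iff.mp hb
        have : j' = j := Fin.castSucc_injective _ (hj'2.trans hj2.symm)
        subst this
        exact H.inj a b j' hj hj' }

/-- Extension step "split": split a boundary vertex `u` into `u` and a new vertex
with index `t+1` joined to `u` by an edge; the edges from `u` to the vertices of
`S` move to the new vertex, and the labels in `K` move to the new vertex. -/
noncomputable def splitBd (H : BLGraph X t) (u : H.V) (S : Set H.V) (K : Set X) :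
    BLGraph X (t+1) :=
  letI := Classical.decEq H.V
  { V := H.V ⊕ Unit
    G := SimpleGraph.fromRel (fun x y =>
      match x, y with
      | .inl a, .inl b => H.G.Adj a b ∧ ¬(b = u ∧ a ∈ S) ∧ ¬(a = u ∧ b ∈ S)
      | .inl a, .inr _ => (H.G.Adj a u ∧ a ∈ S) ∨ a = u
      | _, _ => False)
    lab := Sum.elim (fun a => if a = u then H.lab a \ K else H.lab a)
      (fun _ => K ∩ H.lab u)
    bd := Sum.elim (fun a => (H.bd a).map Fin.castSucc) (fun _ => some (Fin.last t))
    inj := by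
      rintro (a | a) (b | b) i ha hb
      · obtain ⟨j, hj, hj2⟩ := Option.map_eq_some_iff.mp ha
        obtain ⟨j', hj', hj'2⟩ := Option.map_eq_some_iff.mp hb
        have : j' = j := Fin.castSucc_injective _ (hj'2.trans hj2.symm)
        subst this
        exact congrArg Sum.inl (H.inj a b j' hj hj')
      · obtain ⟨j, hj, hj2⟩ := Option.map_eq_some_iff.mp ha
        have : i = Fin.last t := (Option.some_injective _ hb).symm
        exact absurd (hj2.trans this) (Fin.castSucc_lt_last j).ne
      · obtain ⟨j, hj, hj2⟩ := Option.map_eq_some_iff.mp hb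
        have : i = Fin.last t := (Option.some_injective _ ha).symm
        exact absurd (hj2.trans this) (Fin.castSucc_lt_last j).ne
      · exact congrArg Sum.inr rfl }

/-- The single-step extension `ext₁` of a boundaried labeled graph. -/
def ext1 (H : BLGraph X t) : Set (BLGraph X (t+1)) :=
  {K | K = bumpBd H ∨
       (∃ v, H.bd v = none ∧ K = raiseBd H v) ∨
       (∃ u S Kl, H.bd u ≠ none ∧ S ⊆ {a | H.G.Adj a u} ∧ Kl ⊆ H.lab u ∧
          K = splitBd H u S Kl)}

/-- `ext_t(Q)`: all `t`-boundaried graphs obtainable from members of `Q` (viewed as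
`0`-boundaried graphs) by `t` successive extension operations. -/
def extT (X : Type) : (t : ℕ) → Set (BLGraph X 0) → Set (BLGraph X t)
  | 0, Q => Q
  | (t+1), Q => {K | ∃ H ∈ extT X t Q, K ∈ ext1 H}

/-- `mpcs_{+t}(Q) = mpcs(ext_t(Q))`. -/
def mpcsPlus (t : ℕ) (Q : Set (BLGraph X 0)) : Set (BLGraph X t) :=
  {K | ∃ H ∈ extT X t Q, K ∈ mpcs H}

/-- `folio_{Q,t}(H)`: the members of `mpcs_{+t}(Q)` that are boundaried labeled
minors of `H`. -/
def folioQ (Q : Set (BLGraph X 0)) (t : ℕ) (H : BLGraph X t) : Set (BLGraph X t) :=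
  {P | P ∈ mpcsPlus t Q ∧ BMinor P H}

/-- Isomorphism of boundaried labeled graphs. -/
def BLIso (H K : BLGraph X t) : Prop :=
  ∃ e : H.V ≃ K.V, (∀ a b, H.G.Adj a b ↔ K.G.Adj (e a) (e b)) ∧
    (∀ a, H.lab a = K.lab (e a)) ∧ (∀ a, H.bd a = K.bd (e a))

end BLGraph

attribute [reducible] BLGraph.glueV BLGraph.glue BLGraph.pieceBd BLGraph.pieceLab BLGraph.pieceEdge BLGraph.pieceComp

/-! ### Auxiliary machinery -/

section ConnLemmas

variable {V : Type*} {V' : Type*} {G : SimpleGraph V} {H : SimpleGraph V'}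

/-- The induced subgraph on `S` is connected. -/
abbrev ConnOn (G : SimpleGraph V) (S : Set V) : Prop := (G.induce S).Connected

lemma connOn_nonempty {S : Set V} (h : ConnOn G S) : S.Nonempty := by
  obtain ⟨⟨x, hx⟩⟩ := h.nonempty
  exact ⟨x, hx⟩

lemma connOn_reach {S : Set V} (h : ConnOn G S) {x y : V} (hx : x ∈ S) (hy : y ∈ S) :
    (G.induce S).Reachable ⟨x, hx⟩ ⟨y, hy⟩ := h.preconnected _ _

lemma connOn_singleton (v : V) : ConnOn G {v} := by
  haveI : Nonempty ↥({v} : Set V) := ⟨⟨v, rfl⟩⟩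
  refine ⟨fun a b => ?_⟩
  have : a = b := by
    rcases a with ⟨a, ha⟩; rcases b with ⟨b, hb⟩
    simp only [Set.mem_singleton_iff] at ha hb
    subst ha; subst hb; rfl
  rw [this]

lemma conn_cut {S T : Set V} {v : V} (hS : ConnOn G S) (hv : v ∈ S) (hvT : v ∈ T)
    (hcl : ∀ x y, x ∈ S → y ∈ S → x ∈ T → x ≠ v → G.Adj x y → y ∈ T) :
    ConnOn G (S ∩ T) := by
  have key : ∀ (a b : ↥S) (_ : (G.induce S).Walk a b) (hb : b = ⟨v, hv⟩) (haT : a.1 ∈ T),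
      (G.induce (S ∩ T)).Reachable ⟨a.1, a.2, haT⟩ ⟨v, hv, hvT⟩ := by
    intro a b w
    induction w with
    | nil =>
      rintro rfl haT
      rfl
    | @cons a c _ hadj p ih =>
      rintro rfl haT
      by_cases hav : a.1 = v
      · have : (⟨a.1, a.2, haT⟩ : ↥(S ∩ T)) = ⟨v, hv, hvT⟩ := Subtype.ext hav
        rw [this]
      · have hcT : c.1 ∈ T := hcl a.1 c.1 a.2 c.2 haT hav hadj
        have hadj' : (G.induce (S ∩ T)).Adj ⟨a.1, a.2, haT⟩ ⟨c.1, c.2, hcT⟩ := hadj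
        exact hadj'.reachable.trans (ih rfl hcT)
  haveI : Nonempty ↥(S ∩ T) := ⟨⟨v, hv, hvT⟩⟩
  refine ⟨fun x y => ?_⟩
  rcases x with ⟨x, hx, hxT⟩
  rcases y with ⟨y, hy, hyT⟩
  obtain ⟨wx⟩ := connOn_reach hS hx hv
  obtain ⟨wy⟩ := connOn_reach hS hy hv
  exact (key ⟨x, hx⟩ _ wx rfl hxT).trans (key ⟨y, hy⟩ _ wy rfl hyT).symm

lemma conn_crossing {S T : Set V} {x y : V} (hS : ConnOn G S) (hx : x ∈ S) (hy : y ∈ S)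
    (hxT : x ∈ T) (hyT : y ∉ T) :
    ∃ a b, a ∈ S ∧ b ∈ S ∧ a ∈ T ∧ b ∉ T ∧ G.Adj a b := by
  have key : ∀ (a b : ↥S) (_ : (G.induce S).Walk a b) (hb : b = ⟨y, hy⟩) (haT : a.1 ∈ T),
      ∃ a' b', a' ∈ S ∧ b' ∈ S ∧ a' ∈ T ∧ b' ∉ T ∧ G.Adj a' b' := by
    intro a b w
    induction w with
    | nil =>
      rintro rfl haT
      exact absurd haT hyT
    | @cons a c _ hadj p ih =>
      rintro rfl haT
      by_cases hcT : c.1 ∈ T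
      · exact ih rfl hcT
      · exact ⟨a.1, c.1, a.2, c.2, haT, hcT, hadj⟩
  obtain ⟨w⟩ := connOn_reach hS hx hy
  exact key ⟨x, hx⟩ _ w rfl hxT

lemma conn_union {S S' : Set V} {v : V} (hS : ConnOn G S) (hS' : ConnOn G S')
    (hv : v ∈ S) (hv' : v ∈ S') : ConnOn G (S ∪ S') := by
  let F : (G.induce S) →g (G.induce (S ∪ S')) :=
    ⟨fun a => ⟨a.1, Or.inl a.2⟩, fun {a b} h => h⟩
  let F' : (G.induce S') →g (G.induce (S ∪ S')) :=
    ⟨fun a => ⟨a.1, Or.inr a.2⟩, fun {a b} h => h⟩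
  haveI : Nonempty ↥(S ∪ S') := ⟨⟨v, Or.inl hv⟩⟩
  have key : ∀ (z : ↥(S ∪ S')), (G.induce (S ∪ S')).Reachable z ⟨v, Or.inl hv⟩ := by
    rintro ⟨z, hz | hz⟩
    · exact (connOn_reach hS hz hv).map F
    · have h1 := (connOn_reach hS' hz hv').map F'
      have h2 : F' ⟨v, hv'⟩ = (⟨v, Or.inl hv⟩ : ↥(S ∪ S')) := rfl
      rwa [h2] at h1
  refine ⟨fun x y => ?_⟩
  exact (key x).trans (key y).symm

lemma conn_image (f : V → V') {S : Set V}
    (hS : ConnOn G S) (hf : ∀ a ∈ S, ∀ b ∈ S, G.Adj a b → H.Adj (f a) (f b)) :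
    ConnOn H (f '' S) := by
  let F : (G.induce S) →g (H.induce (f '' S)) :=
    ⟨fun a => ⟨f a.1, ⟨a.1, a.2, rfl⟩⟩, fun {a b} h => hf _ a.2 _ b.2 h⟩
  obtain ⟨x, hx⟩ := connOn_nonempty hS
  haveI : Nonempty ↥(f '' S) := ⟨⟨f x, x, hx, rfl⟩⟩
  refine ⟨fun z z' => ?_⟩
  rcases z with ⟨z, a, ha, rfl⟩
  rcases z' with ⟨z', b, hb, rfl⟩
  exact (connOn_reach hS ha hb).map F

lemma conn_pullback (f : V → V') {S : Set V}
    (himg : ConnOn H (f '' S)) (hne : S.Nonempty) (hinj : Set.InjOn f S)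
    (hrefl : ∀ a ∈ S, ∀ b ∈ S, H.Adj (f a) (f b) → G.Adj a b) :
    ConnOn G S := by
  haveI : Nonempty ↥S := ⟨⟨hne.choose, hne.choose_spec⟩⟩
  refine ⟨fun z z' => ?_⟩
  rcases z with ⟨a, ha⟩
  rcases z' with ⟨b, hb⟩
  have key : ∀ (u u' : ↥(f '' S)) (_ : (H.induce (f '' S)).Walk u u')
      (hu' : u' = ⟨f b, ⟨b, hb, rfl⟩⟩)
      (a' : V) (ha' : a' ∈ S), f a' = u.1 → (G.induce S).Reachable ⟨a', ha'⟩ ⟨b, hb⟩ := by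
    intro u u' w
    induction w with
    | nil =>
      rintro rfl a' ha' hfa
      have : a' = b := hinj ha' hb hfa
      subst this; rfl
    | @cons u c _ hadj p ih =>
      rintro rfl a' ha' hfa
      obtain ⟨c', hc', hfc⟩ := c.2
      have hadj2 : H.Adj (f a') (f c') := by
        rw [hfa, hfc]; exact hadj
      have : (G.induce S).Adj ⟨a', ha'⟩ ⟨c', hc'⟩ := hrefl _ ha' _ hc' hadj2
      exact this.reachable.trans (ih rfl c' hc' hfc)
  obtain ⟨w⟩ := himg.preconnected ⟨f a, ⟨a, ha, rfl⟩⟩ ⟨f b, ⟨b, hb, rfl⟩⟩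
  exact key _ _ w rfl a ha rfl

end ConnLemmas


section CastLemmas

variable {X : Type} {t : ℕ}

lemma cast_bd {p q : BLGraph X t} (e : p = q) (v : p.V) :
    q.bd (cast (congrArg BLGraph.V e) v) = p.bd v := by subst e; rfl

lemma cast_lab {p q : BLGraph X t} (e : p = q) (v : p.V) :
    q.lab (cast (congrArg BLGraph.V e) v) = p.lab v := by subst e; rfl

lemma cast_adj {p q : BLGraph X t} (e : p = q) (v v' : p.V) :
    q.G.Adj (cast (congrArg BLGraph.V e) v) (cast (congrArg BLGraph.V e) v')
      ↔ p.G.Adj v v' := by subst e; rfl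

end CastLemmas

namespace BLGraph

section GlueLemmas

variable {X : Type} {t : ℕ} (G₁ G₂ : BLGraph X t)

lemma emb2_matched {b : G₂.V} {i : Fin t} {a : G₁.V} (hb : G₂.bd b = some i)
    (ha : G₁.bd a = some i) : emb2 G₁ G₂ b = Sum.inl a := by
  unfold emb2
  have hex : ∃ j, G₂.bd b = some j ∧ ∃ a', G₁.bd a' = some j := ⟨i, hb, a, ha⟩
  rw [dif_pos hex]
  congr 1
  have h1 : G₂.bd b = some hex.choose := hex.choose_spec.1
  have h2 : hex.choose = i := Option.some_injective _ (h1.symm.trans hb)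
  exact G₁.inj _ _ i (h2 ▸ hex.choose_spec.2.choose_spec) ha

lemma emb2_unmatched {b : G₂.V} (hb : ∀ i, G₂.bd b = some i → ∀ a, G₁.bd a ≠ some i) :
    emb2 G₁ G₂ b = Sum.inr ⟨b, hb⟩ := by
  unfold emb2
  rw [dif_neg]
  rintro ⟨i, hi, a, ha⟩
  exact hb i hi a ha

lemma emb2_eq_inl {b : G₂.V} {a : G₁.V} :
    emb2 G₁ G₂ b = Sum.inl a ↔ ∃ i, G₂.bd b = some i ∧ G₁.bd a = some i := by
  constructor
  · intro h
    by_cases hex : ∃ i, G₂.bd b = some i ∧ ∃ a', G₁.bd a' = some i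
    · obtain ⟨i, hi, a', ha'⟩ := hex
      rw [emb2_matched G₁ G₂ hi ha'] at h
      obtain rfl : a' = a := Sum.inl_injective h
      exact ⟨i, hi, ha'⟩
    · rw [emb2_unmatched G₁ G₂ (fun i hi a' ha' => hex ⟨i, hi, a', ha'⟩)] at h
      simp at h
  · rintro ⟨i, hi, ha⟩
    exact emb2_matched G₁ G₂ hi ha

lemma emb2_eq_inr {b : G₂.V} {c} (h : emb2 G₁ G₂ b = Sum.inr c) : b = c.1 := by
  by_cases hex : ∃ i, G₂.bd b = some i ∧ ∃ a', G₁.bd a' = some i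
  · obtain ⟨i, hi, a', ha'⟩ := hex
    rw [emb2_matched G₁ G₂ hi ha'] at h
    simp at h
  · rw [emb2_unmatched G₁ G₂ (fun i hi a' ha' => hex ⟨i, hi, a', ha'⟩)] at h
    have := Sum.inr_injective h
    exact congrArg Subtype.val this

lemma emb2_inj : Function.Injective (emb2 G₁ G₂) := by
  intro b b' h
  rcases hcb : emb2 G₁ G₂ b with a | c
  · rw [hcb] at h
    obtain ⟨i, hbi, hai⟩ := (emb2_eq_inl G₁ G₂).mp hcb
    obtain ⟨i', hbi', hai'⟩ := (emb2_eq_inl G₁ G₂).mp h.symm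
    have hii : i' = i := Option.some_injective _ (hai'.symm.trans hai)
    exact G₂.inj _ _ i hbi (hii ▸ hbi')
  · rw [hcb] at h
    have h1 := emb2_eq_inr G₁ G₂ hcb
    have h2 := emb2_eq_inr G₁ G₂ h.symm
    rw [← h1] at h2
    exact h2.symm

lemma glue_bd_inl (a : G₁.V) : (glue G₁ G₂).bd (Sum.inl a) = G₁.bd a := rfl

lemma glue_bd_emb2 (b : G₂.V) : (glue G₁ G₂).bd (emb2 G₁ G₂ b) = G₂.bd b := by
  rcases hcb : emb2 G₁ G₂ b with a | c
  · obtain ⟨i, hbi, hai⟩ := (emb2_eq_inl G₁ G₂).mp hcb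
    show G₁.bd a = G₂.bd b
    rw [hai, hbi]
  · have hb := emb2_eq_inr G₁ G₂ hcb
    show G₂.bd c.1 = G₂.bd b
    rw [← hb]

lemma glue_vertex_cases (x : (glue G₁ G₂).V) :
    (∃ a, x = Sum.inl a) ∨ ∃ b, x = emb2 G₁ G₂ b := by
  rcases x with a | c
  · exact .inl ⟨a, rfl⟩
  · exact .inr ⟨c.1, (emb2_unmatched G₁ G₂ c.2).symm⟩

lemma glue_adj {x y : (glue G₁ G₂).V} :
    (glue G₁ G₂).G.Adj x y ↔ x ≠ y ∧
      ((∃ a b, x = Sum.inl a ∧ y = Sum.inl b ∧ G₁.G.Adj a b) ∨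
       (∃ a b, x = emb2 G₁ G₂ a ∧ y = emb2 G₁ G₂ b ∧ G₂.G.Adj a b)) := by
  show (SimpleGraph.fromRel _).Adj x y ↔ _
  rw [SimpleGraph.fromRel_adj]
  constructor
  · rintro ⟨hne, h | h⟩
    · exact ⟨hne, h⟩
    · refine ⟨hne, ?_⟩
      rcases h with ⟨a, b, hx, hy, hadj⟩ | ⟨a, b, hx, hy, hadj⟩
      · exact .inl ⟨b, a, hy, hx, hadj.symm⟩
      · exact .inr ⟨b, a, hy, hx, hadj.symm⟩
  · rintro ⟨hne, h⟩
    exact ⟨hne, .inl h⟩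

lemma glue_lab {x} {ℓ : X} : ℓ ∈ (glue G₁ G₂).lab x ↔
    (∃ a, x = Sum.inl a ∧ ℓ ∈ G₁.lab a) ∨ (∃ b, x = emb2 G₁ G₂ b ∧ ℓ ∈ G₂.lab b) :=
  Iff.rfl

lemma inl_adj_transfer {a b : G₁.V} (h : G₁.G.Adj a b) :
    (glue G₁ G₂).G.Adj (Sum.inl a) (Sum.inl b) := by
  rw [glue_adj]
  exact ⟨fun he => h.ne (Sum.inl_injective he), .inl ⟨a, b, rfl, rfl, h⟩⟩

lemma emb2_adj_transfer {a b : G₂.V} (h : G₂.G.Adj a b) :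
    (glue G₁ G₂).G.Adj (emb2 G₁ G₂ a) (emb2 G₁ G₂ b) := by
  rw [glue_adj]
  exact ⟨fun he => h.ne (emb2_inj G₁ G₂ he), .inr ⟨a, b, rfl, rfl, h⟩⟩

lemma inl_adj_reflect {a b : G₁.V} (h : (glue G₁ G₂).G.Adj (Sum.inl a) (Sum.inl b))
    (hone : G₁.bd a = none ∨ G₁.bd b = none) : G₁.G.Adj a b := by
  rw [glue_adj] at h
  rcases h.2 with ⟨a', b', ha', hb', hadj⟩ | ⟨a', b', ha', hb', hadj⟩
  · obtain rfl : a = a' := Sum.inl_injective ha'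
    obtain rfl : b = b' := Sum.inl_injective hb'
    exact hadj
  · exfalso
    obtain ⟨i, _, hai⟩ := (emb2_eq_inl G₁ G₂).mp ha'.symm
    obtain ⟨j, _, hbj⟩ := (emb2_eq_inl G₁ G₂).mp hb'.symm
    rcases hone with h1 | h1
    · rw [h1] at hai; simp at hai
    · rw [h1] at hbj; simp at hbj

lemma emb2_adj_reflect {a b : G₂.V} (h : (glue G₁ G₂).G.Adj (emb2 G₁ G₂ a) (emb2 G₁ G₂ b))
    (hone : G₂.bd a = none ∨ G₂.bd b = none) : G₂.G.Adj a b := by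
  rw [glue_adj] at h
  rcases h.2 with ⟨a', b', ha', hb', hadj⟩ | ⟨a', b', ha', hb', hadj⟩
  · exfalso
    obtain ⟨i, hai, _⟩ := (emb2_eq_inl G₁ G₂).mp ha'
    obtain ⟨j, hbj, _⟩ := (emb2_eq_inl G₁ G₂).mp hb'
    rcases hone with h1 | h1
    · rw [h1] at hai; simp at hai
    · rw [h1] at hbj; simp at hbj
  · obtain rfl : a' = a := emb2_inj G₁ G₂ ha'.symm
    obtain rfl : b' = b := emb2_inj G₁ G₂ hb'.symm
    exact hadj

end GlueLemmas

end BLGraph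

section RepSection

namespace BLGraph

variable {X : Type} {t : ℕ}

/-- A representation of `K` as the glue of the list of pieces `L`. -/
structure Rep (K : BLGraph X t) (L : List (BLGraph X t)) where
  ι : (k : Fin L.length) → (L.get k).V → K.V
  surj : ∀ x, ∃ k v, x = ι k v
  ibd : ∀ k v, K.bd (ι k v) = (L.get k).bd v
  iadj : ∀ x y, K.G.Adj x y ↔ ∃ k v v', x = ι k v ∧ y = ι k v' ∧ (L.get k).G.Adj v v'
  ilab : ∀ x ℓ, ℓ ∈ K.lab x ↔ ∃ k v, x = ι k v ∧ ℓ ∈ (L.get k).lab v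
  int_same : ∀ k v v', (L.get k).bd v = none → ι k v = ι k v' → v = v'
  int_diff : ∀ k v k' v', (L.get k).bd v = none → k ≠ k' → ι k v ≠ ι k' v'

noncomputable def Rep.single (P : BLGraph X t) : Rep P [P] where
  ι k := match k with
    | ⟨0, _⟩ => fun v => v
  surj x := ⟨⟨0, by simp⟩, x, rfl⟩
  ibd k v := by
    rcases k with ⟨kk, hk⟩
    match kk, hk with
    | 0, _ => rfl
  iadj x y := by
    constructor
    · intro h
      exact ⟨⟨0, by simp⟩, x, y, rfl, rfl, h⟩
    · rintro ⟨⟨kk, hk⟩, v, v', hx, hy, h⟩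
      subst hx; subst hy
      match kk, hk, v, v', h with
      | 0, _, v, v', h => exact h
  ilab x ℓ := by
    constructor
    · intro h
      exact ⟨⟨0, by simp⟩, x, rfl, h⟩
    · rintro ⟨⟨kk, hk⟩, v, hx, h⟩
      subst hx
      match kk, hk, v, h with
      | 0, _, v, h => exact h
  int_same k v v' hbd heq := by
    rcases k with ⟨kk, hk⟩
    match kk, hk, v, v', heq with
    | 0, _, v, v', heq => exact heq
  int_diff k v k' v' hbd hkk' heq := by
    rcases k with ⟨kk, hk⟩; rcases k' with ⟨kk', hk'⟩
    match kk, hk, kk', hk', v, v', hkk', heq with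
    | 0, _, 0, _, v, v', hkk', heq => exact hkk' (by rfl)

noncomputable def Rep.step {R : BLGraph X t} {M : List (BLGraph X t)}
    (P : BLGraph X t) (ρ : Rep R M) : Rep (glue P R) (P :: M) where
  ι k := match k with
    | ⟨0, _⟩ => Sum.inl
    | ⟨j+1, hj⟩ => fun v => emb2 P R (ρ.ι ⟨j, Nat.lt_of_succ_lt_succ (by simpa using hj)⟩ v)
  surj x := by
    rcases x with a | c
    · exact ⟨⟨0, by simp⟩, a, rfl⟩
    · obtain ⟨⟨j, hj⟩, v, hjv⟩ := ρ.surj c.1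
      refine ⟨⟨j+1, by simpa using Nat.succ_lt_succ hj⟩, v, ?_⟩
      have goal : Sum.inr c = emb2 P R (ρ.ι ⟨j, hj⟩ v) := by
        rw [← hjv, emb2_unmatched P R c.2]
      exact goal
  ibd k v := by
    rcases k with ⟨kk, hk⟩
    match kk, hk, v with
    | 0, _, v => rfl
    | j+1, hj, v =>
      show (glue P R).bd (emb2 P R (ρ.ι ⟨j, _⟩ v)) = _
      rw [glue_bd_emb2]
      exact ρ.ibd ⟨j, _⟩ v
  iadj x y := by
    rw [glue_adj]
    constructor
    · rintro ⟨hne, ⟨a, b, rfl, rfl, hadj⟩ | ⟨a, b, rfl, rfl, hadj⟩⟩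
      · exact ⟨⟨0, by simp⟩, a, b, rfl, rfl, hadj⟩
      · obtain ⟨⟨j, hj⟩, v, v', ha, hb, hpadj⟩ := (ρ.iadj a b).mp hadj
        refine ⟨⟨j+1, by simpa using Nat.succ_lt_succ hj⟩, v, v', ?_, ?_, hpadj⟩
        · show emb2 P R a = emb2 P R (ρ.ι ⟨j, _⟩ v)
          rw [ha]
        · show emb2 P R b = emb2 P R (ρ.ι ⟨j, _⟩ v')
          rw [hb]
    · rintro ⟨⟨kk, hk⟩, v, v', hx, hy, hpadj⟩
      subst hx; subst hy
      match kk, hk, v, v', hpadj with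
      | 0, _, v, v', hpadj =>
        have h' : P.G.Adj v v' := hpadj
        exact ⟨fun h => h'.ne (Sum.inl_injective h), .inl ⟨v, v', rfl, rfl, h'⟩⟩
      | j+1, hj, v, v', hpadj =>
        have hR : R.G.Adj (ρ.ι ⟨j, _⟩ v) (ρ.ι ⟨j, _⟩ v') :=
          (ρ.iadj _ _).mpr ⟨⟨j, _⟩, v, v', rfl, rfl, hpadj⟩
        exact ⟨fun h => hR.ne (emb2_inj P R h), .inr ⟨_, _, rfl, rfl, hR⟩⟩
  ilab x ℓ := by
    rw [glue_lab]
    constructor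
    · rintro (⟨a, rfl, hl⟩ | ⟨b, rfl, hl⟩)
      · exact ⟨⟨0, by simp⟩, a, rfl, hl⟩
      · obtain ⟨⟨j, hj⟩, v, hb, hlv⟩ := (ρ.ilab b ℓ).mp hl
        refine ⟨⟨j+1, by simpa using Nat.succ_lt_succ hj⟩, v, ?_, hlv⟩
        show emb2 P R b = emb2 P R (ρ.ι ⟨j, _⟩ v)
        rw [hb]
    · rintro ⟨⟨kk, hk⟩, v, hx, hlv⟩
      subst hx
      match kk, hk, v, hlv with
      | 0, _, v, hlv => exact Or.inl ⟨v, rfl, hlv⟩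
      | j+1, hj, v, hlv =>
        exact Or.inr ⟨ρ.ι ⟨j, _⟩ v, rfl, (ρ.ilab _ ℓ).mpr ⟨⟨j, _⟩, v, rfl, hlv⟩⟩
  int_same k v v' hbd heq := by
    rcases k with ⟨kk, hk⟩
    match kk, hk, v, v', hbd, heq with
    | 0, _, v, v', hbd, heq => exact Sum.inl_injective heq
    | j+1, hj, v, v', hbd, heq =>
      exact ρ.int_same ⟨j, _⟩ v v' hbd (emb2_inj P R heq)
  int_diff k v k' v' hbd hkk' heq := by
    rcases k with ⟨kk, hk⟩; rcases k' with ⟨kk', hk'⟩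
    match kk, hk, kk', hk', v, v', hbd, hkk', heq with
    | 0, _, 0, _, v, v', hbd, hkk', heq => exact hkk' rfl
    | 0, _, j'+1, _, v, v', hbd, hkk', heq =>
      obtain ⟨i, hRi, hPi⟩ := (emb2_eq_inl P R).mp heq.symm
      have hP : P.bd v = none := hbd
      rw [hP] at hPi
      simp at hPi
    | j+1, _, 0, _, v, v', hbd, hkk', heq =>
      obtain ⟨i, hRi, hPi⟩ := (emb2_eq_inl P R).mp heq
      have hR : R.bd (ρ.ι ⟨j, _⟩ v) = none := by
        rw [ρ.ibd]; exact hbd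
      rw [hR] at hRi
      simp at hRi
    | j+1, _, j'+1, _, v, v', hbd, hkk', heq =>
      refine ρ.int_diff ⟨j, _⟩ v ⟨j', _⟩ v' hbd ?_ (emb2_inj P R heq)
      intro hjj'
      apply hkk'
      have : j = j' := by
        have := congrArg Fin.val hjj'
        simpa using this
      simp [this]

noncomputable def repGlueList :
    (l : List (BLGraph X t)) → (P : BLGraph X t) → Rep (glueList P l) (P :: l)
  | [], P => Rep.single P
  | (Q :: l'), P => Rep.step P (repGlueList l' Q)

end BLGraph

end RepSection

section PcsSection

namespace BLGraph

variable {X : Type} {t : ℕ} {H : BLGraph X t} {p : BLGraph X t}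

lemma pieceBd_not_adj {a : H.V} {v v' : (pieceBd H a).V} : ¬ (pieceBd H a).G.Adj v v' := by
  intro h
  have h' : (⊥ : SimpleGraph PUnit).Adj v v' := h
  simpa using h'

lemma pieceLab_not_adj {a : H.V} {ℓ : X} {v v' : (pieceLab H a ℓ).V} :
    ¬ (pieceLab H a ℓ).G.Adj v v' := by
  intro h
  have h' : (⊥ : SimpleGraph PUnit).Adj v v' := h
  simpa using h'

lemma pieceEdge_adj {a b : H.V} {hne : a ≠ b} {v v' : (pieceEdge H a b hne).V} :
    (pieceEdge H a b hne).G.Adj v v' ↔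
      v ≠ v' ∧ ((v = true ∧ v' = false) ∨ (v' = true ∧ v = false)) :=
  SimpleGraph.fromRel_adj _ _ _

lemma pieceComp_adj {c : H.V} {v v' : (pieceComp H c).V} :
    (pieceComp H c).G.Adj v v' ↔ v ≠ v' ∧
      ((H.G.Adj v.1 v'.1 ∧ (H.bd v.1 = none ∨ H.bd v'.1 = none)) ∨
       (H.G.Adj v'.1 v.1 ∧ (H.bd v'.1 = none ∨ H.bd v.1 = none))) :=
  SimpleGraph.fromRel_adj _ _ _

lemma pcs_bd_realize (hp : p ∈ pcs H) : ∀ v i, p.bd v = some i → ∃ a, H.bd a = some i := by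
  rcases hp with ⟨a, _, rfl⟩ | ⟨a, ℓ, _, _, rfl⟩ | ⟨a, b, hne, _, _, _, rfl⟩ | ⟨c, _, rfl⟩
  · exact fun v i h => ⟨a, h⟩
  · exact fun v i h => ⟨a, h⟩
  · intro v i h
    cases v
    · exact ⟨b, h⟩
    · exact ⟨a, h⟩
  · exact fun v i h => ⟨v.1, h⟩

lemma pcs_interior_structure (hp : p ∈ pcs H) (u : p.V) (hu : p.bd u = none) :
    (∀ v v', p.G.Adj v v' → p.bd v = none ∨ p.bd v' = none) ∧
    (∀ v ℓ, ℓ ∈ p.lab v → p.bd v = none) := by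
  rcases hp with ⟨a, ha, rfl⟩ | ⟨a, ℓ, ha, _, rfl⟩ | ⟨a, b, hne, ha, hb, _, rfl⟩ | ⟨c, hc, rfl⟩
  · exact absurd hu ha
  · exact absurd hu ha
  · cases u
    · exact absurd hu hb
    · exact absurd hu ha
  · constructor
    · intro v v' hadj
      rw [pieceComp_adj] at hadj
      rcases hadj.2 with ⟨_, h⟩ | ⟨_, h⟩
      · exact h
      · exact h.symm
    · intro v ℓ hl
      exact hl.1

lemma pcs_bd_neighbor (hp : p ∈ pcs H) {v : p.V} {i : Fin t} (hv : p.bd v = some i)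
    (u : p.V) (hu : p.bd u = none) :
    ∃ w, p.bd w = none ∧ p.G.Adj v w := by
  rcases hp with ⟨a, ha, rfl⟩ | ⟨a, ℓ, ha, _, rfl⟩ | ⟨a, b, hne, ha, hb, _, rfl⟩ | ⟨c, hc, rfl⟩
  · exact absurd hu ha
  · exact absurd hu ha
  · cases u
    · exact absurd hu hb
    · exact absurd hu ha
  · rcases v with ⟨x, hx | ⟨hxbd, y, hy, hadj⟩⟩
    · exact absurd (show H.bd x = some i from hv) (by rw [hx.1]; simp)
    · refine ⟨⟨y, Or.inl hy⟩, hy.1, ?_⟩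
      rw [pieceComp_adj]
      refine ⟨?_, Or.inl ⟨hadj, Or.inr hy.1⟩⟩
      intro h
      have : x = y := congrArg Subtype.val h
      rw [this] at hxbd
      exact hxbd hy.1

lemma pcs_bdbd_edge (hp : p ∈ pcs H) {v v' : p.V} (h : p.G.Adj v v')
    (hv : p.bd v ≠ none) (hv' : p.bd v' ≠ none) :
    (∀ u, p.bd u ≠ none) ∧ (∀ u ℓ, ℓ ∉ p.lab u) ∧
    (∀ u u', p.G.Adj u u' → (u = v ∧ u' = v') ∨ (u = v' ∧ u' = v)) ∧
    (∀ u, u = v ∨ u = v') := by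
  rcases hp with ⟨a, ha, rfl⟩ | ⟨a, ℓ, ha, _, rfl⟩ | ⟨a, b, hne, ha, hb, _, rfl⟩ | ⟨c, hc, rfl⟩
  · exact absurd h pieceBd_not_adj
  · exact absurd h pieceLab_not_adj
  · refine ⟨?_, ?_, ?_, ?_⟩
    · intro u
      cases u
      · exact hb
      · exact ha
    · intro u ℓ hl
      exact hl
    · intro u u' hadj
      rw [pieceEdge_adj] at h hadj
      rcases h.2 with ⟨hv1, hv2⟩ | ⟨hv1, hv2⟩ <;>
        rcases hadj.2 with ⟨hu1, hu2⟩ | ⟨hu1, hu2⟩ <;> subst hv1 <;> subst hv2 <;> simp_all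
    · intro u
      rw [pieceEdge_adj] at h
      rcases h.2 with ⟨hv1, hv2⟩ | ⟨hv1, hv2⟩ <;> subst hv1 <;> subst hv2 <;> cases u <;> simp
  · rw [pieceComp_adj] at h
    rcases h.2 with ⟨_, hn⟩ | ⟨_, hn⟩
    · rcases hn with hn | hn
      · exact absurd hn hv
      · exact absurd hn hv'
    · rcases hn with hn | hn
      · exact absurd hn hv'
      · exact absurd hn hv

lemma pcs_bd_label (hp : p ∈ pcs H) {v : p.V} {ℓ : X} (hv : p.bd v ≠ none)
    (hl : ℓ ∈ p.lab v) :
    (∀ u, u = v) ∧ (∀ u ℓ', ℓ' ∈ p.lab u → ℓ' = ℓ) ∧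
    (∀ u u', ¬ p.G.Adj u u') ∧ (∀ u, p.bd u ≠ none) := by
  rcases hp with ⟨a, ha, rfl⟩ | ⟨a, ℓ₀, ha, _, rfl⟩ | ⟨a, b, hne, ha, hb, _, rfl⟩ | ⟨c, hc, rfl⟩
  · exact absurd hl (Set.notMem_empty _)
  · obtain rfl : ℓ = ℓ₀ := hl
    have hsub : ∀ u w : PUnit, u = w := fun _ _ => Subsingleton.elim _ _
    refine ⟨fun u => hsub u v, ?_, ?_, fun u => ha⟩
    · intro u ℓ' hl'
      exact hl'
    · intro u u'
      exact pieceLab_not_adj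
  · exact absurd hl (Set.notMem_empty _)
  · exact absurd hl.1 hv

lemma pcs_interior_conn (hp : p ∈ pcs H) {v v' : p.V}
    (hv : p.bd v = none) (hv' : p.bd v' = none) :
    (p.G.induce {u | p.bd u = none}).Reachable ⟨v, hv⟩ ⟨v', hv'⟩ := by
  rcases hp with ⟨a, ha, rfl⟩ | ⟨a, ℓ, ha, _, rfl⟩ | ⟨a, b, hne, ha, hb, _, rfl⟩ | ⟨c, hc, rfl⟩
  · exact absurd hv ha
  · exact absurd hv ha
  · cases v
    · exact absurd hv hb
    · exact absurd hv ha
  · set A : Set H.V := {y | H.bd y = none} with hA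
    have key : ∀ (x y : H.V) (_ : (within H.G A).Walk x y)
        (hx : x ∈ compIn H.G A c) (hy : y ∈ compIn H.G A c),
        ((pieceComp H c).G.induce {u | (pieceComp H c).bd u = none}).Reachable
          ⟨⟨x, Or.inl hx⟩, hx.1⟩ ⟨⟨y, Or.inl hy⟩, hy.1⟩ := by
      intro x y w
      induction w with
      | nil =>
        intro hx hy
        exact Reachable.refl _
      | @cons x z _ hadj pw ih =>
        intro hx hy
        obtain ⟨hxA, hzA, hGadj⟩ := hadj
        have hz : z ∈ compIn H.G A c := ⟨hzA, hx.2.trans (Adj.reachable ⟨hxA, hzA, hGadj⟩)⟩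
        have hedge : ((pieceComp H c).G.induce {u | (pieceComp H c).bd u = none}).Adj
            ⟨⟨x, Or.inl hx⟩, hx.1⟩ ⟨⟨z, Or.inl hz⟩, hz.1⟩ := by
          show (pieceComp H c).G.Adj _ _
          rw [pieceComp_adj]
          refine ⟨?_, Or.inl ⟨hGadj, Or.inl hxA⟩⟩
          intro h
          exact hGadj.ne (congrArg Subtype.val h)
        exact hedge.reachable.trans (ih hz hy)
    rcases v with ⟨x, hx | ⟨hxbd, _⟩⟩
    swap
    · exact absurd hv hxbd
    rcases v' with ⟨y, hy | ⟨hybd, _⟩⟩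
    swap
    · exact absurd hv' hybd
    obtain ⟨wx⟩ := hx.2
    obtain ⟨wy⟩ := hy.2
    have hcc : c ∈ compIn H.G A c := ⟨hc, Reachable.refl _⟩
    exact ((key c x wx hcc hx).symm.trans (key c y wy hcc hy))

end BLGraph

end PcsSection

section MainDefs

namespace BLGraph

variable {X : Type} {t : ℕ}

/-- Vertex of the glued host lying in the interior of the left part. -/
def Aside (GA GB : BLGraph X t) (x : (glue GA GB).V) : Prop :=
  ∃ a, x = Sum.inl a ∧ GA.bd a = none

/-- Vertex of the glued host lying in the interior of the right part. -/
def Bside (GA GB : BLGraph X t) (x : (glue GA GB).V) : Prop :=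
  ∃ b, x = emb2 GA GB b ∧ GB.bd b = none

lemma Aside.bd_none {GA GB : BLGraph X t} {x} (h : Aside GA GB x) :
    (glue GA GB).bd x = none := by
  obtain ⟨a, rfl, ha⟩ := h
  exact ha

lemma Bside.bd_none {GA GB : BLGraph X t} {x} (h : Bside GA GB x) :
    (glue GA GB).bd x = none := by
  obtain ⟨b, rfl, hb⟩ := h
  rw [glue_bd_emb2]
  exact hb

lemma not_Aside_Bside {GA GB : BLGraph X t} {x} (h : Aside GA GB x) (h' : Bside GA GB x) :
    False := by
  obtain ⟨a, rfl, ha⟩ := h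
  obtain ⟨b, hb, hb'⟩ := h'
  obtain ⟨i, hbi, hai⟩ := (emb2_eq_inl GA GB).mp hb.symm
  rw [ha] at hai
  simp at hai

lemma interior_side {GA GB : BLGraph X t} {x} (h : (glue GA GB).bd x = none) :
    Aside GA GB x ∨ Bside GA GB x := by
  rcases glue_vertex_cases GA GB x with ⟨a, rfl⟩ | ⟨b, rfl⟩
  · exact Or.inl ⟨a, rfl, h⟩
  · right
    refine ⟨b, rfl, ?_⟩
    rw [glue_bd_emb2] at h
    exact h

lemma adj_from_Aside {GA GB : BLGraph X t} {x y} (h : (glue GA GB).G.Adj x y)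
    (hx : Aside GA GB x) :
    ∃ a b, x = Sum.inl a ∧ y = Sum.inl b ∧ GA.G.Adj a b := by
  rw [glue_adj] at h
  rcases h.2 with ⟨a, b, hx', hy', hadj⟩ | ⟨a, b, hx', hy', hadj⟩
  · exact ⟨a, b, hx', hy', hadj⟩
  · exfalso
    obtain ⟨a₀, hxa, ha₀⟩ := hx
    rw [hxa] at hx'
    obtain ⟨i, _, hai⟩ := (emb2_eq_inl GA GB).mp (hx'.symm)
    rw [ha₀] at hai
    simp at hai

lemma adj_from_Bside {GA GB : BLGraph X t} {x y} (h : (glue GA GB).G.Adj x y)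
    (hx : Bside GA GB x) :
    ∃ a b, x = emb2 GA GB a ∧ y = emb2 GA GB b ∧ GB.G.Adj a b ∧ GB.bd a = none := by
  obtain ⟨a₀, rfl, ha₀⟩ := hx
  rw [glue_adj] at h
  rcases h.2 with ⟨a, b, hx', hy', hadj⟩ | ⟨a, b, hx', hy', hadj⟩
  · exfalso
    obtain ⟨i, hai, _⟩ := (emb2_eq_inl GA GB).mp hx'
    rw [ha₀] at hai
    simp at hai
  · obtain rfl : a₀ = a := emb2_inj GA GB hx'
    exact ⟨a₀, b, rfl, hy', hadj, ha₀⟩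

variable (GA GB : BLGraph X t) {K : BLGraph X t} {L : List (BLGraph X t)}

/-- "The pattern edge `x y` is realized inside `GA`". -/
def EAv (φ : K.V → Set (glue GA GB).V) (x y : K.V) : Prop :=
  ∃ a b, GA.G.Adj a b ∧ Sum.inl a ∈ φ x ∧ Sum.inl b ∈ φ y

/-- "The pattern label `ℓ` at `x` is realized inside `GA`". -/
def LAv (φ : K.V → Set (glue GA GB).V) (x : K.V) (ℓ : X) : Prop :=
  ∃ a, Sum.inl a ∈ φ x ∧ ℓ ∈ GA.lab a

/-- The piece at position `k` must be transferred to the `B`-side pattern. -/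
def NeedB (ρ : Rep K L) (φ : K.V → Set (glue GA GB).V) (k : Fin L.length) : Prop :=
  (∃ v, (L.get k).bd v = none ∧ ∃ y ∈ φ (ρ.ι k v), ¬ Aside GA GB y) ∨
  (∃ v v', (L.get k).G.Adj v v' ∧ (L.get k).bd v ≠ none ∧ (L.get k).bd v' ≠ none ∧
    ¬ EAv GA GB φ (ρ.ι k v) (ρ.ι k v')) ∨
  (∃ v ℓ, (L.get k).bd v ≠ none ∧ ℓ ∈ (L.get k).lab v ∧ ¬ LAv GA GB φ (ρ.ι k v) ℓ)

variable {PB : BLGraph X t} {LB : List (BLGraph X t)}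

/-- Correspondence between interior vertices of the transferred pattern `PB` and
interior vertices of the original pattern `K` (same piece, same vertex). -/
def Corr (ρ : Rep K L) (ρB : Rep PB LB) (φ : K.V → Set (glue GA GB).V)
    (x : PB.V) (w : K.V) : Prop :=
  PB.bd x = none ∧ ∃ (k : Fin LB.length) (k₀ : Fin L.length) (e : L.get k₀ = LB.get k)
    (v : (LB.get k).V), NeedB GA GB ρ φ k₀ ∧ x = ρB.ι k v ∧
    w = ρ.ι k₀ (cast (congrArg BLGraph.V e.symm) v)

/-- `x` (a vertex of `PB`) corresponds to `w` (a vertex of `K`). -/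
def LinkRel (ρ : Rep K L) (ρB : Rep PB LB) (φ : K.V → Set (glue GA GB).V)
    (x : PB.V) (w : K.V) : Prop :=
  (∃ i, PB.bd x = some i ∧ K.bd w = some i) ∨ Corr GA GB ρ ρB φ x w

/-- The branch sets for the model of `PB` in `GB`. -/
def traceFun (ρ : Rep K L) (ρB : Rep PB LB) (φ : K.V → Set (glue GA GB).V) :
    PB.V → Set GB.V :=
  fun x => {b | ∃ w, LinkRel GA GB ρ ρB φ x w ∧ emb2 GA GB b ∈ φ w}

/-- The branch sets for the reassembled model of `K` in `glue GA GB'`. -/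
def reFun (GB' : BLGraph X t) (ρ : Rep K L) (ρB : Rep PB LB)
    (φ : K.V → Set (glue GA GB).V) (ψ' : PB.V → Set GB'.V) :
    K.V → Set (glue GA GB').V :=
  fun w => (Sum.inl '' {a | Sum.inl a ∈ φ w}) ∪
    ((emb2 GA GB') '' {b | ∃ x, LinkRel GA GB ρ ρB φ x w ∧ b ∈ ψ' x})

end BLGraph

end MainDefs

section ModelFacts

namespace BLGraph

variable {X : Type} {t : ℕ} {GA GB H K : BLGraph X t} {L : List (BLGraph X t)}
  {φ : K.V → Set (glue GA GB).V}

lemma Bside_not_inl {a : GA.V} (h : Bside GA GB (Sum.inl a)) : False := by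
  obtain ⟨b, hb, hbd⟩ := h
  obtain ⟨i, hbi, _⟩ := (emb2_eq_inl GA GB).mp hb.symm
  rw [hbd] at hbi
  simp at hbi

lemma branch_interior (hmod : BMinorModel K (glue GA GB) φ) {w y}
    (hw : K.bd w = none) (hy : y ∈ φ w) : (glue GA GB).bd y = none := by
  rcases h : (glue GA GB).bd y with _ | i
  · rfl
  · exact absurd (hmod.2.2.1 w y hy i h) (by rw [hw]; simp)

lemma bd_vertex_mem (hmod : BMinorModel K (glue GA GB) φ) {w i y} (hw : K.bd w = some i)
    (hy : (glue GA GB).bd y = some i) : y ∈ φ w := by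
  obtain ⟨a, ha, hai⟩ := hmod.2.2.2 w i hw
  have : y = a := (glue GA GB).inj y a i hy hai
  rw [this]
  exact ha

lemma branch_side (hmod : BMinorModel K (glue GA GB) φ) {w}
    (hw : K.bd w = none) :
    (∀ y ∈ φ w, Aside GA GB y) ∨ (∀ y ∈ φ w, Bside GA GB y) := by
  by_cases hall : ∀ y ∈ φ w, Aside GA GB y
  · exact Or.inl hall
  push_neg at hall
  obtain ⟨y, hy, hyA⟩ := hall
  right
  intro z hz
  by_contra hzB
  have hzA : Aside GA GB z := by
    rcases interior_side (branch_interior hmod hw hz) with h | h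
    · exact h
    · exact absurd h hzB
  obtain ⟨c, d, hcS, hdS, hcT, hdT, hadj⟩ :=
    conn_crossing (T := {x | Aside GA GB x}) (hmod.1.2.1 w) hz hy hzA hyA
  obtain ⟨a, b, rfl, rfl, hGA⟩ := adj_from_Aside hadj hcT
  apply hdT
  rcases interior_side (branch_interior hmod hw hdS) with h | h
  · exact h
  · exact absurd h Bside_not_inl

lemma GBhas_of_Bside (hmod : BMinorModel K (glue GA GB) φ) {w i y}
    (hy : y ∈ φ w) (hyB : Bside GA GB y) (hw : K.bd w = some i) :
    ∃ b, GB.bd b = some i := by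
  obtain ⟨a, ha, hai⟩ := hmod.2.2.2 w i hw
  have haT : ¬ Bside GA GB a := by
    intro hB
    rw [hB.bd_none] at hai
    simp at hai
  obtain ⟨c, d, hcS, hdS, hcT, hdT, hadj⟩ :=
    conn_crossing (T := {x | Bside GA GB x}) (hmod.1.2.1 w) hy ha hyB haT
  obtain ⟨c₀, d₀, rfl, hd, hGB, _⟩ := adj_from_Bside hadj hcT
  rcases hbd : GB.bd d₀ with _ | j
  · exact absurd ⟨d₀, hd, hbd⟩ hdT
  · have hWd : (glue GA GB).bd d = some j := by rw [hd, glue_bd_emb2, hbd]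
    have h2 := hmod.2.2.1 w d hdS j hWd
    rw [hw] at h2
    obtain rfl : i = j := by simpa using h2
    exact ⟨d₀, hbd⟩

lemma side_propagate (ρ : Rep K L) (hLpcs : ∀ p ∈ L, p ∈ pcs H)
    (hmod : BMinorModel K (glue GA GB) φ) {k : Fin L.length} {v v' : (L.get k).V}
    (hv : (L.get k).bd v = none) (hv' : (L.get k).bd v' = none)
    (hB : ∀ y ∈ φ (ρ.ι k v), Bside GA GB y) : ∀ y ∈ φ (ρ.ι k v'), Bside GA GB y := by
  have hpcs : L.get k ∈ pcs H := hLpcs _ (List.get_mem L k)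
  have key : ∀ (a b : ↥{u | (L.get k).bd u = none})
      (_ : ((L.get k).G.induce {u | (L.get k).bd u = none}).Walk a b),
      (∀ y ∈ φ (ρ.ι k a.1), Bside GA GB y) → ∀ y ∈ φ (ρ.ι k b.1), Bside GA GB y := by
    intro a b w
    induction w with
    | nil => exact fun h => h
    | @cons a c _ hadj pw ih =>
      intro hBa
      apply ih
      have hKadj : K.G.Adj (ρ.ι k a.1) (ρ.ι k c.1) :=
        (ρ.iadj _ _).mpr ⟨k, a.1, c.1, rfl, rfl, hadj⟩
      obtain ⟨y, hy, z, hz, hWadj⟩ := hmod.1.2.2.2 _ _ hKadj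
      have hyB : Bside GA GB y := hBa y hy
      obtain ⟨y₀, z₀, _, hzeq, _, _⟩ := adj_from_Bside hWadj hyB
      have hKc : K.bd (ρ.ι k c.1) = none := by rw [ρ.ibd]; exact c.2
      rcases branch_side hmod hKc with hA | hB'
      · exfalso
        obtain ⟨a₀, hzi, ha₀⟩ := hA z hz
        rw [hzeq] at hzi
        obtain ⟨i, _, hai⟩ := (emb2_eq_inl GA GB).mp hzi
        rw [ha₀] at hai
        simp at hai
      · exact hB'
  obtain ⟨w⟩ := pcs_interior_conn hpcs hv hv'
  exact key ⟨v, hv⟩ ⟨v', hv'⟩ w hB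

lemma NeedB_GBhas (ρ : Rep K L) (hLpcs : ∀ p ∈ L, p ∈ pcs H)
    (hmod : BMinorModel K (glue GA GB) φ) {k : Fin L.length}
    (hN : NeedB GA GB ρ φ k) {v : (L.get k).V} {i : Fin t}
    (hv : (L.get k).bd v = some i) : ∃ b, GB.bd b = some i := by
  have hpcs : L.get k ∈ pcs H := hLpcs _ (List.get_mem L k)
  have hKbd : K.bd (ρ.ι k v) = some i := by rw [ρ.ibd]; exact hv
  -- helper: a `B`-side witness in the branch set of any boundary pattern vertex suffices
  have finish : ∀ y ∈ φ (ρ.ι k v), ∀ b₀, y = emb2 GA GB b₀ → ∃ b, GB.bd b = some i := by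
    intro y hy b₀ hyeq
    rcases hbd : GB.bd b₀ with _ | j
    · exact GBhas_of_Bside hmod hy (⟨b₀, hyeq, hbd⟩ : Bside GA GB y) hKbd
    · have hWy : (glue GA GB).bd y = some j := by rw [hyeq, glue_bd_emb2, hbd]
      have h2 := hmod.2.2.1 _ y hy j hWy
      rw [hKbd] at h2
      obtain rfl : i = j := by simpa using h2
      exact ⟨b₀, hbd⟩
  rcases hN with ⟨u, hu, y, hy, hyA⟩ | ⟨u, u', hadj, hu, hu', hE⟩ | ⟨u, ℓ, hu, hl, hL⟩
  · -- interior clause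
    have hBu : ∀ z ∈ φ (ρ.ι k u), Bside GA GB z := by
      have hKu : K.bd (ρ.ι k u) = none := by rw [ρ.ibd]; exact hu
      rcases branch_side hmod hKu with hA | hB
      · exact absurd (hA y hy) hyA
      · exact hB
    obtain ⟨u', hu', hadj⟩ := pcs_bd_neighbor hpcs hv u hu
    have hBu' : ∀ z ∈ φ (ρ.ι k u'), Bside GA GB z := side_propagate ρ hLpcs hmod hu hu' hBu
    have hKadj : K.G.Adj (ρ.ι k v) (ρ.ι k u') := (ρ.iadj _ _).mpr ⟨k, v, u', rfl, rfl, hadj⟩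
    obtain ⟨a, ha, b, hb, hWadj⟩ := hmod.1.2.2.2 _ _ hKadj
    have hbB : Bside GA GB b := hBu' b hb
    obtain ⟨b₀, a₀, _, ha', _, _⟩ := adj_from_Bside hWadj.symm hbB
    exact finish a ha a₀ ha'
  · -- edge clause
    obtain ⟨hallbd, _, _, hcover⟩ := pcs_bdbd_edge hpcs hadj hu hu'
    have hKadj : K.G.Adj (ρ.ι k u) (ρ.ι k u') := (ρ.iadj _ _).mpr ⟨k, u, u', rfl, rfl, hadj⟩
    obtain ⟨a, ha, b, hb, hWadj⟩ := hmod.1.2.2.2 _ _ hKadj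
    rw [glue_adj] at hWadj
    rcases hWadj.2 with ⟨a₀, b₀, haeq, hbeq, hGA⟩ | ⟨a₀, b₀, haeq, hbeq, hGB⟩
    · exact absurd ⟨a₀, b₀, hGA, haeq ▸ ha, hbeq ▸ hb⟩ hE
    · rcases hcover v with rfl | rfl
      · exact finish a ha a₀ haeq
      · exact finish b hb b₀ hbeq
  · -- label clause
    obtain ⟨hallu, _, _, _⟩ := pcs_bd_label hpcs hu hl
    obtain rfl : v = u := hallu v
    have hKl : ℓ ∈ K.lab (ρ.ι k v) := (ρ.ilab _ _).mpr ⟨k, v, rfl, hl⟩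
    obtain ⟨a, ha, hla⟩ := hmod.2.1 _ ℓ hKl
    rcases (glue_lab GA GB).mp hla with ⟨a₀, haeq, hlab⟩ | ⟨b₀, haeq, hlab⟩
    · exact absurd ⟨a₀, haeq ▸ ha, hlab⟩ hL
    · exact finish a ha b₀ haeq

end BLGraph

end ModelFacts

section CorrFacts

namespace BLGraph

variable {X : Type} {t : ℕ} {GA GB H K PB : BLGraph X t} {L LB : List (BLGraph X t)}
  {φ : K.V → Set (glue GA GB).V} {ρ : Rep K L} {ρB : Rep PB LB}

lemma Corr_bd {x w} (h : Corr GA GB ρ ρB φ x w) : PB.bd x = none ∧ K.bd w = none := by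
  obtain ⟨hx, k, k₀, e, v, hN, rfl, rfl⟩ := h
  refine ⟨hx, ?_⟩
  rw [ρB.ibd] at hx
  rw [ρ.ibd, cast_bd e.symm]
  exact hx

lemma Corr_func (hLnodup : L.Nodup) {x w w'}
    (h : Corr GA GB ρ ρB φ x w) (h' : Corr GA GB ρ ρB φ x w') : w = w' := by
  obtain ⟨hx, k, k₀, e, v, hN, hxe, rfl⟩ := h
  obtain ⟨_, k', k₀', e', v', hN', hxe', rfl⟩ := h'
  rw [hxe, ρB.ibd] at hx
  have heq : ρB.ι k v = ρB.ι k' v' := hxe.symm.trans hxe'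
  have hkk : k = k' := by
    by_contra hne
    exact ρB.int_diff k v k' v' hx hne heq
  subst hkk
  obtain rfl : v = v' := ρB.int_same k v v' hx heq
  have hk0 : k₀ = k₀' := by
    apply (List.Nodup.get_inj_iff hLnodup).mp
    rw [e, e']
  subst hk0
  rw [Subsingleton.elim e e']

lemma Corr_inj (hLnodup : L.Nodup) (hLBnodup : LB.Nodup) {x x' w}
    (h : Corr GA GB ρ ρB φ x w) (h' : Corr GA GB ρ ρB φ x' w) : x = x' := by
  obtain ⟨hx, k, k₀, e, v, hN, rfl, hwe⟩ := h
  obtain ⟨hx', k', k₀', e', v', hN', rfl, hwe'⟩ := h'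
  rw [ρB.ibd] at hx hx'
  have hbd0 : (L.get k₀).bd (cast (congrArg BLGraph.V e.symm) v) = none := by
    rw [cast_bd e.symm]; exact hx
  have heq := hwe.symm.trans hwe'
  have hkk : k₀ = k₀' := by
    by_contra hne
    exact ρ.int_diff _ _ _ _ hbd0 hne heq
  subst hkk
  have hvv := ρ.int_same _ _ _ hbd0 heq
  have hk : k = k' := by
    apply (List.Nodup.get_inj_iff hLBnodup).mp
    rw [← e, ← e']
  subst hk
  have he : e = e' := Subsingleton.elim _ _
  subst he
  obtain rfl : v = v' := (cast_inj _).mp hvv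
  rfl

lemma Corr_ex (hLBmem : ∀ q, q ∈ LB ↔
      (∃ i : Fin t, (∃ w, K.bd w = some i) ∧ (∃ b, GB.bd b = some i) ∧
        ∃ a, H.bd a = some i ∧ q = pieceBd H a) ∨
      (∃ k, NeedB GA GB ρ φ k ∧ q = L.get k))
    {x} (hx : PB.bd x = none) : ∃ w, Corr GA GB ρ ρB φ x w := by
  obtain ⟨k, v, rfl⟩ := ρB.surj x
  have hbdv : (LB.get k).bd v = none := by rw [← ρB.ibd]; exact hx
  rcases (hLBmem _).mp (List.get_mem LB k) with ⟨i, _, _, a, hai, hq⟩ | ⟨k₀, hN, hq⟩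
  · exfalso
    have h1 := cast_bd hq v
    rw [hbdv] at h1
    have h2 : H.bd a = none := h1
    rw [hai] at h2
    simp at h2
  · exact ⟨ρ.ι k₀ (cast (congrArg BLGraph.V hq) v), hx, k, k₀, hq.symm, v, hN, rfl, rfl⟩

lemma Corr_back (hLBmem : ∀ q, q ∈ LB ↔
      (∃ i : Fin t, (∃ w, K.bd w = some i) ∧ (∃ b, GB.bd b = some i) ∧
        ∃ a, H.bd a = some i ∧ q = pieceBd H a) ∨
      (∃ k, NeedB GA GB ρ φ k ∧ q = L.get k))
    {k₀ : Fin L.length} (hN : NeedB GA GB ρ φ k₀) {v₀}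
    (hv₀ : (L.get k₀).bd v₀ = none) : ∃ x, Corr GA GB ρ ρB φ x (ρ.ι k₀ v₀) := by
  have hmem : L.get k₀ ∈ LB := (hLBmem _).mpr (Or.inr ⟨k₀, hN, rfl⟩)
  obtain ⟨k, hk⟩ := List.mem_iff_get.mp hmem
  refine ⟨ρB.ι k (cast (congrArg BLGraph.V hk.symm) v₀), ?_, k, k₀, hk.symm, _, hN, rfl, ?_⟩
  · rw [ρB.ibd, cast_bd hk.symm]
    exact hv₀
  · congr 1
    rw [cast_cast]
    exact (cast_eq_iff_heq.mpr HEq.rfl).symm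

lemma Corr_Bside (hLpcs : ∀ p ∈ L, p ∈ pcs H) (hmod : BMinorModel K (glue GA GB) φ)
    {x w} (h : Corr GA GB ρ ρB φ x w) : ∀ y ∈ φ w, Bside GA GB y := by
  obtain ⟨hx, k, k₀, e, v, hN, rfl, rfl⟩ := h
  rw [ρB.ibd] at hx
  have hv₀ : (L.get k₀).bd (cast (congrArg BLGraph.V e.symm) v) = none := by
    rw [cast_bd e.symm]; exact hx
  have hpcs : L.get k₀ ∈ pcs H := hLpcs _ (List.get_mem L k₀)
  rcases hN with ⟨u, hu, y, hy, hyA⟩ | ⟨u, u', hadj, hu, hu', _⟩ | ⟨u, ℓ, hu, hl, _⟩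
  · have hBu : ∀ z ∈ φ (ρ.ι k₀ u), Bside GA GB z := by
      have hKu : K.bd (ρ.ι k₀ u) = none := by rw [ρ.ibd]; exact hu
      rcases branch_side hmod hKu with hA | hB
      · exact absurd (hA y hy) hyA
      · exact hB
    exact side_propagate ρ hLpcs hmod hu hv₀ hBu
  · rcases (pcs_interior_structure hpcs _ hv₀).1 u u' hadj with h | h
    · exact absurd h hu
    · exact absurd h hu'
  · exact absurd ((pcs_interior_structure hpcs _ hv₀).2 u ℓ hl) hu

lemma PB_bd_props (ρB : Rep PB LB) (hLpcs : ∀ p ∈ L, p ∈ pcs H) (hmod : BMinorModel K (glue GA GB) φ)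
    (hLBmem : ∀ q, q ∈ LB ↔
      (∃ i : Fin t, (∃ w, K.bd w = some i) ∧ (∃ b, GB.bd b = some i) ∧
        ∃ a, H.bd a = some i ∧ q = pieceBd H a) ∨
      (∃ k, NeedB GA GB ρ φ k ∧ q = L.get k))
    {x : PB.V} {i : Fin t} (hx : PB.bd x = some i) :
    (∃ w, K.bd w = some i) ∧ (∃ b, GB.bd b = some i) := by
  obtain ⟨k, v, rfl⟩ := ρB.surj x
  have hbdv : (LB.get k).bd v = some i := by rw [← ρB.ibd]; exact hx
  rcases (hLBmem _).mp (List.get_mem LB k) with ⟨j, hKj, hGBj, a, hai, hq⟩ | ⟨k₀, hN, hq⟩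
  · have h1 : (pieceBd H a).bd (cast (congrArg BLGraph.V hq) v) = some i := by
      rw [cast_bd hq]; exact hbdv
    have h2 : H.bd a = some i := h1
    rw [hai] at h2
    obtain rfl : j = i := by simpa using h2
    exact ⟨hKj, hGBj⟩
  · have h1 : (L.get k₀).bd (cast (congrArg BLGraph.V hq) v) = some i := by
      rw [cast_bd hq]; exact hbdv
    exact ⟨⟨ρ.ι k₀ _, by rw [ρ.ibd]; exact h1⟩, NeedB_GBhas ρ hLpcs hmod hN h1⟩

end BLGraph

end CorrFacts

section TraceSection

namespace BLGraph

variable {X : Type} {t : ℕ} {GA GB H K PB : BLGraph X t} {L LB : List (BLGraph X t)}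
  {φ : K.V → Set (glue GA GB).V}

lemma EAv_symm {x y : K.V} (h : EAv GA GB φ x y) : EAv GA GB φ y x := by
  obtain ⟨a, b, hadj, ha, hb⟩ := h
  exact ⟨b, a, hadj.symm, hb, ha⟩

lemma trace_model (ρ : Rep K L) (ρB : Rep PB LB)
    (hLpcs : ∀ p ∈ L, p ∈ pcs H) (hLnodup : L.Nodup) (hLBnodup : LB.Nodup)
    (hmod : BMinorModel K (glue GA GB) φ)
    (hLBmem : ∀ q, q ∈ LB ↔
      (∃ i : Fin t, (∃ w, K.bd w = some i) ∧ (∃ b, GB.bd b = some i) ∧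
        ∃ a, H.bd a = some i ∧ q = pieceBd H a) ∨
      (∃ k, NeedB GA GB ρ φ k ∧ q = L.get k)) :
    BMinorModel PB GB (traceFun GA GB ρ ρB φ) := by
  set F := traceFun GA GB ρ ρB φ with hF
  have hmem : ∀ x b, b ∈ F x ↔ ∃ w, LinkRel GA GB ρ ρB φ x w ∧ emb2 GA GB b ∈ φ w :=
    fun x b => Iff.rfl
  -- description of boundary branch sets
  have hFbd : ∀ x i, PB.bd x = some i → ∀ w, K.bd w = some i →
      F x = {b | emb2 GA GB b ∈ φ w} := by
    intro x i hx w hw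
    ext b
    constructor
    · rintro ⟨w', hL, hb⟩
      rcases hL with ⟨i', hx', hw'⟩ | hC
      · obtain rfl : i = i' := by rw [hx] at hx'; exact Option.some_injective _ hx'
        obtain rfl : w' = w := K.inj w' w i hw' hw
        exact hb
      · rw [(Corr_bd hC).1] at hx
        simp at hx
    · intro hb
      exact ⟨w, Or.inl ⟨i, hx, hw⟩, hb⟩
  -- description of interior branch sets
  have hFint : ∀ x w, Corr GA GB ρ ρB φ x w → F x = {b | emb2 GA GB b ∈ φ w} := by
    intro x w hC
    ext b
    constructor
    · rintro ⟨w', hL, hb⟩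
      rcases hL with ⟨i', hx', hw'⟩ | hC'
      · rw [(Corr_bd hC).1] at hx'; simp at hx'
      · rwa [Corr_func hLnodup hC' hC] at hb
    · intro hb
      exact ⟨w, Or.inr hC, hb⟩
  -- boundary branch sets contain the boundary vertex of matching index
  have hFbdmem : ∀ x i, PB.bd x = some i → ∃ b ∈ F x, GB.bd b = some i := by
    intro x i hx
    obtain ⟨⟨w, hw⟩, ⟨bi, hbi⟩⟩ := PB_bd_props ρB hLpcs hmod hLBmem hx
    have he : (glue GA GB).bd (emb2 GA GB bi) = some i := by rw [glue_bd_emb2, hbi]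
    have hvS : emb2 GA GB bi ∈ φ w := bd_vertex_mem hmod hw he
    exact ⟨bi, ⟨w, Or.inl ⟨i, hx, hw⟩, hvS⟩, hbi⟩
  refine ⟨⟨?_, ?_, ?_, ?_⟩, ?_, ?_, ?_⟩
  · -- nonempty
    intro x
    rcases hx : PB.bd x with _ | i
    · obtain ⟨w, hC⟩ := Corr_ex hLBmem hx
      obtain ⟨y, hy⟩ := hmod.1.1 w
      obtain ⟨y₀, hyeq, _⟩ := Corr_Bside hLpcs hmod hC y hy
      exact ⟨y₀, w, Or.inr hC, hyeq ▸ hy⟩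
    · obtain ⟨b, hb, _⟩ := hFbdmem x i hx
      exact ⟨b, hb⟩
  · -- connectivity
    intro x
    rcases hx : PB.bd x with _ | i
    · -- interior
      obtain ⟨w, hC⟩ := Corr_ex hLBmem hx
      have hB := Corr_Bside hLpcs hmod hC
      rw [hFint x w hC]
      have hsub : φ w ⊆ Set.range (emb2 GA GB) := by
        intro y hy
        obtain ⟨y₀, hyeq, _⟩ := hB y hy
        exact ⟨y₀, hyeq.symm⟩
      apply conn_pullback (emb2 GA GB)
      · have himg : emb2 GA GB '' {b | emb2 GA GB b ∈ φ w} = φ w := by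
          rw [show {b | emb2 GA GB b ∈ φ w} = emb2 GA GB ⁻¹' (φ w) from rfl,
            Set.image_preimage_eq_inter_range, Set.inter_eq_self_of_subset_left hsub]
        rw [himg]
        exact hmod.1.2.1 w
      · obtain ⟨y, hy⟩ := hmod.1.1 w
        obtain ⟨y₀, hyeq, _⟩ := hB y hy
        exact ⟨y₀, show emb2 GA GB y₀ ∈ φ w by rw [← hyeq]; exact hy⟩
      · exact (emb2_inj GA GB).injOn
      · intro a ha b hb hadj
        apply emb2_adj_reflect GA GB hadj
        left
        obtain ⟨a₀, haeq, ha₀⟩ := hB _ ha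
        obtain rfl : a₀ = a := emb2_inj GA GB haeq.symm
        exact ha₀
    · -- boundary
      obtain ⟨⟨w, hw⟩, ⟨bi, hbi⟩⟩ := PB_bd_props ρB hLpcs hmod hLBmem hx
      have he : (glue GA GB).bd (emb2 GA GB bi) = some i := by rw [glue_bd_emb2, hbi]
      have hvS : emb2 GA GB bi ∈ φ w := bd_vertex_mem hmod hw he
      rw [hFbd x i hx w hw]
      have hcut : ConnOn (glue GA GB).G (φ w ∩ Set.range (emb2 GA GB)) := by
        apply conn_cut (T := Set.range (emb2 GA GB)) (hmod.1.2.1 w) hvS ⟨bi, rfl⟩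
        intro x' y' hx'S hy'S hx'T hx'ne hadj
        obtain ⟨x₀, rfl⟩ := hx'T
        rcases hb : GB.bd x₀ with _ | j
        · obtain ⟨_, y₀, _, hyeq, _, _⟩ := adj_from_Bside hadj ⟨x₀, rfl, hb⟩
          exact ⟨y₀, hyeq.symm⟩
        · exfalso
          have hWx : (glue GA GB).bd (emb2 GA GB x₀) = some j := by rw [glue_bd_emb2, hb]
          have h2 := hmod.2.2.1 w _ hx'S j hWx
          rw [hw] at h2
          obtain rfl : i = j := by simpa using h2
          exact hx'ne ((glue GA GB).inj _ _ i hWx he)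
      apply conn_pullback (emb2 GA GB)
      · have himg : emb2 GA GB '' {b | emb2 GA GB b ∈ φ w} =
            φ w ∩ Set.range (emb2 GA GB) := by
          rw [show {b | emb2 GA GB b ∈ φ w} = emb2 GA GB ⁻¹' (φ w) from rfl,
            Set.image_preimage_eq_inter_range]
        rw [himg]
        exact hcut
      · exact ⟨bi, hvS⟩
      · exact (emb2_inj GA GB).injOn
      · intro a ha b hb hadj
        apply emb2_adj_reflect GA GB hadj
        rcases hGa : GB.bd a with _ | j
        · exact Or.inl rfl
        rcases hGb : GB.bd b with _ | j'
        · exact Or.inr rfl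
        exfalso
        have hWa : (glue GA GB).bd (emb2 GA GB a) = some j := by rw [glue_bd_emb2, hGa]
        have hWb : (glue GA GB).bd (emb2 GA GB b) = some j' := by rw [glue_bd_emb2, hGb]
        have h2 := hmod.2.2.1 w _ ha j hWa
        have h3 := hmod.2.2.1 w _ hb j' hWb
        rw [hw] at h2 h3
        obtain rfl : i = j := by simpa using h2
        obtain rfl : i = j' := by simpa using h3
        have : emb2 GA GB a = emb2 GA GB b := (glue GA GB).inj _ _ i hWa hWb
        obtain rfl : a = b := emb2_inj GA GB this
        exact (glue GA GB).G.loopless.irrefl _ hadj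
  · -- disjointness
    intro x x' hne
    rw [Set.disjoint_left]
    rintro b ⟨w, hL, hb⟩ ⟨w', hL', hb'⟩
    obtain rfl : w = w' := by
      by_contra hww
      exact Set.disjoint_left.mp (hmod.1.2.2.1 w w' hww) hb hb'
    rcases hL with ⟨i, hx1, hw1⟩ | hC
    · rcases hL' with ⟨i', hx1', hw1'⟩ | hC'
      · obtain rfl : i = i' := by rw [hw1] at hw1'; exact Option.some_injective _ hw1'
        exact hne (PB.inj x x' i hx1 hx1')
      · rw [(Corr_bd hC').2] at hw1; simp at hw1
    · rcases hL' with ⟨i', hx1', hw1'⟩ | hC'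
      · rw [(Corr_bd hC).2] at hw1'; simp at hw1'
      · exact hne (Corr_inj hLnodup hLBnodup hC hC')
  · -- edges
    intro x y hadjP
    obtain ⟨k, v, v', hxe, hye, hpadj⟩ := (ρB.iadj x y).mp hadjP
    subst hxe; subst hye
    rcases (hLBmem _).mp (List.get_mem LB k) with ⟨i, _, _, a, hai, hq⟩ | ⟨k₀, hN, hq⟩
    · exact absurd ((cast_adj hq v v').mpr hpadj) pieceBd_not_adj
    · have hpcs : L.get k₀ ∈ pcs H := hLpcs _ (List.get_mem L k₀)
      set v₀ := cast (congrArg BLGraph.V hq) v with hv₀def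
      set v₀' := cast (congrArg BLGraph.V hq) v' with hv₀'def
      have hpadj₀ : (L.get k₀).G.Adj v₀ v₀' := (cast_adj hq v v').mpr hpadj
      have hKadj : K.G.Adj (ρ.ι k₀ v₀) (ρ.ι k₀ v₀') :=
        (ρ.iadj _ _).mpr ⟨k₀, v₀, v₀', rfl, rfl, hpadj₀⟩
      have hbdx : PB.bd (ρB.ι k v) = (L.get k₀).bd v₀ := by
        rw [ρB.ibd, ← cast_bd hq v]
      have hbdy : PB.bd (ρB.ι k v') = (L.get k₀).bd v₀' := by
        rw [ρB.ibd, ← cast_bd hq v']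
      have hCorrx : (L.get k₀).bd v₀ = none → Corr GA GB ρ ρB φ (ρB.ι k v) (ρ.ι k₀ v₀) :=
        fun h0 => ⟨hbdx.trans h0, k, k₀, hq.symm, v, hN, rfl, rfl⟩
      have hCorry : (L.get k₀).bd v₀' = none → Corr GA GB ρ ρB φ (ρB.ι k v') (ρ.ι k₀ v₀') :=
        fun h0 => ⟨hbdy.trans h0, k, k₀, hq.symm, v', hN, rfl, rfl⟩
      have hLinkx : LinkRel GA GB ρ ρB φ (ρB.ι k v) (ρ.ι k₀ v₀) := by
        rcases h0 : (L.get k₀).bd v₀ with _ | i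
        · exact Or.inr (hCorrx h0)
        · exact Or.inl ⟨i, hbdx.trans h0, by rw [ρ.ibd]; exact h0⟩
      have hLinky : LinkRel GA GB ρ ρB φ (ρB.ι k v') (ρ.ι k₀ v₀') := by
        rcases h0 : (L.get k₀).bd v₀' with _ | i
        · exact Or.inr (hCorry h0)
        · exact Or.inl ⟨i, hbdy.trans h0, by rw [ρ.ibd]; exact h0⟩
      obtain ⟨a1, ha1, b1, hb1, hWadj⟩ := hmod.1.2.2.2 _ _ hKadj
      rcases h0 : (L.get k₀).bd v₀ with _ | i
      · -- x interior
        have haB := Corr_Bside hLpcs hmod (hCorrx h0) a1 ha1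
        obtain ⟨a₀, b₀, ha₀, hb₀, hGB, _⟩ := adj_from_Bside hWadj haB
        exact ⟨a₀, ⟨_, hLinkx, by rw [← ha₀]; exact ha1⟩,
          b₀, ⟨_, hLinky, by rw [← hb₀]; exact hb1⟩, hGB⟩
      rcases h0' : (L.get k₀).bd v₀' with _ | j
      · -- y interior
        have hbB := Corr_Bside hLpcs hmod (hCorry h0') b1 hb1
        obtain ⟨b₀, a₀, hb₀, ha₀, hGB, _⟩ := adj_from_Bside hWadj.symm hbB
        exact ⟨a₀, ⟨_, hLinkx, by rw [← ha₀]; exact ha1⟩,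
          b₀, ⟨_, hLinky, by rw [← hb₀]; exact hb1⟩, hGB.symm⟩
      · -- both boundary
        obtain ⟨hallbd, hnolab, hedges, _⟩ :=
          pcs_bdbd_edge hpcs hpadj₀ (by rw [h0]; simp) (by rw [h0']; simp)
        have hnE : ¬ EAv GA GB φ (ρ.ι k₀ v₀) (ρ.ι k₀ v₀') := by
          rcases hN with ⟨u, hu, _⟩ | ⟨u, u', huadj, hu, hu', hE⟩ | ⟨u, ℓ, hu, hl, _⟩
          · exact absurd hu (hallbd u)
          · rcases hedges u u' huadj with ⟨rfl, rfl⟩ | ⟨rfl, rfl⟩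
            · exact hE
            · exact fun hE2 => hE (EAv_symm hE2)
          · exact absurd hl (hnolab u ℓ)
        rw [glue_adj] at hWadj
        rcases hWadj.2 with ⟨a₀, b₀, haeq, hbeq, hGA⟩ | ⟨a₀, b₀, haeq, hbeq, hGB⟩
        · exact absurd ⟨a₀, b₀, hGA, by rw [← haeq]; exact ha1, by rw [← hbeq]; exact hb1⟩ hnE
        · exact ⟨a₀, ⟨_, hLinkx, by rw [← haeq]; exact ha1⟩,
            b₀, ⟨_, hLinky, by rw [← hbeq]; exact hb1⟩, hGB⟩
  · -- labels
    intro x ℓ hlx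
    obtain ⟨k, v, hxe, hlv⟩ := (ρB.ilab x ℓ).mp hlx
    subst hxe
    rcases (hLBmem _).mp (List.get_mem LB k) with ⟨i, _, _, a, hai, hq⟩ | ⟨k₀, hN, hq⟩
    · exfalso
      have h1 : ℓ ∈ (pieceBd H a).lab (cast (congrArg BLGraph.V hq) v) := by
        rw [cast_lab hq]; exact hlv
      exact Set.notMem_empty ℓ h1
    · have hpcs : L.get k₀ ∈ pcs H := hLpcs _ (List.get_mem L k₀)
      set v₀ := cast (congrArg BLGraph.V hq) v with hv₀def
      have hl₀ : ℓ ∈ (L.get k₀).lab v₀ := by rw [cast_lab hq]; exact hlv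
      have hKl : ℓ ∈ K.lab (ρ.ι k₀ v₀) := (ρ.ilab _ _).mpr ⟨k₀, v₀, rfl, hl₀⟩
      have hbdx : PB.bd (ρB.ι k v) = (L.get k₀).bd v₀ := by rw [ρB.ibd, ← cast_bd hq v]
      obtain ⟨a1, ha1, hla1⟩ := hmod.2.1 _ ℓ hKl
      rcases h0 : (L.get k₀).bd v₀ with _ | i
      · have hCx : Corr GA GB ρ ρB φ (ρB.ι k v) (ρ.ι k₀ v₀) :=
          ⟨hbdx.trans h0, k, k₀, hq.symm, v, hN, rfl, rfl⟩
        have haB := Corr_Bside hLpcs hmod hCx a1 ha1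
        rcases (glue_lab GA GB).mp hla1 with ⟨a₀, haeq, hlab⟩ | ⟨b₀, haeq, hlab⟩
        · exact absurd (haeq ▸ haB) Bside_not_inl
        · exact ⟨b₀, ⟨_, Or.inr hCx, by rw [← haeq]; exact ha1⟩, hlab⟩
      · obtain ⟨hallu, hlabu, hnoadj, hallbd⟩ :=
          pcs_bd_label hpcs (v := v₀) (by rw [h0]; simp) hl₀
        have hnL : ¬ LAv GA GB φ (ρ.ι k₀ v₀) ℓ := by
          rcases hN with ⟨u, hu, _⟩ | ⟨u, u', huadj, _, _, _⟩ | ⟨u, ℓ', hu, hl', hLA⟩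
          · exact absurd hu (hallbd u)
          · exact absurd huadj (hnoadj u u')
          · obtain rfl : u = v₀ := hallu u
            obtain rfl : ℓ' = ℓ := hlabu v₀ ℓ' hl'
            exact hLA
        rcases (glue_lab GA GB).mp hla1 with ⟨a₀, haeq, hlab⟩ | ⟨b₀, haeq, hlab⟩
        · exact absurd ⟨a₀, by rw [← haeq]; exact ha1, hlab⟩ hnL
        · exact ⟨b₀, ⟨ρ.ι k₀ v₀, Or.inl ⟨i, hbdx.trans h0, by rw [ρ.ibd]; exact h0⟩,
            by rw [← haeq]; exact ha1⟩, hlab⟩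
  · -- boundary condition 3
    rintro x b ⟨w, hL, hb⟩ j hbj
    have hWb : (glue GA GB).bd (emb2 GA GB b) = some j := by rw [glue_bd_emb2, hbj]
    have hKw := hmod.2.2.1 w _ hb j hWb
    rcases hL with ⟨i, hx1, hw1⟩ | hC
    · rw [hw1] at hKw
      obtain rfl : i = j := by simpa using hKw
      exact hx1
    · rw [(Corr_bd hC).2] at hKw
      simp at hKw
  · -- boundary condition 4
    intro x i hx
    exact hFbdmem x i hx

end BLGraph

end TraceSection

section ReassembleSection

namespace BLGraph

variable {X : Type} {t : ℕ} {GA GB H K PB : BLGraph X t} {L LB : List (BLGraph X t)}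
  {φ : K.V → Set (glue GA GB).V}

lemma reassemble (ρ : Rep K L) (ρB : Rep PB LB)
    (hLpcs : ∀ p ∈ L, p ∈ pcs H) (hLnodup : L.Nodup) (hLBnodup : LB.Nodup)
    (hmod : BMinorModel K (glue GA GB) φ)
    (hLBmem : ∀ q, q ∈ LB ↔
      (∃ i : Fin t, (∃ w, K.bd w = some i) ∧ (∃ b, GB.bd b = some i) ∧
        ∃ a, H.bd a = some i ∧ q = pieceBd H a) ∨
      (∃ k, NeedB GA GB ρ φ k ∧ q = L.get k))
    {GB' : BLGraph X t} {ψ' : PB.V → Set GB'.V} (hmod' : BMinorModel PB GB' ψ') :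
    BMinorModel K (glue GA GB') (reFun GA GB GB' ρ ρB φ ψ') := by
  set F' := reFun GA GB GB' ρ ρB φ ψ' with hF'
  have hmem : ∀ w z, z ∈ F' w ↔ (∃ a, Sum.inl a ∈ φ w ∧ z = Sum.inl a) ∨
      (∃ b, (∃ x, LinkRel GA GB ρ ρB φ x w ∧ b ∈ ψ' x) ∧ z = emb2 GA GB' b) := by
    intro w z
    constructor
    · rintro (⟨a, ha, rfl⟩ | ⟨b, hb, rfl⟩)
      · exact Or.inl ⟨a, ha, rfl⟩
      · exact Or.inr ⟨b, hb, rfl⟩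
    · rintro (⟨a, ha, rfl⟩ | ⟨b, hb, rfl⟩)
      · exact Or.inl ⟨a, ha, rfl⟩
      · exact Or.inr ⟨b, hb, rfl⟩
  -- uniqueness facts for LinkRel
  have hLink_uniq : ∀ x x' w, LinkRel GA GB ρ ρB φ x w → LinkRel GA GB ρ ρB φ x' w →
      x = x' := by
    rintro x x' w (⟨i, hx, hw⟩ | hC) (⟨i', hx', hw'⟩ | hC')
    · obtain rfl : i = i' := by rw [hw] at hw'; exact Option.some_injective _ hw'
      exact PB.inj x x' i hx hx'
    · rw [(Corr_bd hC').2] at hw; simp at hw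
    · rw [(Corr_bd hC).2] at hw'; simp at hw'
    · exact Corr_inj hLnodup hLBnodup hC hC'
  have hLink_inj : ∀ x w w', LinkRel GA GB ρ ρB φ x w → LinkRel GA GB ρ ρB φ x w' →
      w = w' := by
    rintro x w w' (⟨i, hx, hw⟩ | hC) (⟨i', hx', hw'⟩ | hC')
    · obtain rfl : i = i' := by rw [hx] at hx'; exact Option.some_injective _ hx'
      exact K.inj w w' i hw hw'
    · rw [(Corr_bd hC').1] at hx; simp at hx
    · rw [(Corr_bd hC).1] at hx'; simp at hx'
    · exact Corr_func hLnodup hC hC'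
  -- boundary vertices of GA present in branch sets
  have hbd_inl : ∀ w (i : Fin t) a, K.bd w = some i → GA.bd a = some i →
      Sum.inl a ∈ φ w := by
    intro w i a hw ha
    exact bd_vertex_mem hmod hw (show (glue GA GB).bd (Sum.inl a) = some i from ha)
  -- if GA has no vertex with index i, the inl-part of the branch set is empty
  have hASempty : ∀ w (i : Fin t), K.bd w = some i → (∀ a, GA.bd a ≠ some i) →
      ∀ a, Sum.inl a ∉ φ w := by
    intro w i hw hGA a ha
    obtain ⟨yi, hyi, hyibd⟩ := hmod.2.2.2 w i hw
    rcases hb : GA.bd a with _ | j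
    · -- inl a is Aside; crossing to yi
      have hyiA : ¬ Aside GA GB yi := by
        intro hA
        rw [hA.bd_none] at hyibd; simp at hyibd
      obtain ⟨c, d, hcS, hdS, hcT, hdT, hadj⟩ :=
        conn_crossing (T := {x | Aside GA GB x}) (hmod.1.2.1 w) ha hyi ⟨a, rfl, hb⟩ hyiA
      obtain ⟨c₀, d₀, _, hdeq, _⟩ := adj_from_Aside hadj hcT
      apply hdT
      rcases hd : GA.bd d₀ with _ | j'
      · exact ⟨d₀, hdeq, hd⟩
      · exfalso
        have hWd : (glue GA GB).bd d = some j' := by rw [hdeq]; exact hd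
        have h2 := hmod.2.2.1 w d hdS j' hWd
        rw [hw] at h2
        obtain rfl : i = j' := by simpa using h2
        exact hGA d₀ hd
    · have h2 := hmod.2.2.1 w _ ha j (show (glue GA GB).bd (Sum.inl a) = some j from hb)
      rw [hw] at h2
      obtain rfl : i = j := by simpa using h2
      exact hGA a hb
  -- index coverage
  have hcover : ∀ w (i : Fin t), K.bd w = some i →
      (∃ a, GA.bd a = some i) ∨ (∃ x, PB.bd x = some i) := by
    intro w i hw
    by_cases hGA : ∃ a, GA.bd a = some i
    · exact Or.inl hGA
    right
    obtain ⟨yi, hyi, hyibd⟩ := hmod.2.2.2 w i hw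
    rcases glue_vertex_cases GA GB yi with ⟨a, rfl⟩ | ⟨b, rfl⟩
    · exact absurd ⟨a, hyibd⟩ hGA
    · rw [glue_bd_emb2] at hyibd
      -- GB has index i; get the pieceBd element of LB
      have hHa : ∃ a, H.bd a = some i := by
        obtain ⟨k, v, rfl⟩ := ρ.surj w
        rw [ρ.ibd] at hw
        exact pcs_bd_realize (hLpcs _ (List.get_mem L k)) v i hw
      obtain ⟨aH, haH⟩ := hHa
      have hq : pieceBd H aH ∈ LB :=
        (hLBmem _).mpr (Or.inl ⟨i, ⟨w, hw⟩, ⟨b, hyibd⟩, aH, haH, rfl⟩)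
      obtain ⟨k, hk⟩ := List.mem_iff_get.mp hq
      refine ⟨ρB.ι k (cast (congrArg BLGraph.V hk.symm) PUnit.unit), ?_⟩
      rw [ρB.ibd, cast_bd hk.symm]
      exact haH
  -- B-part description
  have hBS : ∀ w x, LinkRel GA GB ρ ρB φ x w →
      {b | ∃ x', LinkRel GA GB ρ ρB φ x' w ∧ b ∈ ψ' x'} = ψ' x := by
    intro w x hL
    ext b
    constructor
    · rintro ⟨x', hL', hb⟩
      rwa [hLink_uniq x' x w hL' hL] at hb
    · intro hb
      exact ⟨x, hL, hb⟩
  -- B-part emptiness for interior A-side w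
  have hBSe : ∀ w, K.bd w = none → (∀ y ∈ φ w, Aside GA GB y) →
      {b | ∃ x', LinkRel GA GB ρ ρB φ x' w ∧ b ∈ ψ' x'} = ∅ := by
    intro w hw hA
    ext b
    simp only [Set.mem_empty_iff_false, iff_false, Set.mem_setOf_eq]
    rintro ⟨x', hL', hb⟩
    rcases hL' with ⟨i, _, hw'⟩ | hC
    · rw [hw] at hw'; simp at hw'
    · obtain ⟨y, hy⟩ := hmod.1.1 w
      exact not_Aside_Bside (hA y hy) (Corr_Bside hLpcs hmod hC y hy)
  -- A-part emptiness for interior B-side w, plus existence of a Corr partner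
  have hNeedB_of_B : ∀ (k₀ : Fin L.length) (v : (L.get k₀).V),
      (L.get k₀).bd v = none → (∀ y ∈ φ (ρ.ι k₀ v), Bside GA GB y) →
      NeedB GA GB ρ φ k₀ := by
    intro k₀ v h0 hB
    obtain ⟨y, hy⟩ := hmod.1.1 (ρ.ι k₀ v)
    exact Or.inl ⟨v, h0, y, hy, fun hA => not_Aside_Bside hA (hB y hy)⟩
  have hmkCorr : ∀ (k₀ : Fin L.length), NeedB GA GB ρ φ k₀ →
      ∀ (k : Fin LB.length) (hk : LB.get k = L.get k₀) (v : (L.get k₀).V),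
      (L.get k₀).bd v = none →
      Corr GA GB ρ ρB φ (ρB.ι k (cast (congrArg BLGraph.V hk.symm) v)) (ρ.ι k₀ v) := by
    intro k₀ hN k hk v h0
    refine ⟨?_, k, k₀, hk.symm, _, hN, rfl, ?_⟩
    · rw [ρB.ibd, cast_bd hk.symm]
      exact h0
    · congr 1
      rw [cast_cast]
      exact (cast_eq_iff_heq.mpr HEq.rfl).symm
  -- connectivity of the transported A-part, interior case
  have hconnA_int : ∀ w, K.bd w = none → (∀ y ∈ φ w, Aside GA GB y) →
      ConnOn (glue GA GB').G (Sum.inl '' {a | Sum.inl a ∈ φ w}) := by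
    intro w hw hA
    have h1 : ConnOn GA.G {a | Sum.inl a ∈ φ w} := by
      apply conn_pullback (Sum.inl : GA.V → (glue GA GB).V)
      · have : Sum.inl '' {a | Sum.inl a ∈ φ w} = φ w := by
          ext y
          constructor
          · rintro ⟨a, ha, rfl⟩
            exact ha
          · intro hy
            obtain ⟨a, rfl, _⟩ := hA y hy
            exact ⟨a, hy, rfl⟩
        rw [this]
        exact hmod.1.2.1 w
      · obtain ⟨y, hy⟩ := hmod.1.1 w
        obtain ⟨a, rfl, _⟩ := hA y hy
        exact ⟨a, hy⟩
      · exact fun a _ b _ h => Sum.inl_injective h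
      · intro a ha b hb hadj
        apply inl_adj_reflect GA GB hadj
        obtain ⟨a', haeq, ha'⟩ := hA _ ha
        obtain rfl : a = a' := Sum.inl_injective haeq
        exact Or.inl ha'
    exact conn_image Sum.inl h1 (fun a _ b _ h => inl_adj_transfer GA GB' h)
  -- connectivity of the transported A-part, boundary case (GA has the index)
  have hconnA_bd : ∀ w (i : Fin t) (ai : GA.V), K.bd w = some i → GA.bd ai = some i →
      ConnOn (glue GA GB').G (Sum.inl '' {a | Sum.inl a ∈ φ w}) := by
    intro w i ai hw hai
    have hvS : Sum.inl ai ∈ φ w := hbd_inl w i ai hw hai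
    have hcut : ConnOn (glue GA GB).G (φ w ∩ {y | ∃ a, y = Sum.inl a}) := by
      apply conn_cut (T := {y | ∃ a, y = Sum.inl a}) (hmod.1.2.1 w) hvS ⟨ai, rfl⟩
      intro x' y' hx'S hy'S hx'T hx'ne hadj
      obtain ⟨x₀, rfl⟩ := hx'T
      rcases hb : GA.bd x₀ with _ | j
      · obtain ⟨_, y₀, _, hyeq, _⟩ := adj_from_Aside hadj ⟨x₀, rfl, hb⟩
        exact ⟨y₀, hyeq⟩
      · exfalso
        have h2 := hmod.2.2.1 w _ hx'S j (show (glue GA GB).bd (Sum.inl x₀) = some j from hb)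
        rw [hw] at h2
        obtain rfl : i = j := by simpa using h2
        exact hx'ne ((glue GA GB).inj _ _ i hb
          (show (glue GA GB).bd (Sum.inl ai) = some i from hai))
    have h1 : ConnOn GA.G {a | Sum.inl a ∈ φ w} := by
      apply conn_pullback (Sum.inl : GA.V → (glue GA GB).V)
      · have : Sum.inl '' {a | Sum.inl a ∈ φ w} = φ w ∩ {y | ∃ a, y = Sum.inl a} := by
          ext y
          constructor
          · rintro ⟨a, ha, rfl⟩
            exact ⟨ha, a, rfl⟩
          · rintro ⟨hy, a, rfl⟩
            exact ⟨a, hy, rfl⟩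
        rw [this]
        exact hcut
      · exact ⟨ai, hvS⟩
      · exact fun a _ b _ h => Sum.inl_injective h
      · intro a ha b hb hadj
        apply inl_adj_reflect GA GB hadj
        rcases hba : GA.bd a with _ | j
        · exact Or.inl rfl
        rcases hbb : GA.bd b with _ | j'
        · exact Or.inr rfl
        exfalso
        have h2 := hmod.2.2.1 w _ ha j (show (glue GA GB).bd (Sum.inl a) = some j from hba)
        have h3 := hmod.2.2.1 w _ hb j' (show (glue GA GB).bd (Sum.inl b) = some j' from hbb)
        rw [hw] at h2 h3
        obtain rfl : i = j := by simpa using h2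
        obtain rfl : i = j' := by simpa using h3
        have : Sum.inl a = Sum.inl b := (glue GA GB).inj _ _ i hba hbb
        obtain rfl : a = b := Sum.inl_injective this
        exact (glue GA GB).G.loopless.irrefl _ hadj
    exact conn_image Sum.inl h1 (fun a _ b _ h => inl_adj_transfer GA GB' h)
  -- connectivity of the B-part
  have hconnB : ∀ x : PB.V, ConnOn (glue GA GB').G (emb2 GA GB' '' ψ' x) := by
    intro x
    exact conn_image (emb2 GA GB') (hmod'.1.2.1 x)
      (fun a _ b _ h => emb2_adj_transfer GA GB' h)
  refine ⟨⟨?_, ?_, ?_, ?_⟩, ?_, ?_, ?_⟩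
  · -- nonempty
    intro w
    rcases hw : K.bd w with _ | i
    · rcases branch_side hmod hw with hA | hB
      · obtain ⟨y, hy⟩ := hmod.1.1 w
        obtain ⟨a, rfl, _⟩ := hA y hy
        exact ⟨Sum.inl a, Or.inl ⟨a, hy, rfl⟩⟩
      · obtain ⟨k₀, v, rfl⟩ := ρ.surj w
        have h0 : (L.get k₀).bd v = none := by rw [← ρ.ibd]; exact hw
        have hN := hNeedB_of_B k₀ v h0 hB
        obtain ⟨k, hk⟩ := List.mem_iff_get.mp ((hLBmem _).mpr (Or.inr ⟨k₀, hN, rfl⟩))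
        have hC := hmkCorr k₀ hN k hk v h0
        obtain ⟨b, hb⟩ := hmod'.1.1 (ρB.ι k (cast (congrArg BLGraph.V hk.symm) v))
        exact ⟨emb2 GA GB' b, Or.inr ⟨b, ⟨_, Or.inr hC, hb⟩, rfl⟩⟩
    · rcases hcover w i hw with ⟨ai, hai⟩ | ⟨x, hx⟩
      · exact ⟨Sum.inl ai, Or.inl ⟨ai, hbd_inl w i ai hw hai, rfl⟩⟩
      · obtain ⟨b, hb, _⟩ := hmod'.2.2.2 x i hx
        exact ⟨emb2 GA GB' b, Or.inr ⟨b, ⟨x, Or.inl ⟨i, hx, hw⟩, hb⟩, rfl⟩⟩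
  · -- connectivity
    intro w
    rcases hw : K.bd w with _ | i
    · rcases branch_side hmod hw with hA | hB
      · have he : F' w = Sum.inl '' {a | Sum.inl a ∈ φ w} := by
          show _ ∪ _ = _
          rw [hBSe w hw hA, Set.image_empty, Set.union_empty]
        rw [he]
        exact hconnA_int w hw hA
      · obtain ⟨k₀, v, rfl⟩ := ρ.surj w
        have h0 : (L.get k₀).bd v = none := by rw [← ρ.ibd]; exact hw
        have hN := hNeedB_of_B k₀ v h0 hB
        obtain ⟨k, hk⟩ := List.mem_iff_get.mp ((hLBmem _).mpr (Or.inr ⟨k₀, hN, rfl⟩))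
        have hC := hmkCorr k₀ hN k hk v h0
        have hAe : {a | Sum.inl a ∈ φ (ρ.ι k₀ v)} = ∅ := by
          ext a
          simp only [Set.mem_setOf_eq, Set.mem_empty_iff_false, iff_false]
          intro ha
          exact Bside_not_inl (hB _ ha)
        have he : F' (ρ.ι k₀ v) =
            emb2 GA GB' '' ψ' (ρB.ι k (cast (congrArg BLGraph.V hk.symm) v)) := by
          show _ ∪ _ = _
          rw [hAe, Set.image_empty, Set.empty_union, hBS _ _ (Or.inr hC)]
        rw [he]
        exact hconnB _
    · by_cases hex : ∃ x, PB.bd x = some i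
      · obtain ⟨x, hx⟩ := hex
        have hLx : LinkRel GA GB ρ ρB φ x w := Or.inl ⟨i, hx, hw⟩
        by_cases hGA : ∃ a, GA.bd a = some i
        · obtain ⟨ai, hai⟩ := hGA
          have he : F' w = (Sum.inl '' {a | Sum.inl a ∈ φ w}) ∪ (emb2 GA GB' '' ψ' x) := by
            show _ ∪ _ = _
            rw [hBS _ _ hLx]
          rw [he]
          obtain ⟨b', hb', hb'i⟩ := hmod'.2.2.2 x i hx
          have hvv : emb2 GA GB' b' = Sum.inl ai := emb2_matched GA GB' hb'i hai
          apply conn_union (hconnA_bd w i ai hw hai) (hconnB x)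
          · exact ⟨ai, hbd_inl w i ai hw hai, rfl⟩
          · rw [← hvv]
            exact ⟨b', hb', rfl⟩
        · push_neg at hGA
          have hAe : {a | Sum.inl a ∈ φ w} = ∅ := by
            ext a
            simp only [Set.mem_setOf_eq, Set.mem_empty_iff_false, iff_false]
            exact hASempty w i hw hGA a
          have he : F' w = emb2 GA GB' '' ψ' x := by
            show _ ∪ _ = _
            rw [hAe, Set.image_empty, Set.empty_union, hBS _ _ hLx]
          rw [he]
          exact hconnB x
      · have hBe : {b | ∃ x', LinkRel GA GB ρ ρB φ x' w ∧ b ∈ ψ' x'} = ∅ := by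
          ext b
          simp only [Set.mem_setOf_eq, Set.mem_empty_iff_false, iff_false]
          rintro ⟨x', hL', hb⟩
          rcases hL' with ⟨i', hx', hw'⟩ | hC
          · apply hex
            refine ⟨x', ?_⟩
            obtain rfl : i = i' := by rw [hw] at hw'; exact Option.some_injective _ hw'
            exact hx'
          · have h2 := (Corr_bd hC).2
            rw [hw] at h2
            simp at h2
        rcases hcover w i hw with ⟨ai, hai⟩ | hx
        · have he : F' w = Sum.inl '' {a | Sum.inl a ∈ φ w} := by
            show _ ∪ _ = _
            rw [hBe, Set.image_empty, Set.union_empty]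
          rw [he]
          exact hconnA_bd w i ai hw hai
        · exact absurd hx hex
  · -- disjointness
    intro w w' hne
    rw [Set.disjoint_left]
    rintro z hz hz'
    rcases (hmem w z).mp hz with ⟨a, ha, rfl⟩ | ⟨b, ⟨x, hLx, hbx⟩, rfl⟩
    · rcases (hmem w' _).mp hz' with ⟨a', ha', heq⟩ | ⟨b', ⟨x', hLx', hbx'⟩, heq⟩
      · obtain rfl : a' = a := Sum.inl_injective heq.symm
        exact Set.disjoint_left.mp (hmod.1.2.2.1 w w' hne) ha ha'
      · obtain ⟨j, hb'j, haj⟩ := (emb2_eq_inl GA GB').mp heq.symm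
        have hxj := hmod'.2.2.1 x' b' hbx' j hb'j
        have hw'j : K.bd w' = some j := by
          rcases hLx' with ⟨i', hx1, hw1⟩ | hC
          · obtain rfl : i' = j := by rw [hx1] at hxj; exact Option.some_injective _ hxj
            exact hw1
          · rw [(Corr_bd hC).1] at hxj
            simp at hxj
        have hwj : K.bd w = some j :=
          hmod.2.2.1 w _ ha j (show (glue GA GB).bd (Sum.inl a) = some j from haj)
        exact hne (K.inj w w' j hwj hw'j)
    · rcases (hmem w' _).mp hz' with ⟨a', ha', heq⟩ | ⟨b', ⟨x', hLx', hbx'⟩, heq⟩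
      · obtain ⟨j, hbj, haj⟩ := (emb2_eq_inl GA GB').mp heq
        have hxj := hmod'.2.2.1 x b hbx j hbj
        have hwj : K.bd w = some j := by
          rcases hLx with ⟨i', hx1, hw1⟩ | hC
          · obtain rfl : i' = j := by rw [hx1] at hxj; exact Option.some_injective _ hxj
            exact hw1
          · rw [(Corr_bd hC).1] at hxj
            simp at hxj
        have hw'j : K.bd w' = some j :=
          hmod.2.2.1 w' _ ha' j (show (glue GA GB).bd (Sum.inl a') = some j from haj)
        exact hne (K.inj w w' j hwj hw'j)
      · obtain rfl : b' = b := emb2_inj GA GB' heq.symm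
        obtain rfl : x = x' := by
          by_contra hxx
          exact Set.disjoint_left.mp (hmod'.1.2.2.1 x x' hxx) hbx hbx'
        exact hne (hLink_inj x w w' hLx hLx')
  · -- edges
    intro w w' hKadj0
    obtain ⟨k₀, v, v', hwe, hwe', hpadj⟩ := (ρ.iadj _ _).mp hKadj0
    subst hwe; subst hwe'
    have hKadj' : K.G.Adj (ρ.ι k₀ v) (ρ.ι k₀ v') :=
      (ρ.iadj _ _).mpr ⟨k₀, v, v', rfl, rfl, hpadj⟩
    rcases h0 : (L.get k₀).bd v with _ | i
    · have hKv : K.bd (ρ.ι k₀ v) = none := by rw [ρ.ibd]; exact h0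
      rcases branch_side hmod hKv with hA | hB
      · obtain ⟨a1, ha1, b1, hb1, hWadj⟩ := hmod.1.2.2.2 _ _ hKadj'
        obtain ⟨a₀, b₀, haeq, hbeq, hGA⟩ := adj_from_Aside hWadj (hA a1 ha1)
        exact ⟨Sum.inl a₀, Or.inl ⟨a₀, show Sum.inl a₀ ∈ φ _ by rw [← haeq]; exact ha1, rfl⟩,
          Sum.inl b₀, Or.inl ⟨b₀, show Sum.inl b₀ ∈ φ _ by rw [← hbeq]; exact hb1, rfl⟩, inl_adj_transfer GA GB' hGA⟩
      · have hN := hNeedB_of_B k₀ v h0 hB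
        obtain ⟨k, hk⟩ := List.mem_iff_get.mp ((hLBmem _).mpr (Or.inr ⟨k₀, hN, rfl⟩))
        have hCx := hmkCorr k₀ hN k hk v h0
        have hPBadj : PB.G.Adj (ρB.ι k (cast (congrArg BLGraph.V hk.symm) v))
            (ρB.ι k (cast (congrArg BLGraph.V hk.symm) v')) :=
          (ρB.iadj _ _).mpr ⟨k, _, _, rfl, rfl, (cast_adj hk.symm v v').mpr hpadj⟩
        have hLy : LinkRel GA GB ρ ρB φ
            (ρB.ι k (cast (congrArg BLGraph.V hk.symm) v')) (ρ.ι k₀ v') := by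
          rcases h0' : (L.get k₀).bd v' with _ | j
          · exact Or.inr (hmkCorr k₀ hN k hk v' h0')
          · exact Or.inl ⟨j, by rw [ρB.ibd, cast_bd hk.symm]; exact h0',
              by rw [ρ.ibd]; exact h0'⟩
        obtain ⟨b₀, hb₀, b₀', hb₀', hGB'⟩ := hmod'.1.2.2.2 _ _ hPBadj
        exact ⟨emb2 GA GB' b₀, Or.inr ⟨b₀, ⟨_, Or.inr hCx, hb₀⟩, rfl⟩,
          emb2 GA GB' b₀', Or.inr ⟨b₀', ⟨_, hLy, hb₀'⟩, rfl⟩, emb2_adj_transfer GA GB' hGB'⟩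
    · rcases h0' : (L.get k₀).bd v' with _ | j
      · have hKv' : K.bd (ρ.ι k₀ v') = none := by rw [ρ.ibd]; exact h0'
        rcases branch_side hmod hKv' with hA | hB
        · obtain ⟨a1, ha1, b1, hb1, hWadj⟩ := hmod.1.2.2.2 _ _ hKadj'
          obtain ⟨b₀, a₀, hbeq, haeq, hGA⟩ := adj_from_Aside hWadj.symm (hA b1 hb1)
          exact ⟨Sum.inl a₀, Or.inl ⟨a₀, show Sum.inl a₀ ∈ φ _ by rw [← haeq]; exact ha1, rfl⟩,
            Sum.inl b₀, Or.inl ⟨b₀, show Sum.inl b₀ ∈ φ _ by rw [← hbeq]; exact hb1, rfl⟩,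
            inl_adj_transfer GA GB' hGA.symm⟩
        · have hN := hNeedB_of_B k₀ v' h0' hB
          obtain ⟨k, hk⟩ := List.mem_iff_get.mp ((hLBmem _).mpr (Or.inr ⟨k₀, hN, rfl⟩))
          have hCy := hmkCorr k₀ hN k hk v' h0'
          have hPBadj : PB.G.Adj (ρB.ι k (cast (congrArg BLGraph.V hk.symm) v))
              (ρB.ι k (cast (congrArg BLGraph.V hk.symm) v')) :=
            (ρB.iadj _ _).mpr ⟨k, _, _, rfl, rfl, (cast_adj hk.symm v v').mpr hpadj⟩
          have hLx : LinkRel GA GB ρ ρB φ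
              (ρB.ι k (cast (congrArg BLGraph.V hk.symm) v)) (ρ.ι k₀ v) :=
            Or.inl ⟨i, by rw [ρB.ibd, cast_bd hk.symm]; exact h0, by rw [ρ.ibd]; exact h0⟩
          obtain ⟨b₀, hb₀, b₀', hb₀', hGB'⟩ := hmod'.1.2.2.2 _ _ hPBadj
          exact ⟨emb2 GA GB' b₀, Or.inr ⟨b₀, ⟨_, hLx, hb₀⟩, rfl⟩,
            emb2 GA GB' b₀', Or.inr ⟨b₀', ⟨_, Or.inr hCy, hb₀'⟩, rfl⟩,
            emb2_adj_transfer GA GB' hGB'⟩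
      · by_cases hE : EAv GA GB φ (ρ.ι k₀ v) (ρ.ι k₀ v')
        · obtain ⟨a, b, hGA, ha, hb⟩ := hE
          exact ⟨Sum.inl a, Or.inl ⟨a, ha, rfl⟩, Sum.inl b, Or.inl ⟨b, hb, rfl⟩,
            inl_adj_transfer GA GB' hGA⟩
        · have hN : NeedB GA GB ρ φ k₀ :=
            Or.inr (Or.inl ⟨v, v', hpadj, by rw [h0]; simp, by rw [h0']; simp, hE⟩)
          obtain ⟨k, hk⟩ := List.mem_iff_get.mp ((hLBmem _).mpr (Or.inr ⟨k₀, hN, rfl⟩))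
          have hPBadj : PB.G.Adj (ρB.ι k (cast (congrArg BLGraph.V hk.symm) v))
              (ρB.ι k (cast (congrArg BLGraph.V hk.symm) v')) :=
            (ρB.iadj _ _).mpr ⟨k, _, _, rfl, rfl, (cast_adj hk.symm v v').mpr hpadj⟩
          have hLx : LinkRel GA GB ρ ρB φ
              (ρB.ι k (cast (congrArg BLGraph.V hk.symm) v)) (ρ.ι k₀ v) :=
            Or.inl ⟨i, by rw [ρB.ibd, cast_bd hk.symm]; exact h0, by rw [ρ.ibd]; exact h0⟩
          have hLy : LinkRel GA GB ρ ρB φ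
              (ρB.ι k (cast (congrArg BLGraph.V hk.symm) v')) (ρ.ι k₀ v') :=
            Or.inl ⟨j, by rw [ρB.ibd, cast_bd hk.symm]; exact h0', by rw [ρ.ibd]; exact h0'⟩
          obtain ⟨b₀, hb₀, b₀', hb₀', hGB'⟩ := hmod'.1.2.2.2 _ _ hPBadj
          exact ⟨emb2 GA GB' b₀, Or.inr ⟨b₀, ⟨_, hLx, hb₀⟩, rfl⟩,
            emb2 GA GB' b₀', Or.inr ⟨b₀', ⟨_, hLy, hb₀'⟩, rfl⟩,
            emb2_adj_transfer GA GB' hGB'⟩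
  · -- labels
    intro w ℓ hlw
    obtain ⟨k₀, v, hwe, hlv⟩ := (ρ.ilab _ _).mp hlw
    subst hwe
    rcases h0 : (L.get k₀).bd v with _ | i
    · have hKv : K.bd (ρ.ι k₀ v) = none := by rw [ρ.ibd]; exact h0
      rcases branch_side hmod hKv with hA | hB
      · obtain ⟨a1, ha1, hla1⟩ := hmod.2.1 _ ℓ hlw
        rcases (glue_lab GA GB).mp hla1 with ⟨a₀, haeq, hlab⟩ | ⟨b₀, haeq, hlab⟩
        · exact ⟨Sum.inl a₀, Or.inl ⟨a₀, show Sum.inl a₀ ∈ φ _ by rw [← haeq]; exact ha1, rfl⟩,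
            Or.inl ⟨a₀, rfl, hlab⟩⟩
        · exfalso
          obtain ⟨a', haeq', ha'⟩ := hA a1 ha1
          rw [haeq'] at haeq
          obtain ⟨jj, hj1, hj2⟩ := (emb2_eq_inl GA GB).mp haeq.symm
          rw [ha'] at hj2
          simp at hj2
      · have hN := hNeedB_of_B k₀ v h0 hB
        obtain ⟨k, hk⟩ := List.mem_iff_get.mp ((hLBmem _).mpr (Or.inr ⟨k₀, hN, rfl⟩))
        have hCx := hmkCorr k₀ hN k hk v h0
        have hPBl : ℓ ∈ PB.lab (ρB.ι k (cast (congrArg BLGraph.V hk.symm) v)) :=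
          (ρB.ilab _ _).mpr ⟨k, _, rfl, by rw [cast_lab hk.symm]; exact hlv⟩
        obtain ⟨b₀, hb₀, hlab⟩ := hmod'.2.1 _ ℓ hPBl
        exact ⟨emb2 GA GB' b₀, Or.inr ⟨b₀, ⟨_, Or.inr hCx, hb₀⟩, rfl⟩,
          Or.inr ⟨b₀, rfl, hlab⟩⟩
    · by_cases hLA : LAv GA GB φ (ρ.ι k₀ v) ℓ
      · obtain ⟨a, ha, hlab⟩ := hLA
        exact ⟨Sum.inl a, Or.inl ⟨a, ha, rfl⟩, Or.inl ⟨a, rfl, hlab⟩⟩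
      · have hN : NeedB GA GB ρ φ k₀ :=
          Or.inr (Or.inr ⟨v, ℓ, by rw [h0]; simp, hlv, hLA⟩)
        obtain ⟨k, hk⟩ := List.mem_iff_get.mp ((hLBmem _).mpr (Or.inr ⟨k₀, hN, rfl⟩))
        have hLx : LinkRel GA GB ρ ρB φ
            (ρB.ι k (cast (congrArg BLGraph.V hk.symm) v)) (ρ.ι k₀ v) :=
          Or.inl ⟨i, by rw [ρB.ibd, cast_bd hk.symm]; exact h0, by rw [ρ.ibd]; exact h0⟩
        have hPBl : ℓ ∈ PB.lab (ρB.ι k (cast (congrArg BLGraph.V hk.symm) v)) :=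
          (ρB.ilab _ _).mpr ⟨k, _, rfl, by rw [cast_lab hk.symm]; exact hlv⟩
        obtain ⟨b₀, hb₀, hlab⟩ := hmod'.2.1 _ ℓ hPBl
        exact ⟨emb2 GA GB' b₀, Or.inr ⟨b₀, ⟨_, hLx, hb₀⟩, rfl⟩, Or.inr ⟨b₀, rfl, hlab⟩⟩
  · -- boundary condition 3
    rintro w z hz j hj
    rcases (hmem w z).mp hz with ⟨a, ha, rfl⟩ | ⟨b, ⟨x, hLx, hb⟩, rfl⟩
    · exact hmod.2.2.1 w _ ha j (show (glue GA GB).bd (Sum.inl a) = some j from hj)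
    · have hj' : GB'.bd b = some j := by rw [← glue_bd_emb2 GA GB' b]; exact hj
      have hxj := hmod'.2.2.1 x b hb j hj'
      rcases hLx with ⟨i', hx1, hw1⟩ | hC
      · obtain rfl : i' = j := by rw [hx1] at hxj; exact Option.some_injective _ hxj
        exact hw1
      · rw [(Corr_bd hC).1] at hxj
        simp at hxj
  · -- boundary condition 4
    intro w i hw
    rcases hcover w i hw with ⟨ai, hai⟩ | ⟨x, hx⟩
    · exact ⟨Sum.inl ai, Or.inl ⟨ai, hbd_inl w i ai hw hai, rfl⟩, hai⟩
    · obtain ⟨b, hb, hbi⟩ := hmod'.2.2.2 x i hx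
      refine ⟨emb2 GA GB' b, Or.inr ⟨b, ⟨x, Or.inl ⟨i, hx, hw⟩, hb⟩, rfl⟩, ?_⟩
      rw [glue_bd_emb2]
      exact hbi

end BLGraph

end ReassembleSection

section FinalSection

namespace BLGraph

variable {X : Type} {t : ℕ}

lemma pieceBd_ext {H : BLGraph X t} {a a' : H.V} (h : H.bd a = H.bd a') :
    pieceBd H a = pieceBd H a' := by
  unfold pieceBd
  congr 1
  exact funext fun _ => h

lemma main_transfer (Q : Set (BLGraph X 0)) (GA GB GB' : BLGraph X t)
    (htr : ∀ R ∈ mpcsPlus t Q, BMinor R GB → BMinor R GB') :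
    folioQ Q t (glue GA GB) ⊆ folioQ Q t (glue GA GB') := by
  classical
  rintro P ⟨hPm, φ, hmod⟩
  refine ⟨hPm, ?_⟩
  obtain ⟨H, hH, P₀, l, hLpcs, hLnodup, hPeq⟩ := hPm
  subst hPeq
  have ρ : Rep (glueList P₀ l) (P₀ :: l) := repGlueList l P₀
  have hHbd : ∀ i : Fin t, (∃ w, (glueList P₀ l).bd w = some i) → ∃ a, H.bd a = some i := by
    rintro i ⟨w, hw⟩
    obtain ⟨k, v, rfl⟩ := ρ.surj w
    rw [ρ.ibd] at hw
    exact pcs_bd_realize (hLpcs _ (List.get_mem _ k)) v i hw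
  set bdL : List (BLGraph X t) := (List.finRange t).filterMap (fun i =>
    if h : (∃ w, (glueList P₀ l).bd w = some i) ∧ (∃ b, GB.bd b = some i)
    then some (pieceBd H (hHbd i h.1).choose) else none) with hbdLdef
  set filtL : List (BLGraph X t) := (List.finRange (P₀ :: l).length).filterMap (fun k =>
    if NeedB GA GB ρ φ k then some ((P₀ :: l).get k) else none) with hfiltLdef
  set LB : List (BLGraph X t) := (bdL ++ filtL).dedup with hLBdef
  have hLBnodup : LB.Nodup := by rw [hLBdef]; exact List.nodup_dedup _
  have hLBmem : ∀ q, q ∈ LB ↔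
      (∃ i : Fin t, (∃ w, (glueList P₀ l).bd w = some i) ∧ (∃ b, GB.bd b = some i) ∧
        ∃ a, H.bd a = some i ∧ q = pieceBd H a) ∨
      (∃ k, NeedB GA GB ρ φ k ∧ q = (P₀ :: l).get k) := by
    intro q
    rw [hLBdef, List.mem_dedup, List.mem_append, hbdLdef, hfiltLdef]
    constructor
    · rintro (hq | hq)
      · rw [List.mem_filterMap] at hq
        obtain ⟨i, _, hq2⟩ := hq
        split_ifs at hq2 with hcond
        · obtain rfl : pieceBd H (hHbd i hcond.1).choose = q := by simpa using hq2
          exact Or.inl ⟨i, hcond.1, hcond.2, (hHbd i hcond.1).choose,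
            (hHbd i hcond.1).choose_spec, rfl⟩
      · rw [List.mem_filterMap] at hq
        obtain ⟨k, _, hq2⟩ := hq
        split_ifs at hq2 with hcond
        · obtain rfl : (P₀ :: l).get k = q := by simpa using hq2
          exact Or.inr ⟨k, hcond, rfl⟩
    · rintro (⟨i, hKi, hGBi, a, hai, rfl⟩ | ⟨k, hN, rfl⟩)
      · left
        rw [List.mem_filterMap]
        refine ⟨i, List.mem_finRange i, ?_⟩
        rw [dif_pos ⟨hKi, hGBi⟩]
        congr 1
        apply pieceBd_ext
        rw [(hHbd i hKi).choose_spec, hai]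
      · right
        rw [List.mem_filterMap]
        refine ⟨k, List.mem_finRange k, ?_⟩
        rw [if_pos hN]
  rcases hLBcase : LB with _ | ⟨p, lB⟩
  · -- LB is empty
    rw [hLBcase] at hLBmem hLBnodup
    set PB : BLGraph X t :=
      ⟨PEmpty, ⊥, fun x => ∅, fun _ => none, fun a => a.elim⟩ with hPBdef
    have ρB : Rep PB ([] : List (BLGraph X t)) :=
      { ι := fun k => (Nat.not_lt_zero k.1 k.2).elim
        surj := fun x => x.elim
        ibd := fun k => (Nat.not_lt_zero k.1 k.2).elim
        iadj := fun x => x.elim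
        ilab := fun x => x.elim
        int_same := fun k => (Nat.not_lt_zero k.1 k.2).elim
        int_diff := fun k => (Nat.not_lt_zero k.1 k.2).elim }
    have hmod' : BMinorModel PB GB' (fun x => x.elim) :=
      ⟨⟨fun w => w.elim, fun w => w.elim, fun w => w.elim, fun w => w.elim⟩,
        fun w => w.elim, fun w => w.elim, fun w => w.elim⟩
    exact ⟨reFun GA GB GB' ρ ρB φ (fun x => x.elim),
      reassemble ρ ρB hLpcs hLnodup hLBnodup hmod hLBmem hmod'⟩
  · -- LB = p :: lB
    rw [hLBcase] at hLBmem hLBnodup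
    have ρB : Rep (glueList p lB) (p :: lB) := repGlueList lB p
    have hPBpcs : ∀ q ∈ p :: lB, q ∈ pcs H := by
      intro q hq
      rcases (hLBmem q).mp hq with ⟨i, _, _, a, hai, rfl⟩ | ⟨k, _, rfl⟩
      · exact Or.inl ⟨a, by rw [hai]; simp, rfl⟩
      · exact hLpcs _ (List.get_mem _ k)
    have hPBmpcs : glueList p lB ∈ mpcsPlus t Q :=
      ⟨H, hH, p, lB, hPBpcs, hLBnodup, rfl⟩
    have hBGB : BMinor (glueList p lB) GB :=
      ⟨traceFun GA GB ρ ρB φ,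
        trace_model ρ ρB hLpcs hLnodup hLBnodup hmod hLBmem⟩
    obtain ⟨ψ', hmod'⟩ := htr _ hPBmpcs hBGB
    exact ⟨reFun GA GB GB' ρ ρB φ ψ',
      reassemble ρ ρB hLpcs hLnodup hLBnodup hmod hLBmem hmod'⟩

end BLGraph

end FinalSection
open BLGraph in
/-- if two `t`-boundaried labeled graphs `GB`, `GB'` have the same
`folio_{Q,t}`, then so do `GA ⊕ GB` and `GA ⊕ GB'`. -/
theorem stmt8 {X : Type} {t : ℕ} (Q : Set (BLGraph X 0)) (hQ : ∀ q ∈ Q, q.G.Connected)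
    (GA GB GB' : BLGraph X t) (h : folioQ Q t GB = folioQ Q t GB') :
    folioQ Q t (glue GA GB) = folioQ Q t (glue GA GB') := by
  apply Set.Subset.antisymm
  · refine main_transfer Q GA GB GB' (fun R hR hm => ?_)
    exact (show R ∈ folioQ Q t GB' from h ▸ (⟨hR, hm⟩ : R ∈ folioQ Q t GB)).2
  · refine main_transfer Q GA GB' GB (fun R hR hm => ?_)
    exact (show R ∈ folioQ Q t GB from h.symm ▸ (⟨hR, hm⟩ : R ∈ folioQ Q t GB')).2
end

section
/- For every n ≥ 1 there exist n pairwise incomparable (under the minor relation) biconnected planar graphs, each of size O(n); concretely, for each i ∈ {0,…,n−1} the graph B_i formed by a 2×(2i) grid and a 3×(n−i+1) grid sharing structure as two attached grids is biconnected, planar, and no B_i is a minor of B_j for i ≠ j. -/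
open SimpleGraph Set

/-- Planarity, via Wagner's characterization: no `K₅` minor and no `K₃,₃` minor. -/
def IsPlanar {α : Type*} (G : SimpleGraph α) : Prop :=
  ¬ IsMinor (⊤ : SimpleGraph (Fin 5)) G ∧
  ¬ IsMinor (completeBipartiteGraph (Fin 3) (Fin 3)) G

def fanGraph (v s : ℕ) : SimpleGraph (Fin v) where
  Adj a b := a ≠ b ∧ ((a.val + 1 = b.val ∧ 1 ≤ a.val) ∨ (b.val + 1 = a.val ∧ 1 ≤ b.val) ∨
    (a.val = 0 ∧ (b.val ≤ s ∨ b.val = v - 1)) ∨ (b.val = 0 ∧ (a.val ≤ s ∨ a.val = v - 1)))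
  symm := ⟨by intro a b h; exact ⟨Ne.symm h.1, by tauto⟩⟩
  loopless := ⟨fun a h => h.1 rfl⟩

lemma fan_adj_of_vals {v s : ℕ} {a b : Fin v} (h1 : 1 ≤ a.val) (h2 : a.val + 1 = b.val) :
    (fanGraph v s).Adj a b := by
  refine ⟨fun h => by subst h; omega, Or.inl ⟨h2, h1⟩⟩

lemma fan_adj_nonzero {v s : ℕ} {a b : Fin v} (h : (fanGraph v s).Adj a b)
    (ha : a.val ≠ 0) (hb : b.val ≠ 0) : a.val + 1 = b.val ∨ b.val + 1 = a.val := by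
  rcases h with ⟨-, h⟩; omega

lemma connected_of_hub {β : Type*} {H : SimpleGraph β} (hub : β)
    (h : ∀ x, H.Reachable x hub) : H.Connected := by
  have : Nonempty β := ⟨hub⟩
  exact ⟨fun x y => (h x).trans (h y).symm⟩

lemma chain_induce {v s : ℕ} (S : Set (Fin v)) :
    ∀ (d : ℕ) (a b : Fin v) (ha : a ∈ S) (hb : b ∈ S), 1 ≤ a.val → b.val = a.val + d →
    (∀ c : Fin v, a.val ≤ c.val → c.val ≤ b.val → c ∈ S) →
    ((fanGraph v s).induce S).Reachable ⟨a, ha⟩ ⟨b, hb⟩ := by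
  intro d
  induction d with
  | zero => intro a b ha hb h1 h2 _; have : a = b := Fin.ext (by omega); subst this; rfl
  | succ d ih =>
    intro a b ha hb h1 h2 hmid
    have hlt : a.val + 1 < v := by omega
    set a' : Fin v := ⟨a.val + 1, hlt⟩ with ha'
    have hva' : a'.val = a.val + 1 := rfl
    have ha'S : a' ∈ S := hmid a' (by omega) (by omega)
    have hadj : ((fanGraph v s).induce S).Adj ⟨a, ha⟩ ⟨a', ha'S⟩ := by
      simp only [comap_adj]
      exact fan_adj_of_vals h1 rfl
    exact hadj.reachable.trans
      (ih a' b ha'S hb (by omega) (by omega)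
        (fun c hc1 hc2 => hmid c (by omega) hc2))

lemma reachable_of_induce {v s : ℕ} {S : Set (Fin v)} {a b : S}
    (h : ((fanGraph v s).induce S).Reachable a b) : (fanGraph v s).Reachable a.1 b.1 :=
  h.map (SimpleGraph.Embedding.induce S).toHom

lemma fan_connected {v s : ℕ} (hv : 4 ≤ v) (hs : 1 ≤ s) : (fanGraph v s).Connected := by
  have h1 : (1 : ℕ) < v := by omega
  apply connected_of_hub (⟨1, h1⟩ : Fin v)
  intro x
  by_cases hx : x.val = 0
  · have : (fanGraph v s).Adj x ⟨1, h1⟩ :=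
      ⟨Fin.ne_of_val_ne (by simpa [hx]), Or.inr (Or.inr (Or.inl ⟨hx, Or.inl (by simpa using hs)⟩))⟩
    exact this.reachable
  · have := chain_induce (s := s) (Set.univ : Set (Fin v)) (x.val - 1) ⟨1, h1⟩ x trivial trivial
      (by simp) (show x.val = 1 + (x.val - 1) by omega) (fun _ _ _ => trivial)
    exact (reachable_of_induce this).symm

lemma fan_del_connected {v s : ℕ} (hv : 4 ≤ v) (hs : 1 ≤ s) (x : Fin v) :
    ((fanGraph v s).induce {u | u ≠ x}).Connected := by
  have hv1 : v - 1 < v := by omega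
  have h1v : (1:ℕ) < v := by omega
  have h0v : (0:ℕ) < v := by omega
  by_cases hx : x.val = 0
  · -- deleting the apex: the path remains
    have hne1 : (⟨1, h1v⟩ : Fin v) ≠ x := Fin.ne_of_val_ne (by simp [hx])
    apply connected_of_hub (⟨⟨1, h1v⟩, hne1⟩ : {u : Fin v // u ≠ x})
    rintro ⟨y, hy⟩
    have hy0 : 1 ≤ y.val := by
      rcases Nat.eq_zero_or_pos y.val with h | h
      · exact absurd (Fin.ext (by omega : y.val = x.val)) hy
      · exact h
    have := chain_induce (s := s) {u : Fin v | u ≠ x} (y.val - 1) ⟨1, h1v⟩ y hne1 hy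
      (by simp) (show y.val = 1 + (y.val - 1) by omega)
      (fun c hc1 hc2 => Fin.ne_of_val_ne (by simp at hc1 ⊢; omega))
    exact this.symm
  · -- deleting a path vertex: apex is the hub
    have hne0 : (⟨0, h0v⟩ : Fin v) ≠ x := Fin.ne_of_val_ne (by simp; omega)
    apply connected_of_hub (⟨⟨0, h0v⟩, hne0⟩ : {u : Fin v // u ≠ x})
    rintro ⟨y, hy⟩
    by_cases hy0 : y.val = 0
    · have heq : (⟨y, hy⟩ : {u : Fin v // u ≠ x}) = ⟨⟨0, h0v⟩, hne0⟩ :=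
        Subtype.ext (Fin.ext (by simpa using hy0))
      rw [heq]
    · by_cases hyx : y.val < x.val
      · -- go down to 1, then jump to apex
        have hne1 : (⟨1, h1v⟩ : Fin v) ≠ x := Fin.ne_of_val_ne (by simp; omega)
        have hchain := chain_induce (s := s) {u : Fin v | u ≠ x} (y.val - 1) ⟨1, h1v⟩ y hne1 hy
          (by simp) (show y.val = 1 + (y.val - 1) by omega)
          (fun c hc1 hc2 => Fin.ne_of_val_ne (by simp at hc1 hc2 ⊢; omega))
        have hadj : ((fanGraph v s).induce {u : Fin v | u ≠ x}).Adj ⟨⟨1, h1v⟩, hne1⟩ ⟨⟨0, h0v⟩, hne0⟩ :=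
          ⟨Fin.ne_of_val_ne (by simp), Or.inr (Or.inr (Or.inr ⟨rfl, Or.inl (by simpa using hs)⟩))⟩
        exact hchain.symm.trans hadj.reachable
      · -- go up to v-1, then jump to apex
        have hnev : (⟨v - 1, hv1⟩ : Fin v) ≠ x := Fin.ne_of_val_ne (by simp; omega)
        have hchain := chain_induce (s := s) {u : Fin v | u ≠ x} (v - 1 - y.val) y ⟨v - 1, hv1⟩ hy hnev
          (by omega) (show (⟨v - 1, hv1⟩ : Fin v).val = y.val + (v - 1 - y.val) by simp; omega)
          (fun c hc1 hc2 => Fin.ne_of_val_ne (by simp at hc2 ⊢; omega))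
        have hadj : ((fanGraph v s).induce {u : Fin v | u ≠ x}).Adj ⟨⟨v - 1, hv1⟩, hnev⟩ ⟨⟨0, h0v⟩, hne0⟩ :=
          ⟨Fin.ne_of_val_ne (by simp; omega), Or.inr (Or.inr (Or.inr ⟨rfl, Or.inr (by simp)⟩))⟩
        exact hchain.trans hadj.reachable

lemma walk_interval {v s : ℕ} {S : Set (Fin v)} (h0 : ∀ x ∈ S, x.val ≠ 0) :
    ∀ (p q : S) (w : ((fanGraph v s).induce S).Walk p q) (c : ℕ),
      ((p.1.val ≤ c ∧ c ≤ q.1.val) ∨ (q.1.val ≤ c ∧ c ≤ p.1.val)) → ∃ t ∈ S, t.val = c := by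
  intro p q w
  induction w with
  | @nil u => intro c hc; exact ⟨u.1, u.2, by omega⟩
  | @cons a m b h w ih =>
    intro c hc
    have hadj : (fanGraph v s).Adj a.1 m.1 := h
    have hcons : a.1.val + 1 = m.1.val ∨ m.1.val + 1 = a.1.val :=
      fan_adj_nonzero hadj (h0 _ a.2) (h0 _ m.2)
    by_cases hc2 : (m.1.val ≤ c ∧ c ≤ b.1.val) ∨ (b.1.val ≤ c ∧ c ≤ m.1.val)
    · exact ih c hc2
    · exact ⟨_, a.2, by omega⟩

lemma interval_of_conn {v s : ℕ} {S : Set (Fin v)} (h0 : ∀ x ∈ S, x.val ≠ 0)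
    (hc : ((fanGraph v s).induce S).Connected) :
    ∀ x ∈ S, ∀ y ∈ S, ∀ z : Fin v, x.val ≤ z.val → z.val ≤ y.val → z ∈ S := by
  intro x hx y hy z h1 h2
  obtain ⟨w⟩ := hc.preconnected ⟨x, hx⟩ ⟨y, hy⟩
  obtain ⟨t, ht, htv⟩ := walk_interval h0 ⟨x, hx⟩ ⟨y, hy⟩ w z.val (Or.inl ⟨h1, h2⟩)
  rwa [show z = t from Fin.ext htv.symm]

lemma no_three_neighbors {v s : ℕ} {S T1 T2 T3 : Set (Fin v)}
    (hS0 : ∀ x ∈ S, x.val ≠ 0) (h10 : ∀ x ∈ T1, x.val ≠ 0) (h20 : ∀ x ∈ T2, x.val ≠ 0)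
    (h30 : ∀ x ∈ T3, x.val ≠ 0)
    (hd1 : Disjoint S T1) (hd2 : Disjoint S T2) (hd3 : Disjoint S T3)
    (hd12 : Disjoint T1 T2) (hd13 : Disjoint T1 T3) (hd23 : Disjoint T2 T3)
    (hne : S.Nonempty)
    (hint : ∀ x ∈ S, ∀ y ∈ S, ∀ z : Fin v, x.val ≤ z.val → z.val ≤ y.val → z ∈ S)
    (ha1 : ∃ x ∈ S, ∃ y ∈ T1, (fanGraph v s).Adj x y)
    (ha2 : ∃ x ∈ S, ∃ y ∈ T2, (fanGraph v s).Adj x y)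
    (ha3 : ∃ x ∈ S, ∃ y ∈ T3, (fanGraph v s).Adj x y) : False := by
  obtain ⟨a, haS, hamin⟩ := Set.exists_min_image S Fin.val S.toFinite hne
  obtain ⟨b, hbS, hbmax⟩ := Set.exists_max_image S Fin.val S.toFinite hne
  have key : ∀ T : Set (Fin v), (∀ x ∈ T, x.val ≠ 0) → Disjoint S T →
      (∃ x ∈ S, ∃ y ∈ T, (fanGraph v s).Adj x y) →
      ∃ y ∈ T, y.val + 1 = a.val ∨ y.val = b.val + 1 := by
    intro T hT0 hdT ⟨x, hxS, y, hyT, hxy⟩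
    have hyns : y ∉ S := fun hyS => Set.disjoint_left.mp hdT hyS hyT
    have hcons := fan_adj_nonzero hxy (hS0 _ hxS) (hT0 _ hyT)
    have hax := hamin x hxS
    have hxb := hbmax x hxS
    refine ⟨y, hyT, ?_⟩
    rcases hcons with h | h
    · -- y = x + 1
      right
      by_contra hne'
      exact hyns (hint a haS b hbS y (by omega) (by omega))
    · -- x = y + 1
      left
      by_contra hne'
      exact hyns (hint a haS b hbS y (by omega) (by omega))
  obtain ⟨y1, hy1, hv1⟩ := key T1 h10 hd1 ha1
  obtain ⟨y2, hy2, hv2⟩ := key T2 h20 hd2 ha2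
  obtain ⟨y3, hy3, hv3⟩ := key T3 h30 hd3 ha3
  have e12 : y1.val = y2.val → False := fun h =>
    Set.disjoint_left.mp hd12 (show y1 ∈ T1 from hy1) (by rwa [show y1 = y2 from Fin.ext h])
  have e13 : y1.val = y3.val → False := fun h =>
    Set.disjoint_left.mp hd13 hy1 (by rwa [show y1 = y3 from Fin.ext h])
  have e23 : y2.val = y3.val → False := fun h =>
    Set.disjoint_left.mp hd23 hy2 (by rwa [show y2 = y3 from Fin.ext h])
  have n12 : y1.val ≠ y2.val := fun h => e12 h
  have n13 : y1.val ≠ y3.val := fun h => e13 h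
  have n23 : y2.val ≠ y3.val := fun h => e23 h
  rcases hv1 with h1 | h1 <;> rcases hv2 with h2 | h2 <;> rcases hv3 with h3 | h3 <;> omega

lemma branch_eq {α β : Type*} {φ : β → Set α}
    (hd : ∀ w w', w ≠ w' → Disjoint (φ w) (φ w')) {x : α} {w w' : β}
    (h : x ∈ φ w) (h' : x ∈ φ w') : w = w' :=
  by_contra fun hne => Set.disjoint_left.mp (hd _ _ hne) h h'

lemma exists_apex_owner {α β : Type*} {φ : β → Set α} [Inhabited β]
    (hd : ∀ w w', w ≠ w' → Disjoint (φ w) (φ w')) (z : α) :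
    ∃ w0 : β, ∀ w, w ≠ w0 → z ∉ φ w := by
  by_cases h : ∃ w0, z ∈ φ w0
  · obtain ⟨w0, hw0⟩ := h
    exact ⟨w0, fun w hw hz => hw (branch_eq hd hz hw0)⟩
  · exact ⟨default, fun w _ hz => h ⟨w, hz⟩⟩

lemma exadj_symm {α : Type*} {G : SimpleGraph α} {A B : Set α}
    (h : ∃ a ∈ A, ∃ b ∈ B, G.Adj a b) : ∃ a ∈ B, ∃ b ∈ A, G.Adj a b := by
  obtain ⟨a, ha, b, hb, hab⟩ := h; exact ⟨b, hb, a, ha, hab.symm⟩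

lemma no_K5 {v s : ℕ} (hv : 1 ≤ v) : ¬ IsMinor (⊤ : SimpleGraph (Fin 5)) (fanGraph v s) := by
  rintro ⟨φ, hne, hconn, hdisj, hadj⟩
  have h0v : 0 < v := hv
  set z : Fin v := ⟨0, h0v⟩ with hz
  obtain ⟨w0, hw0⟩ := exists_apex_owner hdisj z
  have hcancel : ∀ k l : Fin 5, w0 + k = w0 + l → k = l := fun k l h => add_left_cancel h
  have hzero : ∀ k : Fin 5, k ≠ 0 → ∀ x ∈ φ (w0 + k), x.val ≠ 0 := by
    intro k hk x hx hx0
    have hxz : x = z := Fin.ext hx0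
    exact hw0 (w0 + k) (fun h => hk (hcancel k 0 (h.trans (add_zero w0).symm))) (hxz ▸ hx)
  have hdj : ∀ k l : Fin 5, k ≠ l → Disjoint (φ (w0 + k)) (φ (w0 + l)) :=
    fun k l h => hdisj _ _ (fun h' => h (hcancel k l h'))
  have hadj' : ∀ k l : Fin 5, k ≠ l →
      ∃ a ∈ φ (w0 + k), ∃ b ∈ φ (w0 + l), (fanGraph v s).Adj a b :=
    fun k l h => hadj _ _ ((top_adj _ _).mpr (fun h' => h (hcancel k l h')))
  exact no_three_neighbors (hzero 1 (by decide)) (hzero 2 (by decide)) (hzero 3 (by decide))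
    (hzero 4 (by decide))
    (hdj 1 2 (by decide)) (hdj 1 3 (by decide)) (hdj 1 4 (by decide))
    (hdj 2 3 (by decide)) (hdj 2 4 (by decide)) (hdj 3 4 (by decide))
    (hne _)
    (interval_of_conn (hzero 1 (by decide)) (hconn (w0 + 1)))
    (hadj' 1 2 (by decide)) (hadj' 1 3 (by decide)) (hadj' 1 4 (by decide))

lemma no_K33 {v s : ℕ} (hv : 1 ≤ v) :
    ¬ IsMinor (completeBipartiteGraph (Fin 3) (Fin 3)) (fanGraph v s) := by
  rintro ⟨φ, hne, hconn, hdisj, hadj⟩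
  have h0v : 0 < v := hv
  set z : Fin v := ⟨0, h0v⟩ with hz
  obtain ⟨w0, hw0⟩ := exists_apex_owner hdisj z
  have hzero : ∀ w, w ≠ w0 → ∀ x ∈ φ w, x.val ≠ 0 := by
    intro w hw x hx hx0
    exact hw0 w hw (show z ∈ φ w from (Fin.ext hx0 : x = z) ▸ hx)
  have hKadj : ∀ (i j : Fin 3), (completeBipartiteGraph (Fin 3) (Fin 3)).Adj
      (Sum.inl i) (Sum.inr j) := fun i j => Or.inl ⟨rfl, rfl⟩
  cases w0 with
  | inl i0 =>
    have hS : Sum.inl (i0 + 1) ≠ (Sum.inl i0 : Fin 3 ⊕ Fin 3) := by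
      intro h
      have := Sum.inl.inj h
      exact (by decide : (1 : Fin 3) ≠ 0) (add_left_cancel (this.trans (add_zero i0).symm))
    have hT : ∀ j : Fin 3, (Sum.inr j : Fin 3 ⊕ Fin 3) ≠ Sum.inl i0 := fun j => Sum.inr_ne_inl
    exact no_three_neighbors (hzero _ hS) (hzero _ (hT 0)) (hzero _ (hT 1)) (hzero _ (hT 2))
      (hdisj _ _ (by simp)) (hdisj _ _ (by simp)) (hdisj _ _ (by simp))
      (hdisj _ _ (by simp)) (hdisj _ _ (by simp)) (hdisj _ _ (by simp))
      (hne _) (interval_of_conn (hzero _ hS) (hconn _))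
      (hadj _ _ (hKadj (i0 + 1) 0)) (hadj _ _ (hKadj (i0 + 1) 1)) (hadj _ _ (hKadj (i0 + 1) 2))
  | inr j0 =>
    have hS : Sum.inr (j0 + 1) ≠ (Sum.inr j0 : Fin 3 ⊕ Fin 3) := by
      intro h
      have := Sum.inr.inj h
      exact (by decide : (1 : Fin 3) ≠ 0) (add_left_cancel (this.trans (add_zero j0).symm))
    have hT : ∀ i : Fin 3, (Sum.inl i : Fin 3 ⊕ Fin 3) ≠ Sum.inr j0 := fun i => Sum.inl_ne_inr
    exact no_three_neighbors (hzero _ hS) (hzero _ (hT 0)) (hzero _ (hT 1)) (hzero _ (hT 2))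
      (hdisj _ _ (by simp)) (hdisj _ _ (by simp)) (hdisj _ _ (by simp))
      (hdisj _ _ (by simp)) (hdisj _ _ (by simp)) (hdisj _ _ (by simp))
      (hne _) (interval_of_conn (hzero _ hS) (hconn _))
      (exadj_symm (hadj _ _ (hKadj 0 (j0 + 1)))) (exadj_symm (hadj _ _ (hKadj 1 (j0 + 1))))
      (exadj_symm (hadj _ _ (hKadj 2 (j0 + 1))))

def ecode (v s : ℕ) : Sym2 (Fin v) → ℕ := Sym2.lift ⟨fun a b =>
  if a.val = 0 then (if b.val = v - 1 then v - 2 + s else v - 3 + b.val)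
  else if b.val = 0 then (if a.val = v - 1 then v - 2 + s else v - 3 + a.val)
  else min a.val b.val - 1, by intro a b; dsimp only; split_ifs <;> omega⟩

lemma edge_canon {v s : ℕ} {a b : Fin v} (h : (fanGraph v s).Adj a b) :
    ∃ x y : Fin v, s(a, b) = s(x, y) ∧
      ((x.val = 0 ∧ 1 ≤ y.val ∧ (y.val ≤ s ∨ y.val = v - 1)) ∨ (1 ≤ x.val ∧ x.val + 1 = y.val)) := by
  obtain ⟨hne, hcl⟩ := h
  have hvals : a.val ≠ b.val := fun h => hne (Fin.ext h)
  rcases hcl with ⟨h1, h2⟩ | ⟨h1, h2⟩ | ⟨h1, h2⟩ | ⟨h1, h2⟩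
  · exact ⟨a, b, rfl, Or.inr ⟨h2, h1⟩⟩
  · exact ⟨b, a, Sym2.eq_swap, Or.inr ⟨h2, h1⟩⟩
  · exact ⟨a, b, rfl, Or.inl ⟨h1, by omega, h2⟩⟩
  · exact ⟨b, a, Sym2.eq_swap, Or.inl ⟨h1, by omega, h2⟩⟩

lemma ecode_lt {v s : ℕ} (hv : 4 ≤ v) (hsv : s ≤ v - 2) :
    ∀ e ∈ (fanGraph v s).edgeSet, ecode v s e < v - 1 + s := by
  intro e
  induction e using Sym2.ind with
  | _ a b =>
    intro he
    obtain ⟨x, y, hxy, hcl⟩ := edge_canon he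
    rw [hxy]
    have hylt := y.isLt
    have hxlt := x.isLt
    simp only [ecode, Sym2.lift_mk]
    rcases hcl with ⟨h1, h2, h3 | h3⟩ | ⟨h1, h2⟩ <;> split_ifs <;> omega

lemma ecode_injOn {v s : ℕ} (hv : 4 ≤ v) (hsv : s ≤ v - 2) :
    Set.InjOn (ecode v s) (fanGraph v s).edgeSet := by
  intro e1 he1 e2 he2 heq
  induction e1 using Sym2.ind with
  | _ a1 b1 =>
  induction e2 using Sym2.ind with
  | _ a2 b2 =>
  obtain ⟨x1, y1, hxy1, hcl1⟩ := edge_canon he1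
  obtain ⟨x2, y2, hxy2, hcl2⟩ := edge_canon he2
  rw [hxy1, hxy2] at heq ⊢
  simp only [ecode, Sym2.lift_mk] at heq
  have hy1 := y1.isLt
  have hy2 := y2.isLt
  have hx1 := x1.isLt
  have hx2 := x2.isLt
  have : x1.val = x2.val ∧ y1.val = y2.val := by
    rcases hcl1 with ⟨h1, h2, h3 | h3⟩ | ⟨h1, h2⟩ <;>
      rcases hcl2 with ⟨g1, g2, g3 | g3⟩ | ⟨g1, g2⟩ <;>
      split_ifs at heq <;> omega
  rw [Fin.ext this.1, Fin.ext this.2]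

lemma edge_ncard_le {v s : ℕ} (hv : 4 ≤ v) (hsv : s ≤ v - 2) :
    ((fanGraph v s).edgeSet).ncard ≤ v - 1 + s := by
  have h := Set.ncard_le_ncard_of_injOn (ecode v s)
    (fun e he => by
      simp only [Finset.coe_range, Set.mem_Iio]
      exact ecode_lt hv hsv e he)
    (ecode_injOn hv hsv)
    ((Finset.range (v - 1 + s)).finite_toSet)
  rwa [Set.ncard_coe_finset, Finset.card_range] at h

def dcode (v s : ℕ) (hv : 4 ≤ v) (hsv : s ≤ v - 2) (m : Fin (v - 1 + s)) : Sym2 (Fin v) :=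
  if h1 : m.val < v - 2 then s((⟨m.val + 1, by omega⟩ : Fin v), (⟨m.val + 2, by omega⟩ : Fin v))
  else if h2 : m.val < v - 2 + s then
    s((⟨0, by omega⟩ : Fin v), (⟨m.val - (v - 3), by omega⟩ : Fin v))
  else s((⟨0, by omega⟩ : Fin v), (⟨v - 1, by omega⟩ : Fin v))

lemma dcode_mem {v s : ℕ} (hv : 4 ≤ v) (hs : 1 ≤ s) (hsv : s ≤ v - 2) (m : Fin (v - 1 + s)) :
    dcode v s hv hsv m ∈ (fanGraph v s).edgeSet := by
  have l := m.isLt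
  unfold dcode
  split_ifs with h1 h2 <;> rw [SimpleGraph.mem_edgeSet]
  · exact fan_adj_of_vals (by simp) rfl
  · exact ⟨Fin.ne_of_val_ne (by simp; omega),
      Or.inr (Or.inr (Or.inl ⟨rfl, Or.inl (by simp; omega)⟩))⟩
  · exact ⟨Fin.ne_of_val_ne (by simp; omega),
      Or.inr (Or.inr (Or.inl ⟨rfl, Or.inr rfl⟩))⟩

lemma dcode_inj {v s : ℕ} (hv : 4 ≤ v) (hsv : s ≤ v - 2) :
    Function.Injective (dcode v s hv hsv) := by
  intro m1 m2 h
  have l1 := m1.isLt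
  have l2 := m2.isLt
  unfold dcode at h
  split_ifs at h <;>
    · rw [Sym2.eq_iff] at h
      rcases h with ⟨h1, h2⟩ | ⟨h1, h2⟩ <;>
        simp only [Fin.mk.injEq] at h1 h2 <;>
        exact Fin.ext (by omega)

lemma edge_ncard_ge {v s : ℕ} (hv : 4 ≤ v) (hs : 1 ≤ s) (hsv : s ≤ v - 2) :
    v - 1 + s ≤ ((fanGraph v s).edgeSet).ncard := by
  have h := Set.ncard_le_ncard_of_injOn (s := (Set.univ : Set (Fin (v - 1 + s)))) (dcode v s hv hsv)
    (fun m _ => dcode_mem hv hs hsv m)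
    (Function.Injective.injOn (dcode_inj hv hsv))
    ((fanGraph v s).edgeSet.toFinite)
  rwa [Set.ncard_univ, Nat.card_eq_fintype_card, Fintype.card_fin] at h

lemma minor_card_le {α β : Type*} [Fintype α] [Fintype β]
    {G : SimpleGraph α} {H : SimpleGraph β} (h : IsMinor H G) :
    Fintype.card β ≤ Fintype.card α := by
  obtain ⟨φ, hne, -, hdisj, -⟩ := h
  choose f hf using hne
  refine Fintype.card_le_of_injective f (fun w w' hww => ?_)
  exact branch_eq hdisj (hf w) (hww ▸ hf w')

lemma minor_edge_ncard_le {α β : Type*} [Finite α] [Nonempty α]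
    {G : SimpleGraph α} {H : SimpleGraph β} (h : IsMinor H G) :
    H.edgeSet.ncard ≤ G.edgeSet.ncard := by
  classical
  have : Nonempty (Sym2 α) := ⟨s(Classical.arbitrary α, Classical.arbitrary α)⟩
  obtain ⟨φ, hne, hconn, hdisj, hadj⟩ := h
  have hex : ∀ e ∈ H.edgeSet, ∃ e' : Sym2 α, e' ∈ G.edgeSet ∧
      ∃ w w', e = s(w, w') ∧ ∃ a ∈ φ w, ∃ b ∈ φ w', e' = s(a, b) := by
    intro e
    induction e using Sym2.ind with
    | _ w w' =>
      intro he
      obtain ⟨a, ha, b, hb, hab⟩ := hadj w w' (H.mem_edgeSet.mp he)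
      exact ⟨s(a, b), G.mem_edgeSet.mpr hab, w, w', rfl, a, ha, b, hb, rfl⟩
  set f : Sym2 β → Sym2 α := fun e =>
    if he : e ∈ H.edgeSet then (hex e he).choose else Classical.arbitrary _ with hfdef
  refine Set.ncard_le_ncard_of_injOn f (fun e he => ?_) (fun e1 he1 e2 he2 heq => ?_)
    G.edgeSet.toFinite
  · simp only [hfdef, dif_pos he]
    exact (hex e he).choose_spec.1
  · simp only [hfdef, dif_pos he1, dif_pos he2] at heq
    obtain ⟨-, w1, w1', he1', a1, ha1, b1, hb1, hf1⟩ := (hex e1 he1).choose_spec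
    obtain ⟨-, w2, w2', he2', a2, ha2, b2, hb2, hf2⟩ := (hex e2 he2).choose_spec
    rw [he1', he2']
    have hab : s(a1, b1) = s(a2, b2) := by rw [← hf1, ← hf2, heq]
    rw [Sym2.eq_iff] at hab
    rcases hab with ⟨h1, h2⟩ | ⟨h1, h2⟩
    · rw [branch_eq hdisj ha1 (h1 ▸ ha2), branch_eq hdisj hb1 (h2 ▸ hb2)]
    · rw [branch_eq hdisj ha1 (h1 ▸ hb2), branch_eq hdisj hb1 (h2 ▸ ha2), Sym2.eq_swap]

/-- there is a constant `C` such that for every `n ≥ 1` there exist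
`n` biconnected planar graphs, each on at most `C·n` vertices, that are pairwise
incomparable under the minor relation. -/
theorem stmt14 : ∃ C : ℕ, ∀ n : ℕ, 1 ≤ n →
    ∃ (m : Fin n → ℕ) (B : ∀ i, SimpleGraph (Fin (m i))),
      (∀ i, m i ≤ C * n) ∧
      (∀ i, IsBiconnected (B i)) ∧
      (∀ i, IsPlanar (B i)) ∧
      (∀ i j, i ≠ j → ¬ IsMinor (B i) (B j)) := by
  refine ⟨8, fun n hn => ⟨fun i => 4 * n + 4 + i.val,
    fun i => fanGraph (4 * n + 4 + i.val) (2 * n + 1 - 2 * i.val), ?_, ?_, ?_, ?_⟩⟩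
  · intro i; have := i.isLt; dsimp only; omega
  · intro i; have := i.isLt
    exact ⟨fan_connected (show 4 ≤ 4 * n + 4 + i.val by omega)
        (show 1 ≤ 2 * n + 1 - 2 * i.val by omega),
      fun x => fan_del_connected (show 4 ≤ 4 * n + 4 + i.val by omega)
        (show 1 ≤ 2 * n + 1 - 2 * i.val by omega) x⟩
  · intro i; have := i.isLt
    exact ⟨no_K5 (show 1 ≤ 4 * n + 4 + i.val by omega),
      no_K33 (show 1 ≤ 4 * n + 4 + i.val by omega)⟩
  · intro i j hij hm
    have hi := i.isLt
    have hj := j.isLt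
    have hij' : i.val ≠ j.val := fun h => hij (Fin.ext h)
    rcases Nat.lt_or_ge i.val j.val with hlt | hge
    · -- i < j : edge counts decrease, contradiction
      have : Nonempty (Fin (4 * n + 4 + j.val)) := ⟨⟨0, by omega⟩⟩
      have h1 := minor_edge_ncard_le hm
      dsimp only at h1
      have h2 := edge_ncard_ge (v := 4 * n + 4 + i.val) (s := 2 * n + 1 - 2 * i.val)
        (by omega) (by omega) (by omega)
      have h3 := edge_ncard_le (v := 4 * n + 4 + j.val) (s := 2 * n + 1 - 2 * j.val)
        (by omega) (by omega)
      omega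
    · -- i > j : vertex counts increase, contradiction
      have h1 := minor_card_le hm
      dsimp only at h1
      simp only [Fintype.card_fin] at h1
      omega
end
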